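/- arXiv:1808.09962 — 3 statements merged into one kernel-verified Lean document; each statement's English description precedes it below -/
import Mathlib

section
/- For k ≥ 3, let G = C^k_{2(k−1)}(H_1,...,H_{2(k−1)}) and let G* be obtained from G by moving all edges containing v_k in H_k from v_k to v_2. If Σ_{i=k+1}^{2(k−1)} |V(H_i)| ≥ |V(H_2)| and H_k has at least one edge, then σ(G*) > σ(G). -/
open Finset

/-- A (finite) hypergraph: a finite vertex set together with a finite family of edges,
each edge being a finite set of vertices. -/
structure HGraph (α : Type) where
  verts : Finset α
  edges : Finset (Finset α)

namespace HGraph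

variable {α β : Type}

/-- Every edge is a subset of the vertex set. -/
def Good (G : HGraph α) : Prop := ∀ e ∈ G.edges, e ⊆ G.verts

/-- `k`-uniform: every edge has cardinality `k`. -/
def Uniform (G : HGraph α) (k : ℕ) : Prop := ∀ e ∈ G.edges, e.card = k

/-- A walk of length `p` from `u` to `v`: an alternating sequence of vertices and edges,
with consecutive vertices distinct and both lying in the connecting edge. -/
inductive Walk (G : HGraph α) : α → α → ℕ → Prop
  | nil (v : α) : Walk G v v 0
  | cons {u w : α} (v : α) {p : ℕ} (e : Finset α) (he : e ∈ G.edges)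
      (hu : u ∈ e) (hv : v ∈ e) (hne : u ≠ v) (hw : Walk G v w p) :
      Walk G u w (p + 1)

def Connected (G : HGraph α) : Prop :=
  ∀ u ∈ G.verts, ∀ v ∈ G.verts, ∃ p, G.Walk u v p

/-- Distance: length of a shortest walk (equivalently, of a shortest path). -/
noncomputable def dist (G : HGraph α) (u v : α) : ℕ := sInf {p | G.Walk u v p}

/-- `σ_G(u) = ∑_{v ∈ V(G)} d_G(u,v)`. -/
noncomputable def transFrom [DecidableEq α] (G : HGraph α) (u : α) : ℕ :=
  ∑ v ∈ G.verts, G.dist u v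

/-- The transmission `σ(G)`: the sum of distances over all unordered pairs of
distinct vertices (distances being symmetric, this is half the sum over ordered pairs). -/
noncomputable def trans [DecidableEq α] (G : HGraph α) : ℕ :=
  (∑ u ∈ G.verts, ∑ v ∈ G.verts, G.dist u v) / 2

/-- `σ_G(A,B) = ∑_{a ∈ A, b ∈ B} d_G(a,b)`. -/
noncomputable def transBetween [DecidableEq α] (G : HGraph α) (A B : Finset α) : ℕ :=
  ∑ a ∈ A, ∑ b ∈ B, G.dist a b

/-- The diameter: the maximum distance between two vertices. -/
noncomputable def diam (G : HGraph α) : ℕ :=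
  G.verts.sup fun u => G.verts.sup fun v => G.dist u v

/-- The degree of a vertex: the number of edges containing it. -/
def degree [DecidableEq α] (G : HGraph α) (v : α) : ℕ :=
  (G.edges.filter fun e => v ∈ e).card

/-- A cycle of length `n+2` in `G`: vertices `v 0, …, v (n+1)` (all distinct) and
distinct edges `e 0, …, e (n+1)` of `G` with `v i, v (i+1) ∈ e i` (indices mod `n+2`). -/
structure Cycle (G : HGraph α) where
  n : ℕ
  v : Fin (n + 2) → α
  e : Fin (n + 2) → Finset α
  he : ∀ i, e i ∈ G.edges
  einj : Function.Injective e
  vinj : Function.Injective v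
  mem_fst : ∀ i, v i ∈ e i
  mem_snd : ∀ i, v (i + 1) ∈ e i

/-- The length of a cycle (its number of edges). -/
def Cycle.length {G : HGraph α} (C : G.Cycle) : ℕ := C.n + 2

/-- The set of edges of a cycle. -/
def Cycle.edgeFinset [DecidableEq α] {G : HGraph α} (C : G.Cycle) : Finset (Finset α) :=
  Finset.univ.image C.e

/-- Unicyclic: connected with exactly one cycle (all cycles have the same edge set). -/
def Unicyclic [DecidableEq α] (G : HGraph α) : Prop :=
  G.Connected ∧ Nonempty G.Cycle ∧ ∀ C C' : G.Cycle, C.edgeFinset = C'.edgeFinset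

/-- Isomorphism of hypergraphs. -/
def Isomorphic [DecidableEq β] (G : HGraph α) (H : HGraph β) : Prop :=
  ∃ f : α → β, Set.BijOn f ↑G.verts ↑H.verts ∧
    ∀ e : Finset α, e ⊆ G.verts → (e ∈ G.edges ↔ e.image f ∈ H.edges)

/-- Rename the vertices of a hypergraph along `f`. -/
def mapHG [DecidableEq β] (f : α → β) (G : HGraph α) : HGraph β :=
  ⟨G.verts.image f, G.edges.image (Finset.image f)⟩

def unionHG [DecidableEq α] (G H : HGraph α) : HGraph α :=
  ⟨G.verts ∪ H.verts, G.edges ∪ H.edges⟩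

def unionMany [DecidableEq α] {n : ℕ} (Hs : Fin n → HGraph α) : HGraph α :=
  ⟨Finset.univ.biUnion fun i => (Hs i).verts, Finset.univ.biUnion fun i => (Hs i).edges⟩

/-- Move the edge `e` from `u` to `x`: replace `e` by `(e \ {u}) ∪ {x}`. -/
def moveEdge [DecidableEq α] (G : HGraph α) (e : Finset α) (u x : α) : HGraph α :=
  ⟨G.verts, insert (insert x (e.erase u)) (G.edges.erase e)⟩

/-- Move each edge of `S` from `u` to `x`. -/
def moveEdges [DecidableEq α] (G : HGraph α) (S : Finset (Finset α)) (u x : α) :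
    HGraph α :=
  ⟨G.verts, (G.edges \ S) ∪ S.image fun e => insert x (e.erase u)⟩

/-- Delete a set of edges (keeping all vertices). -/
def deleteEdges [DecidableEq α] (G : HGraph α) (S : Finset (Finset α)) : HGraph α :=
  ⟨G.verts, G.edges \ S⟩

open Classical in
/-- The vertex set of the component of `G` containing `u`. -/
noncomputable def component (G : HGraph α) (u : α) : Finset α :=
  G.verts.filter fun x => ∃ p, G.Walk u x p

/-- The component of `G` containing `u`, as a hypergraph. -/
noncomputable def componentHG [DecidableEq α] (G : HGraph α) (u : α) : HGraph α :=
  ⟨G.component u, G.edges.filter fun e => e ⊆ G.component u⟩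

/-- The `k`-uniform loose cycle with `m` edges `e_0, …, e_{m-1}`,
consecutive edges sharing exactly one vertex. -/
def looseCycle (m k : ℕ) : HGraph ℕ where
  verts := Finset.range (m * (k - 1))
  edges := (Finset.range m).image fun i =>
    (Finset.range k).image fun j => (i * (k - 1) + j) % (m * (k - 1))

/-- `C^k_2(t,s)`: two `k`-edges sharing exactly the two vertices `0,1`, with a hyperstar of
`t` edges attached at `0` and a hyperstar of `s` edges attached at `1`. -/
def Ck2 (k t s : ℕ) : HGraph ℕ where
  verts := Finset.range ((t + s + 2) * (k - 1))
  edges :=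
    {Finset.range k, insert 0 (insert 1 (Finset.Ico k (2 * k - 2)))} ∪
    ((Finset.range t).image fun i =>
      insert 0 (Finset.Ico (2 * k - 2 + i * (k - 1)) (2 * k - 2 + (i + 1) * (k - 1)))) ∪
    ((Finset.range s).image fun j =>
      insert 1 (Finset.Ico (2 * k - 2 + t * (k - 1) + j * (k - 1))
        (2 * k - 2 + t * (k - 1) + (j + 1) * (k - 1))))

/-- `C̃^k_2(p,q)`: the loose 2-cycle on the two `k`-edges `{0,…,k-1}` and
`{0,1} ∪ {k,…,2k-3}` (sharing exactly `0,1`), with a pendant path of length `p`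
attached at the degree-one vertex `2` of the first edge and a pendant path of length `q`
attached at the degree-one vertex `k` of the second edge. -/
def Ctilde (k p q : ℕ) : HGraph ℕ where
  verts := Finset.range ((p + q + 2) * (k - 1))
  edges :=
    {Finset.range k, insert 0 (insert 1 (Finset.Ico k (2 * k - 2)))} ∪
    ((Finset.range p).image fun i =>
      insert (if i = 0 then 2 else 2 * k - 2 + i * (k - 1) - 1)
        (Finset.Ico (2 * k - 2 + i * (k - 1)) (2 * k - 2 + (i + 1) * (k - 1)))) ∪
    ((Finset.range q).image fun j =>
      insert (if j = 0 then k else 2 * k - 2 + p * (k - 1) + j * (k - 1) - 1)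
        (Finset.Ico (2 * k - 2 + p * (k - 1) + j * (k - 1))
          (2 * k - 2 + p * (k - 1) + (j + 1) * (k - 1))))

/-- The triangle with one pendant edge, `C^2_3(1,0,0)`. -/
def triPendant : HGraph ℕ :=
  ⟨Finset.range 4, {{0, 1}, {1, 2}, {0, 2}, {0, 3}}⟩

/-- `G_{u,v}(p,q)`: attach a loose pendant path of `p` `k`-edges at `u` and a loose pendant
path of `q` `k`-edges at `v`, using fresh vertices (the `Sum.inr` side). -/
def attachTwoPathsAt [DecidableEq α] (k : ℕ) (G : HGraph α) (u v : α) (p q : ℕ) :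
    HGraph (α ⊕ ℕ) where
  verts := G.verts.image Sum.inl ∪ (Finset.range ((p + q) * (k - 1))).image Sum.inr
  edges :=
    G.edges.image (Finset.image Sum.inl) ∪
    ((Finset.range p).image fun i =>
      insert (if i = 0 then Sum.inl u else Sum.inr (i * (k - 1) - 1))
        ((Finset.Ico (i * (k - 1)) ((i + 1) * (k - 1))).image Sum.inr)) ∪
    ((Finset.range q).image fun j =>
      insert (if j = 0 then Sum.inl v else Sum.inr (p * (k - 1) + j * (k - 1) - 1))
        ((Finset.Ico (p * (k - 1) + j * (k - 1)) (p * (k - 1) + (j + 1) * (k - 1))).image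
          Sum.inr))

/-- `G_u(p,q)`: attach two loose pendant paths, of lengths `p` and `q`, at `u`. -/
def attachTwoPaths [DecidableEq α] (k : ℕ) (G : HGraph α) (u : α) (p q : ℕ) :
    HGraph (α ⊕ ℕ) :=
  attachTwoPathsAt k G u u p q

/-- `G_{e,s}(H_1,…,H_{k-1})`: given a pendant edge `e = {w 0, …, w (k-1)}` of `G` at
`w (k-1)`, identify the root `vr i` of `H i` with `w (k-1)` for (0-based) `i < s`, and with
`w i` for `i ≥ s`. -/
def Ges [DecidableEq α] (G : HGraph α) (k : ℕ) (hk : 2 ≤ k) (w : Fin k → α)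
    (H : Fin (k - 1) → HGraph α) (vr : Fin (k - 1) → α) (s : ℕ) : HGraph α :=
  unionHG G (unionMany fun i : Fin (k - 1) =>
    mapHG (Function.update id (vr i)
      (if (i : ℕ) < s then w ⟨k - 1, by omega⟩ else w (Fin.castLE (Nat.sub_le k 1) i))) (H i))

end HGraph

open HGraph


set_option linter.unusedSectionVars false

namespace HGraph
variable {α : Type}

section Lib
variable [DecidableEq α]

theorem Walk.append {G : HGraph α} {a b c : α} {p q : ℕ}
    (h1 : G.Walk a b p) (h2 : G.Walk b c q) : G.Walk a c (p + q) := by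
  revert h2
  induction h1 with
  | nil v => intro h2; simpa using h2
  | @cons u w v p e he hu hv hne hw ih =>
      intro h2
      have h := Walk.cons v e he hu hv hne (ih h2)
      rw [Nat.add_right_comm]
      exact h

theorem Walk.reverse {G : HGraph α} {a b : α} {p : ℕ} (h : G.Walk a b p) :
    G.Walk b a p := by
  induction h with
  | nil v => exact Walk.nil v
  | @cons u w v p e he hu hv hne hw ih =>
      have single : G.Walk v u 1 := Walk.cons u e he hv hu hne.symm (Walk.nil u)
      exact ih.append single

theorem dist_le {G : HGraph α} {a b : α} {p : ℕ} (h : G.Walk a b p) : G.dist a b ≤ p :=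
  Nat.sInf_le h

theorem walk_dist {G : HGraph α} {a b : α} (h : ∃ p, G.Walk a b p) :
    G.Walk a b (G.dist a b) := Nat.sInf_mem h

theorem dist_comm (G : HGraph α) (a b : α) : G.dist a b = G.dist b a := by
  unfold dist
  congr 1
  ext p
  exact ⟨fun h => h.reverse, fun h => h.reverse⟩

theorem dist_self (G : HGraph α) (a : α) : G.dist a a = 0 :=
  Nat.le_zero.mp (dist_le (Walk.nil a))

theorem dist_triangle {G : HGraph α} {a b c : α} (h1 : ∃ p, G.Walk a b p)
    (h2 : ∃ p, G.Walk b c p) : G.dist a c ≤ G.dist a b + G.dist b c :=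
  dist_le ((walk_dist h1).append (walk_dist h2))

theorem eq_of_walk_zero {G : HGraph α} {a b : α} (h : G.Walk a b 0) : a = b := by
  cases h; rfl

theorem dist_pos {G : HGraph α} {a b : α} (h : ∃ p, G.Walk a b p) (hne : a ≠ b) :
    1 ≤ G.dist a b := by
  rcases Nat.eq_zero_or_pos (G.dist a b) with h0 | h1
  · exact absurd (eq_of_walk_zero (h0 ▸ walk_dist h)) hne
  · exact h1


theorem walk_one {G : HGraph α} {a b : α} (h : G.Walk a b 1) :
    ∃ e ∈ G.edges, a ∈ e ∧ b ∈ e ∧ a ≠ b := by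
  cases h with
  | cons v e he hu hv hne hw =>
      cases hw
      exact ⟨e, he, hu, hv, hne⟩

theorem collapse {G G' : HGraph α} (π : α → α)
    (hcol : ∀ e ∈ G.edges, (∃ e' ∈ G'.edges, ∀ w ∈ e, π w ∈ e') ∨
      (∀ w ∈ e, ∀ w' ∈ e, π w = π w')) :
    ∀ {a b p}, G.Walk a b p → ∃ q ≤ p, G'.Walk (π a) (π b) q := by
  intro a b p h
  induction h with
  | nil v => exact ⟨0, le_rfl, Walk.nil _⟩
  | @cons u w v p e he hu hv hne hw ih =>
      obtain ⟨q, hq, hw'⟩ := ih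
      by_cases hpi : π u = π v
      · exact ⟨q, by omega, hpi ▸ hw'⟩
      · rcases hcol e he with ⟨e', he', hmem⟩ | hconst
        · exact ⟨q+1, by omega, Walk.cons _ e' he' (hmem u hu) (hmem v hv) hpi hw'⟩
        · exact absurd (hconst u hu v hv) hpi

theorem dist_collapse {G G' : HGraph α} {π : α → α}
    (hcol : ∀ e ∈ G.edges, (∃ e' ∈ G'.edges, ∀ w ∈ e, π w ∈ e') ∨
      (∀ w ∈ e, ∀ w' ∈ e, π w = π w'))
    {a b : α} (h : ∃ p, G.Walk a b p) : G'.dist (π a) (π b) ≤ G.dist a b := by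
  obtain ⟨q, hq, hw⟩ := collapse π hcol (walk_dist h)
  exact le_trans (dist_le hw) hq

theorem walk_mono {G G' : HGraph α} (hsub : ∀ e ∈ G.edges, e ∈ G'.edges) :
    ∀ {a b p}, G.Walk a b p → G'.Walk a b p := by
  intro a b p h
  induction h with
  | nil v => exact Walk.nil v
  | @cons u w v p e he hu hv hne hw ih => exact Walk.cons v e (hsub e he) hu hv hne ih


def PathIn (G : HGraph α) (a b : α) (q : ℕ) : Prop :=
  ∃ (w : ℕ → α) (f : ℕ → Finset α),
    w 0 = a ∧ w q = b ∧
    (∀ t, t < q → f t ∈ G.edges ∧ w t ∈ f t ∧ w (t+1) ∈ f t) ∧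
    (∀ s t, s ≤ q → t ≤ q → w s = w t → s = t) ∧
    (∀ s t, s < q → t < q → f s = f t → s = t)

theorem exists_path {G : HGraph α} {a b : α} {p : ℕ} (h : G.Walk a b p) (hab : a ≠ b) :
    ∃ q, 1 ≤ q ∧ q ≤ p ∧ G.PathIn a b q := by
  induction h with
  | nil v => exact absurd rfl hab
  | @cons u w v p e he hu hv hne hw ih =>
      by_cases hvb : v = w
      · subst hvb
        refine ⟨1, le_rfl, by omega, fun t => if t = 0 then u else v, fun _ => e,
          by simp, by simp, ?_, ?_, ?_⟩
        · intro t ht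
          have h0 : t = 0 := by omega
          subst h0
          simpa using ⟨he, hu, hv⟩
        · intro s t hs ht hw'
          dsimp only at hw'
          interval_cases s <;> interval_cases t <;> simp_all
        · intro s t hs ht _
          omega
      · obtain ⟨q, hq1, hqp, wf, ff, hw0, hwq, hadj, hwinj, hfinj⟩ := ih hvb
        by_cases hu_on : ∃ t ≤ q, wf t = u
        · -- u already occurs on the path: take the suffix starting at u
          obtain ⟨t, htq, hwt⟩ := hu_on
          have htne : t ≠ q := by
            intro h'
            exact hab (by rw [← hwt, h', hwq])
          have htlt : t < q := lt_of_le_of_ne htq htne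
          refine ⟨q - t, by omega, by omega, fun s => wf (s + t), fun s => ff (s + t),
            by simpa using hwt, ?_, ?_, ?_, ?_⟩
          · show wf (q - t + t) = w
            rw [(by omega : q - t + t = q)]; exact hwq
          · intro s hs
            have h1 := hadj (s + t) (by omega)
            refine ⟨h1.1, h1.2.1, ?_⟩
            show wf (s + 1 + t) ∈ ff (s + t)
            rw [(by omega : s + 1 + t = s + t + 1)]; exact h1.2.2
          · intro s s' hs hs' heq
            have := hwinj (s + t) (s' + t) (by omega) (by omega) heq
            omega
          · intro s s' hs hs' heq
            have := hfinj (s + t) (s' + t) (by omega) (by omega) heq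
            omega
        · push_neg at hu_on
          by_cases he_on : ∃ t < q, ff t = e
          · -- the edge e occurs on the path: rejoin there
            obtain ⟨t, htq, hft⟩ := he_on
            refine ⟨q - t, by omega, by omega,
              fun s => if s = 0 then u else wf (s + t), fun s => ff (s + t),
              by simp, ?_, ?_, ?_, ?_⟩
            · show (if q - t = 0 then u else wf (q - t + t)) = w
              rw [if_neg (by omega : ¬(q - t = 0)), (by omega : q - t + t = q)]
              exact hwq
            · intro s hs
              rcases s with _ | s
              · have h1 := hadj t htq
                refine ⟨?_, ?_, ?_⟩
                · show ff (0 + t) ∈ G.edges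
                  rw [Nat.zero_add]; exact h1.1
                · show (if (0:ℕ) = 0 then u else wf (0 + t)) ∈ ff (0 + t)
                  rw [if_pos rfl, Nat.zero_add, hft]; exact hu
                · show (if (0:ℕ)+1 = 0 then u else wf (0 + 1 + t)) ∈ ff (0 + t)
                  rw [if_neg (by omega : ¬((0:ℕ)+1 = 0)), Nat.zero_add,
                    (by omega : 0 + 1 + t = t + 1)]
                  exact h1.2.2
              · have h1 := hadj (s + 1 + t) (by omega)
                refine ⟨h1.1, ?_, ?_⟩
                · show (if s+1 = 0 then u else wf (s + 1 + t)) ∈ ff (s + 1 + t)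
                  rw [if_neg (by omega : ¬(s+1 = 0))]; exact h1.2.1
                · show (if s+1+1 = 0 then u else wf (s + 1 + 1 + t)) ∈ ff (s + 1 + t)
                  rw [if_neg (by omega : ¬(s+1+1 = 0)), (by omega : s+1+1+t = s+1+t+1)]
                  exact h1.2.2
            · intro s s' hs hs' heq
              dsimp only at heq
              rcases s with _ | s <;> rcases s' with _ | s'
              · rfl
              · rw [if_pos rfl, if_neg (by omega : ¬(s'+1 = 0))] at heq
                exact absurd heq.symm (hu_on (s' + 1 + t) (by omega))
              · rw [if_pos rfl, if_neg (by omega : ¬(s+1 = 0))] at heq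
                exact absurd heq (hu_on (s + 1 + t) (by omega))
              · rw [if_neg (by omega : ¬(s+1 = 0)), if_neg (by omega : ¬(s'+1 = 0))] at heq
                have := hwinj (s + 1 + t) (s' + 1 + t) (by omega) (by omega) heq
                omega
            · intro s s' hs hs' heq
              dsimp only at heq
              have := hfinj (s + t) (s' + t) (by omega) (by omega) heq
              omega
          · -- genuinely new vertex and edge: prepend
            push_neg at he_on
            refine ⟨q + 1, by omega, by omega,
              fun s => if s = 0 then u else wf (s - 1),
              fun s => if s = 0 then e else ff (s - 1),
              by simp, by simp [hwq], ?_, ?_, ?_⟩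
            · intro s hs
              rcases s with _ | s
              · refine ⟨by simpa using he, by simpa using hu, ?_⟩
                show (if (0:ℕ)+1 = 0 then u else wf (0 + 1 - 1)) ∈ (if (0:ℕ) = 0 then e else ff (0 - 1))
                rw [if_neg (by omega : ¬((0:ℕ)+1 = 0)), if_pos rfl]
                simpa [hw0] using hv
              · have h1 := hadj s (by omega)
                refine ⟨?_, ?_, ?_⟩
                · show (if s+1 = 0 then e else ff (s + 1 - 1)) ∈ G.edges
                  rw [if_neg (by omega : ¬(s+1 = 0)), (by omega : s + 1 - 1 = s)]
                  exact h1.1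
                · show (if s+1 = 0 then u else wf (s+1-1)) ∈ (if s+1 = 0 then e else ff (s+1-1))
                  rw [if_neg (by omega : ¬(s+1 = 0)), if_neg (by omega : ¬(s+1 = 0)),
                    (by omega : s + 1 - 1 = s)]
                  exact h1.2.1
                · show (if s+1+1 = 0 then u else wf (s+1+1-1)) ∈ (if s+1 = 0 then e else ff (s+1-1))
                  rw [if_neg (by omega : ¬(s+1+1 = 0)), if_neg (by omega : ¬(s+1 = 0)),
                    (by omega : s + 1 + 1 - 1 = s + 1), (by omega : s + 1 - 1 = s)]
                  exact h1.2.2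
            · intro s s' hs hs' heq
              dsimp only at heq
              rcases s with _ | s <;> rcases s' with _ | s'
              · rfl
              · rw [if_pos rfl, if_neg (by omega : ¬(s'+1 = 0))] at heq
                exact absurd heq.symm (hu_on (s' + 1 - 1) (by omega))
              · rw [if_pos rfl, if_neg (by omega : ¬(s+1 = 0))] at heq
                exact absurd heq (hu_on (s + 1 - 1) (by omega))
              · rw [if_neg (by omega : ¬(s+1 = 0)), if_neg (by omega : ¬(s'+1 = 0))] at heq
                have := hwinj (s + 1 - 1) (s' + 1 - 1) (by omega) (by omega) heq
                omega
            · intro s s' hs hs' heq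
              dsimp only at heq
              rcases s with _ | s <;> rcases s' with _ | s'
              · rfl
              · rw [if_pos rfl, if_neg (by omega : ¬(s'+1 = 0))] at heq
                exact absurd heq.symm (he_on (s' + 1 - 1) (by omega))
              · rw [if_pos rfl, if_neg (by omega : ¬(s+1 = 0))] at heq
                exact absurd heq (he_on (s + 1 - 1) (by omega))
              · rw [if_neg (by omega : ¬(s+1 = 0)), if_neg (by omega : ¬(s'+1 = 0))] at heq
                have := hfinj (s + 1 - 1) (s' + 1 - 1) (by omega) (by omega) heq
                omega


theorem PathIn.reverse {G : HGraph α} {a b : α} {q : ℕ} (h : G.PathIn a b q) :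
    G.PathIn b a q := by
  obtain ⟨w, f, hw0, hwq, hadj, hwinj, hfinj⟩ := h
  refine ⟨fun s => w (q - s), fun s => f (q - 1 - s), by simpa using hwq, by simpa using hw0,
    ?_, ?_, ?_⟩
  · intro t ht
    have h1 := hadj (q - 1 - t) (by omega)
    refine ⟨h1.1, ?_, ?_⟩
    · show w (q - t) ∈ f (q - 1 - t)
      rw [(by omega : q - t = q - 1 - t + 1)]
      exact h1.2.2
    · show w (q - (t + 1)) ∈ f (q - 1 - t)
      rw [(by omega : q - (t + 1) = q - 1 - t)]
      exact h1.2.1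
  · intro s t hs ht heq
    have := hwinj (q - s) (q - t) (by omega) (by omega) heq
    omega
  · intro s t hs ht heq
    have := hfinj (q - 1 - s) (q - 1 - t) (by omega) (by omega) heq
    omega

theorem no_closing_edge [DecidableEq α] {G : HGraph α} {e1 e2 g : Finset α}
    (hg : g ∈ G.edges)
    (hcyc : ∀ C : G.Cycle, C.edgeFinset = {e1, e2})
    {q : ℕ} (hq : 1 ≤ q) (w : ℕ → α) (f : ℕ → Finset α)
    (hadj : ∀ t, t < q → f t ∈ G.edges ∧ f t ≠ e1 ∧ f t ≠ e2 ∧ w t ∈ f t ∧ w (t+1) ∈ f t)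
    (hwinj : ∀ s t, s ≤ q → t ≤ q → w s = w t → s = t)
    (hfinj : ∀ s t, s < q → t < q → f s = f t → s = t)
    (hg12 : g = e1 ∨ g = e2)
    (h0 : w 0 ∈ g) (hq' : w q ∈ g) : False := by
  have hfg : ∀ t, t < q → f t ≠ g := by
    intro t ht hfeq
    rcases hg12 with h | h
    · subst h; exact (hadj t ht).2.1 hfeq
    · subst h; exact (hadj t ht).2.2.1 hfeq
  let C : G.Cycle :=
    { n := q - 1
      v := fun t => w t.val
      e := fun t => if (t : ℕ) = q then g else f t.val
      he := by
        intro t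
        by_cases h : (t : ℕ) = q
        · simpa [h] using hg
        · have ht : (t : ℕ) < q := by have := t.isLt; omega
          simpa [h] using (hadj _ ht).1
      einj := by
        intro i j hij
        dsimp only at hij
        by_cases h1 : (i : ℕ) = q <;> by_cases h2 : (j : ℕ) = q
        · exact Fin.ext (by omega)
        · rw [if_pos h1, if_neg h2] at hij
          exact absurd hij.symm (hfg _ (by have := j.isLt; omega))
        · rw [if_neg h1, if_pos h2] at hij
          exact absurd hij (hfg _ (by have := i.isLt; omega))
        · rw [if_neg h1, if_neg h2] at hij
          exact Fin.ext (hfinj _ _ (by have := i.isLt; omega) (by have := j.isLt; omega) hij)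
      vinj := by
        intro i j hij
        exact Fin.ext (hwinj _ _ (by have := i.isLt; omega) (by have := j.isLt; omega) hij)
      mem_fst := by
        intro t
        by_cases h : (t : ℕ) = q
        · rw [if_pos h, h]
          exact hq'
        · rw [if_neg h]
          exact (hadj _ (by have := t.isLt; omega)).2.2.2.1
      mem_snd := by
        intro t
        have hval := Fin.val_add_one (n := q - 1 + 1) t
        by_cases hlast : t = Fin.last (q - 1 + 1)
        · rw [if_pos (by rw [hlast]; simp [Fin.last]; omega)]
          rw [hval, if_pos hlast]
          exact h0
        · rw [hval, if_neg hlast]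
          have htq : (t : ℕ) ≠ q := by
            intro h
            exact hlast (Fin.ext (by simp [Fin.last]; omega))
          rw [if_neg htq]
          exact (hadj _ (by have := t.isLt; omega)).2.2.2.2 }
  have hmem : f 0 ∈ C.edgeFinset := by
    refine Finset.mem_image.mpr ⟨⟨0, by omega⟩, Finset.mem_univ _, ?_⟩
    show (if (((⟨0, by omega⟩ : Fin (q - 1 + 2))) : ℕ) = q then g else f _) = f 0
    rw [if_neg (by simp; omega)]
  rw [hcyc C] at hmem
  rcases Finset.mem_insert.mp hmem with h | h
  · exact (hadj 0 hq).2.1 h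
  · exact (hadj 0 hq).2.2.1 (Finset.mem_singleton.mp h)

theorem no_closing_two [DecidableEq α] {G : HGraph α} {e1 e2 : Finset α} {uu : α}
    (hm1 : e1 ∈ G.edges) (hm2 : e2 ∈ G.edges) (hne : e1 ≠ e2)
    (hcyc : ∀ C : G.Cycle, C.edgeFinset = {e1, e2})
    {q : ℕ} (hq : 1 ≤ q) (w : ℕ → α) (f : ℕ → Finset α)
    (hadj : ∀ t, t < q → f t ∈ G.edges ∧ f t ≠ e1 ∧ f t ≠ e2 ∧ w t ∈ f t ∧ w (t+1) ∈ f t)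
    (hwinj : ∀ s t, s ≤ q → t ≤ q → w s = w t → s = t)
    (hfinj : ∀ s t, s < q → t < q → f s = f t → s = t)
    (hu_not : ∀ t, t ≤ q → w t ≠ uu)
    (ha : w 0 ∈ e1) (huu1 : uu ∈ e1) (hb : w q ∈ e2) (huu2 : uu ∈ e2) : False := by
  let C : G.Cycle :=
    { n := q
      v := fun t => if (t : ℕ) ≤ q then w t.val else uu
      e := fun t => if (t : ℕ) < q then f t.val else if (t : ℕ) = q then e2 else e1
      he := by
        intro t
        by_cases h1 : (t : ℕ) < q
        · rw [if_pos h1]; exact (hadj _ h1).1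
        · rw [if_neg h1]
          by_cases h2 : (t : ℕ) = q
          · rw [if_pos h2]; exact hm2
          · rw [if_neg h2]; exact hm1
      einj := by
        intro i j hij
        dsimp only at hij
        by_cases h1 : (i : ℕ) < q <;> by_cases h2 : (j : ℕ) < q
        · rw [if_pos h1, if_pos h2] at hij
          exact Fin.ext (hfinj _ _ h1 h2 hij)
        · rw [if_pos h1, if_neg h2] at hij
          by_cases h3 : (j : ℕ) = q
          · rw [if_pos h3] at hij; exact absurd hij (hadj _ h1).2.2.1
          · rw [if_neg h3] at hij; exact absurd hij (hadj _ h1).2.1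
        · rw [if_neg h1, if_pos h2] at hij
          by_cases h3 : (i : ℕ) = q
          · rw [if_pos h3] at hij; exact absurd hij.symm (hadj _ h2).2.2.1
          · rw [if_neg h3] at hij; exact absurd hij.symm (hadj _ h2).2.1
        · by_cases h3 : (i : ℕ) = q <;> by_cases h4 : (j : ℕ) = q
          · exact Fin.ext (by omega)
          · rw [if_neg h1, if_neg h2, if_pos h3, if_neg h4] at hij
            exact absurd hij.symm hne
          · rw [if_neg h1, if_neg h2, if_neg h3, if_pos h4] at hij
            exact absurd hij hne
          · have hi := i.isLt; have hj := j.isLt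
            exact Fin.ext (by omega)
      vinj := by
        intro i j hij
        dsimp only at hij
        by_cases h1 : (i : ℕ) ≤ q <;> by_cases h2 : (j : ℕ) ≤ q
        · rw [if_pos h1, if_pos h2] at hij
          exact Fin.ext (hwinj _ _ h1 h2 hij)
        · rw [if_pos h1, if_neg h2] at hij
          exact absurd hij (hu_not _ h1)
        · rw [if_neg h1, if_pos h2] at hij
          exact absurd hij.symm (hu_not _ h2)
        · have hi := i.isLt; have hj := j.isLt
          exact Fin.ext (by omega)
      mem_fst := by
        intro t
        by_cases h1 : (t : ℕ) < q
        · rw [if_pos (by omega : (t : ℕ) ≤ q), if_pos h1]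
          exact (hadj _ h1).2.2.2.1
        · by_cases h2 : (t : ℕ) = q
          · rw [if_pos (by omega : (t : ℕ) ≤ q), if_neg h1, if_pos h2, h2]
            exact hb
          · rw [if_neg (by omega : ¬((t : ℕ) ≤ q)), if_neg h1, if_neg h2]
            exact huu1
      mem_snd := by
        intro t
        have hval := Fin.val_add_one (n := q + 1) t
        by_cases hlast : t = Fin.last (q + 1)
        · have htv : (t : ℕ) = q + 1 := by rw [hlast]; rfl
          rw [if_neg (by omega), if_neg (by omega), hval, if_pos hlast]
          rw [if_pos (Nat.zero_le q)]
          exact ha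
        · rw [hval, if_neg hlast]
          have htv : (t : ℕ) ≠ q + 1 := by
            intro h
            exact hlast (Fin.ext (by simp [Fin.last]; omega))
          by_cases h1 : (t : ℕ) < q
          · rw [if_pos h1, if_pos (by omega : (t : ℕ) + 1 ≤ q)]
            exact (hadj _ h1).2.2.2.2
          · have h2 : (t : ℕ) = q := by have := t.isLt; omega
            rw [if_neg h1, if_pos h2, if_neg (by omega : ¬((t : ℕ) + 1 ≤ q))]
            exact huu2 }
  have hmem : f 0 ∈ C.edgeFinset := by
    refine Finset.mem_image.mpr ⟨⟨0, by omega⟩, Finset.mem_univ _, ?_⟩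
    show (if (((⟨0, by omega⟩ : Fin (q + 2))) : ℕ) < q then f _ else _) = f 0
    rw [if_pos (by show (0:ℕ) < q; omega)]
  rw [hcyc C] at hmem
  rcases Finset.mem_insert.mp hmem with h | h
  · exact (hadj 0 hq).2.1 h
  · exact (hadj 0 hq).2.2.1 (Finset.mem_singleton.mp h)


theorem mem_component {G : HGraph α} {z a : α} :
    a ∈ G.component z ↔ a ∈ G.verts ∧ ∃ p, G.Walk z a p := by
  simp [component]

theorem component_closure {G : HGraph α} (hgood : G.Good) {z : α} {e : Finset α} {a : α}
    (he : e ∈ G.edges) (ha : a ∈ e) (hc : a ∈ G.component z) : e ⊆ G.component z := by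
  intro y hy
  obtain ⟨hav, p, hp⟩ := mem_component.mp hc
  refine mem_component.mpr ⟨hgood e he hy, ?_⟩
  by_cases hay : a = y
  · exact ⟨p, hay ▸ hp⟩
  · exact ⟨p + 1, hp.append (Walk.cons y e he ha hy hay (Walk.nil y))⟩

theorem comp_walk [DecidableEq α] {G : HGraph α} (hgood : G.Good) {z a b : α} {p : ℕ}
    (ha : a ∈ G.component z) (h : G.Walk a b p) : (G.componentHG z).Walk a b p := by
  induction h with
  | nil v => exact Walk.nil v
  | @cons u w vv p e he hu hv hne hw ih =>
      have hsub : e ⊆ G.component z := component_closure hgood he hu ha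
      have he' : e ∈ (G.componentHG z).edges := Finset.mem_filter.mpr ⟨he, hsub⟩
      exact Walk.cons vv e he' hu hv hne (ih (hsub hv))

theorem mem_componentHG_edges [DecidableEq α] {G : HGraph α} {z : α} {e : Finset α} :
    e ∈ (G.componentHG z).edges ↔ e ∈ G.edges ∧ e ⊆ G.component z := by
  simp [componentHG]




variable {Γ K : HGraph α} {C : Finset α} {c : α}

theorem cut_collapse_cond
    (hK : ∀ e, e ∈ K.edges ↔ e ∈ Γ.edges ∧ e ⊆ C)
    (hsep : ∀ e ∈ Γ.edges, e ⊆ C ∨ ∀ w ∈ e, w ∈ C → w = c) :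
    ∀ e ∈ Γ.edges, (∃ e' ∈ K.edges, ∀ w ∈ e, (if w ∈ C then w else c) ∈ e') ∨
      (∀ w ∈ e, ∀ w' ∈ e, (if w ∈ C then w else c) = (if w' ∈ C then w' else c)) := by
  intro e he
  rcases hsep e he with hsub | hpt
  · left
    refine ⟨e, (hK e).mpr ⟨he, hsub⟩, fun w hw => ?_⟩
    rw [if_pos (hsub hw)]
    exact hw
  · right
    intro w hw w' hw'
    have h1 : (if w ∈ C then w else c) = c := by
      by_cases h : w ∈ C
      · rw [if_pos h]; exact hpt w hw h
      · rw [if_neg h]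
    have h2 : (if w' ∈ C then w' else c) = c := by
      by_cases h : w' ∈ C
      · rw [if_pos h]; exact hpt w' hw' h
      · rw [if_neg h]
    rw [h1, h2]

theorem cut_dist_eq
    (hK : ∀ e, e ∈ K.edges ↔ e ∈ Γ.edges ∧ e ⊆ C)
    (hsep : ∀ e ∈ Γ.edges, e ⊆ C ∨ ∀ w ∈ e, w ∈ C → w = c)
    {a b : α} (ha : a ∈ C) (hb : b ∈ C) : Γ.dist a b = K.dist a b := by
  have hsub : ∀ e ∈ K.edges, e ∈ Γ.edges := fun e he => ((hK e).mp he).1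
  by_cases hW : ∃ p, Γ.Walk a b p
  · refine le_antisymm ?_ ?_
    · have hKW : ∃ p, K.Walk a b p := by
        obtain ⟨q, _, hq⟩ := collapse _ (cut_collapse_cond hK hsep) (walk_dist hW)
        rw [if_pos ha, if_pos hb] at hq
        exact ⟨q, hq⟩
      exact dist_le (walk_mono hsub (walk_dist hKW))
    · have := dist_collapse (cut_collapse_cond hK hsep) hW
      rwa [if_pos ha, if_pos hb] at this
  · have h1 : {p | Γ.Walk a b p} = ∅ := by
      ext p; simp only [Set.mem_setOf_eq, Set.mem_empty_iff_false, iff_false]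
      exact fun h => hW ⟨p, h⟩
    have h2 : {p | K.Walk a b p} = ∅ := by
      ext p; simp only [Set.mem_setOf_eq, Set.mem_empty_iff_false, iff_false]
      exact fun h => hW ⟨p, walk_mono hsub h⟩
    unfold dist
    rw [h1, h2]

theorem cut_decomp
    (hK : ∀ e, e ∈ K.edges ↔ e ∈ Γ.edges ∧ e ⊆ C)
    (hsep : ∀ e ∈ Γ.edges, e ⊆ C ∨ ∀ w ∈ e, w ∈ C → w = c)
    (hc : c ∈ C) {a b : α} {p : ℕ} (ha : a ∉ C) (hb : b ∈ C) (hw : Γ.Walk a b p) :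
    ∃ s t, s + t ≤ p ∧ Γ.Walk a c s ∧ K.Walk c b t := by
  revert ha hb
  induction hw with
  | nil v =>
      intro ha hb
      exact absurd hb ha
  | @cons u w vv p e he hu hv hne hw ih =>
      intro ha hb
      by_cases hvC : vv ∈ C
      · have hvc : vv = c := by
          rcases hsep e he with hsub | hpt
          · exact absurd (hsub hu) ha
          · exact hpt vv hv hvC
        subst hvc
        obtain ⟨t, htp, hKw⟩ := collapse _ (cut_collapse_cond hK hsep) hw
        rw [if_pos hvC, if_pos hb] at hKw
        exact ⟨1, t, by omega, Walk.cons vv e he hu hv hne (Walk.nil vv), hKw⟩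
      · obtain ⟨s, t, hst, h1, h2⟩ := ih hvC hb
        exact ⟨s + 1, t, by omega, Walk.cons vv e he hu hv hne h1, h2⟩

theorem cut_dist_split
    (hK : ∀ e, e ∈ K.edges ↔ e ∈ Γ.edges ∧ e ⊆ C)
    (hsep : ∀ e ∈ Γ.edges, e ⊆ C ∨ ∀ w ∈ e, w ∈ C → w = c)
    (hc : c ∈ C) {a b : α} (ha : a ∉ C) (hb : b ∈ C) (hW : ∃ p, Γ.Walk a b p) :
    Γ.dist a b = Γ.dist a c + K.dist c b := by
  have hsub : ∀ e ∈ K.edges, e ∈ Γ.edges := fun e he => ((hK e).mp he).1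
  obtain ⟨s, t, hst, h1, h2⟩ := cut_decomp hK hsep hc ha hb (walk_dist hW)
  refine le_antisymm ?_ ?_
  · exact dist_le ((walk_dist ⟨s, h1⟩).append (walk_mono hsub (walk_dist ⟨t, h2⟩)))
  · calc Γ.dist a c + K.dist c b ≤ s + t := Nat.add_le_add (dist_le h1) (dist_le h2)
    _ ≤ Γ.dist a b := hst


end Lib
end HGraph

/-- Lemma `cycle-max-moving2`: For `k ≥ 3`, let `G` be a `k`-uniform
unicyclic hypergraph whose unique cycle has edges `e₁ = {v 0, …, v (k-1)}` and
`e₂ = {v (k-1), …, v (2k-3), v 0}` (0-based labels; paper: `v_1,…,v_{2k-1}` with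
`v_{2k-1} = v_1`). Let `H i` be the component of `G - {e₁,e₂}` containing `v i`. If
`Σ_{i=k}^{2k-3} |V(H i)| ≥ |V(H 1)|` (paper: `Σ_{i=k+1}^{2(k-1)} |V(H_i)| ≥ |V(H_2)|`)
and `H (k-1)` (paper `H_k`) has at least one edge, then moving all edges of `H (k-1)`
containing `v (k-1)` from `v (k-1)` to `v 1` strictly increases the transmission. -/
theorem stmt9 {α : Type} [DecidableEq α] (k : ℕ) (hk : 3 ≤ k) (G : HGraph α)
    (hgood : G.Good) (hunif : G.Uniform k) (huni : G.Unicyclic)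
    (v : ℕ → α) (hvinj : Set.InjOn v (Set.Iio (2 * (k - 1))))
    (e1 e2 : Finset α)
    (he1 : e1 = (Finset.range k).image v)
    (he2 : e2 = insert (v 0) ((Finset.Ico (k - 1) (2 * k - 2)).image v))
    (hm1 : e1 ∈ G.edges) (hm2 : e2 ∈ G.edges) (hne : e1 ≠ e2)
    (hcyc : ∀ C : G.Cycle, C.edgeFinset = {e1, e2})
    (H : ℕ → HGraph α)
    (hH : ∀ i, H i = (G.deleteEdges {e1, e2}).componentHG (v i))
    (hsum : (H 1).verts.card ≤ ∑ i ∈ Finset.Ico k (2 * k - 2), (H i).verts.card)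
    (hedge : (H (k - 1)).edges.Nonempty) :
    (G.moveEdges ((H (k - 1)).edges.filter fun f => v (k - 1) ∈ f)
        (v (k - 1)) (v 1)).trans > G.trans := by
  have hconn : G.Connected := huni.1
  have hvinj' : ∀ i j, i < 2*k-2 → j < 2*k-2 → v i = v j → i = j := by
    intro i j hi hj h
    exact hvinj (by simp only [Set.mem_Iio]; omega) (by simp only [Set.mem_Iio]; omega) h
  have hve1 : ∀ i, i < k → v i ∈ e1 := by
    intro i hi
    rw [he1]
    exact Finset.mem_image_of_mem v (Finset.mem_range.mpr hi)
  have hmem_e1 : ∀ w ∈ e1, ∃ j, j < k ∧ v j = w := by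
    intro w hw
    rw [he1] at hw
    obtain ⟨j, hj, hjw⟩ := Finset.mem_image.mp hw
    exact ⟨j, Finset.mem_range.mp hj, hjw⟩
  have hve2 : ∀ i, k-1 ≤ i → i < 2*k-2 → v i ∈ e2 := by
    intro i h1 h2
    rw [he2]
    exact Finset.mem_insert_of_mem
      (Finset.mem_image_of_mem v (Finset.mem_Ico.mpr ⟨h1, h2⟩))
  have hv0e2 : v 0 ∈ e2 := by rw [he2]; exact Finset.mem_insert_self _ _
  have hmem_e2 : ∀ w ∈ e2, w = v 0 ∨ ∃ j, k-1 ≤ j ∧ j < 2*k-2 ∧ v j = w := by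
    intro w hw
    rw [he2] at hw
    rcases Finset.mem_insert.mp hw with h | h
    · exact Or.inl h
    · obtain ⟨j, hj, hjw⟩ := Finset.mem_image.mp h
      exact Or.inr ⟨j, (Finset.mem_Ico.mp hj).1, (Finset.mem_Ico.mp hj).2, hjw⟩
  have hvert : ∀ i, i < 2*k-2 → v i ∈ G.verts := by
    intro i hi
    by_cases h : i < k
    · exact hgood e1 hm1 (hve1 i h)
    · exact hgood e2 hm2 (hve2 i (by omega) hi)
  set G0 := G.deleteEdges {e1, e2} with hG0
  have hG0e : ∀ e : Finset α, e ∈ G0.edges ↔ e ∈ G.edges ∧ e ≠ e1 ∧ e ≠ e2 := by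
    intro e
    simp [hG0, deleteEdges, Finset.mem_sdiff, not_or]
  have hG0good : G0.Good := by
    intro e he
    exact hgood e ((hG0e e).mp he).1
  have hHv : ∀ i, (H i).verts = G0.component (v i) := by
    intro i; rw [hH i]; rfl
  have hHe : ∀ i, ∀ e : Finset α, e ∈ (H i).edges ↔ e ∈ G0.edges ∧ e ⊆ (H i).verts := by
    intro i e
    rw [hH i]
    exact mem_componentHG_edges
  have hvH : ∀ i, i < 2*k-2 → v i ∈ (H i).verts := by
    intro i hi
    rw [hHv]
    exact mem_component.mpr ⟨hvert i hi, 0, Walk.nil _⟩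
  have hHsubV : ∀ i, ∀ a ∈ (H i).verts, a ∈ G.verts := by
    intro i a ha
    rw [hHv] at ha
    exact (mem_component.mp ha).1
  -- no G0-path between distinct cycle vertices
  have hmixed : ∀ i j q, 1 ≤ i → i ≤ k-2 → k ≤ j → j < 2*k-2 → 1 ≤ q →
      G0.PathIn (v i) (v j) q → False := by
    intro i j q hi1 hi2 hj1 hj2 hq hp
    obtain ⟨w, f, hw0, hwq, hadj0, hwinj, hfinj⟩ := hp
    have hadj : ∀ t, t < q → f t ∈ G.edges ∧ f t ≠ e1 ∧ f t ≠ e2 ∧ w t ∈ f t ∧ w (t+1) ∈ f t := by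
      intro t ht
      obtain ⟨hfe, hh1, hh2⟩ := hadj0 t ht
      obtain ⟨hg, hn1, hn2⟩ := (hG0e (f t)).mp hfe
      exact ⟨hg, hn1, hn2, hh1, hh2⟩
    by_cases hu_on : ∃ t, t ≤ q ∧ w t = v (k-1)
    · obtain ⟨t, htq, hwt⟩ := hu_on
      have ht0 : t ≠ 0 := by
        intro h
        subst h
        rw [hw0] at hwt
        have := hvinj' i (k-1) (by omega) (by omega) hwt
        omega
      exact no_closing_edge hm1 hcyc (q := t) (by omega) w f
        (fun s hs => hadj s (by omega))
        (fun s s' hs hs' => hwinj s s' (by omega) (by omega))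
        (fun s s' hs hs' => hfinj s s' (by omega) (by omega))
        (Or.inl rfl) (hw0 ▸ hve1 i (by omega)) (hwt ▸ hve1 (k-1) (by omega))
    · push_neg at hu_on
      exact no_closing_two hm1 hm2 hne hcyc hq w f hadj hwinj hfinj
        (fun t ht => hu_on t ht)
        (hw0 ▸ hve1 i (by omega)) (hve1 (k-1) (by omega))
        (hwq ▸ hve2 j (by omega) hj2) (hve2 (k-1) (by omega) (by omega))
  have hNoPath : ∀ i j, i < 2*k-2 → j < 2*k-2 → i ≠ j → ∀ p, ¬ G0.Walk (v i) (v j) p := by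
    intro i j hi hj hij p hwk
    have hvij : v i ≠ v j := fun h => hij (hvinj' i j hi hj h)
    obtain ⟨q, hq1, _, hp⟩ := exists_path hwk hvij
    obtain ⟨w, f, hw0, hwq, hadj0, hwinj, hfinj⟩ := hp
    have hadj : ∀ t, t < q → f t ∈ G.edges ∧ f t ≠ e1 ∧ f t ≠ e2 ∧ w t ∈ f t ∧ w (t+1) ∈ f t := by
      intro t ht
      obtain ⟨hfe, hh1, hh2⟩ := hadj0 t ht
      obtain ⟨hg, hn1, hn2⟩ := (hG0e (f t)).mp hfe
      exact ⟨hg, hn1, hn2, hh1, hh2⟩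
    by_cases hc1 : i < k ∧ j < k
    · exact no_closing_edge hm1 hcyc hq1 w f hadj hwinj hfinj (Or.inl rfl)
        (hw0 ▸ hve1 i hc1.1) (hwq ▸ hve1 j hc1.2)
    · by_cases hc2 : (i = 0 ∨ k-1 ≤ i) ∧ (j = 0 ∨ k-1 ≤ j)
      · have h0 : w 0 ∈ e2 := by
          rcases hc2.1 with h | h
          · rw [hw0, h]; exact hv0e2
          · exact hw0 ▸ hve2 i h hi
        have hq' : w q ∈ e2 := by
          rcases hc2.2 with h | h
          · rw [hwq, h]; exact hv0e2
          · exact hwq ▸ hve2 j h hj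
        exact no_closing_edge hm2 hcyc hq1 w f hadj hwinj hfinj (Or.inr rfl) h0 hq'
      · -- mixed case
        have hcases : (1 ≤ i ∧ i ≤ k-2 ∧ k ≤ j ∧ j < 2*k-2) ∨
            (1 ≤ j ∧ j ≤ k-2 ∧ k ≤ i ∧ i < 2*k-2) := by omega
        rcases hcases with ⟨ha, hb, hc, hd⟩ | ⟨ha, hb, hc, hd⟩
        · exact hmixed i j q ha hb hc hd hq1 ⟨w, f, hw0, hwq, hadj0, hwinj, hfinj⟩
        · exact hmixed j i q ha hb hc hd hq1
            (PathIn.reverse ⟨w, f, hw0, hwq, hadj0, hwinj, hfinj⟩)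
  have hdisj : ∀ i j, i < 2*k-2 → j < 2*k-2 → i ≠ j →
      ∀ a, a ∈ (H i).verts → a ∈ (H j).verts → False := by
    intro i j hi hj hij a hai haj
    rw [hHv] at hai haj
    obtain ⟨_, p1, hp1⟩ := mem_component.mp hai
    obtain ⟨_, p2, hp2⟩ := mem_component.mp haj
    exact hNoPath i j hi hj hij (p1 + p2) (hp1.append hp2.reverse)
  have hcover : ∀ a ∈ G.verts, ∃ i, i < 2*k-2 ∧ a ∈ (H i).verts := by
    intro a ha
    obtain ⟨p, hp⟩ := hconn (v 0) (hvert 0 (by omega)) a ha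
    have step : ∀ {a' b' : α} {p' : ℕ}, G.Walk a' b' p' →
        (∃ i, i < 2*k-2 ∧ a' ∈ (H i).verts) → ∃ i, i < 2*k-2 ∧ b' ∈ (H i).verts := by
      intro a' b' p' hwk
      induction hwk with
      | nil vv => exact id
      | @cons uu ww vv pp e he hu hv hne' hw ih =>
          intro hex
          apply ih
          by_cases h1 : e = e1
          · subst h1
            obtain ⟨j, hj, hjv⟩ := hmem_e1 vv hv
            exact ⟨j, by omega, hjv ▸ hvH j (by omega)⟩
          · by_cases h2 : e = e2
            · subst h2
              rcases hmem_e2 vv hv with h | ⟨j, hj1, hj2, hjv⟩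
              · exact ⟨0, by omega, h ▸ hvH 0 (by omega)⟩
              · exact ⟨j, hj2, hjv ▸ hvH j hj2⟩
            · have he0 : e ∈ G0.edges := (hG0e e).mpr ⟨he, h1, h2⟩
              obtain ⟨i, hi, hai⟩ := hex
              refine ⟨i, hi, ?_⟩
              rw [hHv] at hai ⊢
              exact component_closure hG0good he0 hu hai hv
    exact step hp ⟨0, by omega, hvH 0 (by omega)⟩
  have hedgeloc : ∀ e ∈ G0.edges, ∃ i, i < 2*k-2 ∧ e ⊆ (H i).verts := by
    intro e he
    have hcard : e.card = k := hunif e ((hG0e e).mp he).1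
    have hnonempty : e.Nonempty := Finset.card_pos.mp (by omega)
    obtain ⟨a, ha⟩ := hnonempty
    obtain ⟨i, hi, hai⟩ := hcover a (hG0good e he ha)
    refine ⟨i, hi, ?_⟩
    rw [hHv] at hai ⊢
    exact component_closure hG0good he ha hai
  -- Phase B: the moved graph and distance transfer facts
  have hukk : k - 1 < 2*k-2 := by omega
  have h1kk : 1 < 2*k-2 := by omega
  have hux : v (k-1) ≠ v 1 := fun h => by have := hvinj' (k-1) 1 hukk h1kk h; omega
  have huV : v (k-1) ∈ G.verts := hvert (k-1) hukk
  have hxV : v 1 ∈ G.verts := hvert 1 h1kk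
  set CK := (H (k-1)).verts with hCK
  set D := CK.erase (v (k-1)) with hD
  set S := (H (k-1)).edges.filter (fun f => v (k-1) ∈ f) with hS
  set G' := G.moveEdges S (v (k-1)) (v 1) with hG'
  have huCK : v (k-1) ∈ CK := hvH (k-1) hukk
  have hxH1 : v 1 ∈ (H 1).verts := hvH 1 h1kk
  have hxCK : v 1 ∉ CK := fun h => hdisj 1 (k-1) h1kk hukk (by omega) (v 1) hxH1 h
  have hDCK : ∀ a ∈ D, a ∈ CK := fun a ha => (Finset.mem_erase.mp ha).2
  have haDu : ∀ a ∈ D, a ≠ v (k-1) := fun a ha => (Finset.mem_erase.mp ha).1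
  have hDV : ∀ a ∈ D, a ∈ G.verts := fun a ha => hHsubV (k-1) a (hDCK a ha)
  have hxD : v 1 ∉ D := fun h => hxCK (hDCK _ h)
  have huD : v (k-1) ∉ D := fun h => haDu _ h rfl
  have hvD : ∀ i, i < 2*k-2 → v i ∉ D := by
    intro i hi h
    by_cases hik : i = k-1
    · exact haDu _ h (by rw [hik])
    · exact hdisj i (k-1) hi hukk hik (v i) (hvH i hi) (hDCK _ h)
  have he1D : ∀ w ∈ e1, w ∉ D := by
    intro w hw hwD
    obtain ⟨j, hj, hjw⟩ := hmem_e1 w hw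
    exact hvD j (by omega) (hjw ▸ hwD)
  have he2D : ∀ w ∈ e2, w ∉ D := by
    intro w hw hwD
    rcases hmem_e2 w hw with h | ⟨j, hj1, hj2, hjw⟩
    · exact hvD 0 (by omega) (h ▸ hwD)
    · exact hvD j hj2 (hjw ▸ hwD)
  have hCKe : ∀ e ∈ G0.edges, (∃ w ∈ e, w ∈ CK) → e ⊆ CK := by
    intro e he ⟨w, hw, hwCK⟩
    rw [hCK, hHv] at hwCK ⊢
    exact component_closure hG0good he hw hwCK
  have hSmem : ∀ f : Finset α, f ∈ S ↔ f ∈ G0.edges ∧ f ⊆ CK ∧ v (k-1) ∈ f := by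
    intro f
    rw [hS, Finset.mem_filter, hHe (k-1) f]
    rw [hCK]
    tauto
  have hG'edges : ∀ ee : Finset α, ee ∈ G'.edges ↔
      (ee ∈ G.edges ∧ ee ∉ S) ∨ (∃ ff ∈ S, insert (v 1) (ff.erase (v (k-1))) = ee) := by
    intro ee
    simp [hG', moveEdges, Finset.mem_union, Finset.mem_sdiff, Finset.mem_image]
  have he1S : e1 ∉ S := fun h => ((hG0e e1).mp ((hSmem e1).mp h).1).2.1 rfl
  have he2S : e2 ∉ S := fun h => ((hG0e e2).mp ((hSmem e2).mp h).1).2.2 rfl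
  -- collapse map G → G' (collapse D to v (k-1))
  have hcol_ρ : ∀ e ∈ G.edges,
      (∃ e' ∈ G'.edges, ∀ w ∈ e, (if w ∈ D then v (k-1) else w) ∈ e') ∨
      (∀ w ∈ e, ∀ w' ∈ e, (if w ∈ D then v (k-1) else w) = (if w' ∈ D then v (k-1) else w')) := by
    intro e he
    by_cases h1 : e = e1
    · subst h1
      left
      exact ⟨e, (hG'edges e).mpr (Or.inl ⟨he, he1S⟩),
        fun w hw => by rw [if_neg (he1D w hw)]; exact hw⟩
    · by_cases h2 : e = e2
      · subst h2
        left
        exact ⟨e, (hG'edges e).mpr (Or.inl ⟨he, he2S⟩),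
          fun w hw => by rw [if_neg (he2D w hw)]; exact hw⟩
      · have he0 : e ∈ G0.edges := (hG0e e).mpr ⟨he, h1, h2⟩
        by_cases h3 : ∃ w ∈ e, w ∈ CK
        · right
          have hsub : e ⊆ CK := hCKe e he0 h3
          have hval : ∀ z ∈ e, (if z ∈ D then v (k-1) else z) = v (k-1) := by
            intro z hz
            by_cases hzD : z ∈ D
            · rw [if_pos hzD]
            · rw [if_neg hzD]
              by_contra hzu
              exact hzD (Finset.mem_erase.mpr ⟨hzu, hsub hz⟩)
          intro w hw w' hw'
          rw [hval w hw, hval w' hw']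
        · left
          push_neg at h3
          have heS : e ∉ S := fun hS' => h3 (v (k-1)) ((hSmem e).mp hS').2.2 huCK
          exact ⟨e, (hG'edges e).mpr (Or.inl ⟨he, heS⟩),
            fun w hw => by rw [if_neg (fun hD' => h3 w hw (hDCK w hD'))]; exact hw⟩
  -- collapse map G' → G (collapse D to v 1)
  have hcol_ρ' : ∀ e ∈ G'.edges,
      (∃ e' ∈ G.edges, ∀ w ∈ e, (if w ∈ D then v 1 else w) ∈ e') ∨
      (∀ w ∈ e, ∀ w' ∈ e, (if w ∈ D then v 1 else w) = (if w' ∈ D then v 1 else w')) := by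
    intro ee hee
    rcases (hG'edges ee).mp hee with ⟨heG, heS⟩ | ⟨ff, hffS, hmv⟩
    · by_cases h3 : ∃ w ∈ ee, w ∈ D
      · right
        obtain ⟨w0, hw0e, hw0D⟩ := h3
        have h1 : ee ≠ e1 := fun h => he1D w0 (h ▸ hw0e) hw0D
        have h2 : ee ≠ e2 := fun h => he2D w0 (h ▸ hw0e) hw0D
        have he0 : ee ∈ G0.edges := (hG0e ee).mpr ⟨heG, h1, h2⟩
        have hsub : ee ⊆ CK := hCKe ee he0 ⟨w0, hw0e, hDCK w0 hw0D⟩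
        have huee : v (k-1) ∉ ee := fun hu' => heS ((hSmem ee).mpr ⟨he0, hsub, hu'⟩)
        have hval : ∀ z ∈ ee, (if z ∈ D then v 1 else z) = v 1 := by
          intro z hz
          rw [if_pos (Finset.mem_erase.mpr ⟨fun h => huee (by rw [← h]; exact hz), hsub hz⟩)]
        intro w hw w' hw'
        rw [hval w hw, hval w' hw']
      · left
        push_neg at h3
        exact ⟨ee, heG, fun w hw => by rw [if_neg (h3 w hw)]; exact hw⟩
    · right
      have hval : ∀ z ∈ ee, (if z ∈ D then v 1 else z) = v 1 := by
        intro z hz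
        rw [← hmv] at hz
        rcases Finset.mem_insert.mp hz with h | h
        · rw [h, if_neg hxD]
        · have hz1 : z ≠ v (k-1) := (Finset.mem_erase.mp h).1
          have hz2 : z ∈ CK := ((hSmem ff).mp hffS).2.1 (Finset.mem_erase.mp h).2
          rw [if_pos (Finset.mem_erase.mpr ⟨hz1, hz2⟩)]
      intro w hw w' hw'
      rw [hval w hw, hval w' hw']
  -- F1 : distances between non-moved vertices are unchanged
  have F1 : ∀ a b : α, a ∈ G.verts → b ∈ G.verts → a ∉ D → b ∉ D →
      G'.dist a b = G.dist a b := by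
    intro a b ha hb haD hbD
    have hGW : ∃ p, G.Walk a b p := hconn a ha b hb
    have hG'W : ∃ p, G'.Walk a b p := by
      obtain ⟨q, _, hq⟩ := collapse _ hcol_ρ (walk_dist hGW)
      rw [if_neg haD, if_neg hbD] at hq
      exact ⟨q, hq⟩
    refine le_antisymm ?_ ?_
    · have := dist_collapse hcol_ρ hGW
      rwa [if_neg haD, if_neg hbD] at this
    · have := dist_collapse hcol_ρ' hG'W
      rwa [if_neg haD, if_neg hbD] at this
  -- edge characterizations for cut lemmas
  have hKiff : ∀ i, i < 2*k-2 → ∀ e : Finset α,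
      e ∈ (H i).edges ↔ e ∈ G.edges ∧ e ⊆ (H i).verts := by
    intro i hi e
    rw [hHe i e]
    constructor
    · rintro ⟨h0, hsub⟩
      exact ⟨((hG0e e).mp h0).1, hsub⟩
    · rintro ⟨hGe, hsub⟩
      refine ⟨(hG0e e).mpr ⟨hGe, ?_, ?_⟩, hsub⟩
      · rintro rfl
        have h0' : v 0 ∈ (H i).verts := hsub (hve1 0 (by omega))
        have h1' : v 1 ∈ (H i).verts := hsub (hve1 1 (by omega))
        by_cases hi0 : i = 0
        · exact hdisj 1 i h1kk hi (by omega) _ (hvH 1 h1kk) h1'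
        · exact hdisj 0 i (by omega) hi (fun h => hi0 h.symm) _ (hvH 0 (by omega)) h0'
      · rintro rfl
        have h0' : v 0 ∈ (H i).verts := hsub hv0e2
        have h1' : v (k-1) ∈ (H i).verts := hsub (hve2 (k-1) le_rfl hukk)
        by_cases hi0 : i = 0
        · exact hdisj (k-1) i hukk hi (by omega) _ (hvH (k-1) hukk) h1'
        · exact hdisj 0 i (by omega) hi (fun h => hi0 h.symm) _ (hvH 0 (by omega)) h0'
  have hsep_G : ∀ i, i < 2*k-2 → ∀ e ∈ G.edges,
      e ⊆ (H i).verts ∨ ∀ w ∈ e, w ∈ (H i).verts → w = v i := by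
    intro i hi e he
    by_cases h1 : e = e1
    · subst h1
      right
      intro w hw hwH
      obtain ⟨j, hj, hjv⟩ := hmem_e1 w hw
      subst hjv
      have : j = i := by
        by_contra hji
        exact hdisj j i (by omega) hi hji _ (hvH j (by omega)) hwH
      rw [this]
    · by_cases h2 : e = e2
      · subst h2
        right
        intro w hw hwH
        rcases hmem_e2 w hw with h | ⟨j, hj1, hj2, hjv⟩
        · subst h
          have : (0:ℕ) = i := by
            by_contra hji
            exact hdisj 0 i (by omega) hi hji _ (hvH 0 (by omega)) hwH
          rw [← this]
        · subst hjv
          have : j = i := by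
            by_contra hji
            exact hdisj j i hj2 hi hji _ (hvH j hj2) hwH
          rw [this]
      · have he0 : e ∈ G0.edges := (hG0e e).mpr ⟨he, h1, h2⟩
        by_cases h3 : ∃ w ∈ e, w ∈ (H i).verts
        · left
          obtain ⟨w, hw, hwH⟩ := h3
          rw [hHv] at hwH ⊢
          exact component_closure hG0good he0 hw hwH
        · right
          intro w hw hwH
          exact absurd ⟨w, hw, hwH⟩ h3
  -- the hanging part re-attached at v 1, as a cut subgraph of G'
  set K' : HGraph α := ⟨insert (v 1) D, G'.edges.filter (fun e => e ⊆ insert (v 1) D)⟩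
    with hK'def
  have hK'iff : ∀ e : Finset α, e ∈ K'.edges ↔ e ∈ G'.edges ∧ e ⊆ insert (v 1) D := by
    intro e
    rw [hK'def]
    exact Finset.mem_filter
  have huC' : v (k-1) ∉ insert (v 1) D :=
    fun h => (Finset.mem_insert.mp h).elim (fun h' => hux h') huD
  have hcard3 : ∀ e ∈ G.edges, 3 ≤ e.card := fun e he => by rw [hunif e he]; omega
  have hsep_G' : ∀ e ∈ G'.edges,
      e ⊆ insert (v 1) D ∨ ∀ w ∈ e, w ∈ insert (v 1) D → w = v 1 := by
    intro ee hee
    rcases (hG'edges ee).mp hee with ⟨heG, heS⟩ | ⟨ff, hffS, hmv⟩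
    · by_cases h3 : ∃ w ∈ ee, w ∈ D
      · left
        obtain ⟨w0, hw0e, hw0D⟩ := h3
        have h1 : ee ≠ e1 := fun h => he1D w0 (h ▸ hw0e) hw0D
        have h2 : ee ≠ e2 := fun h => he2D w0 (h ▸ hw0e) hw0D
        have he0 : ee ∈ G0.edges := (hG0e ee).mpr ⟨heG, h1, h2⟩
        have hsub : ee ⊆ CK := hCKe ee he0 ⟨w0, hw0e, hDCK w0 hw0D⟩
        have huee : v (k-1) ∉ ee := fun hu' => heS ((hSmem ee).mpr ⟨he0, hsub, hu'⟩)
        intro z hz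
        exact Finset.mem_insert_of_mem
          (Finset.mem_erase.mpr ⟨fun h => huee (by rw [← h]; exact hz), hsub hz⟩)
      · right
        push_neg at h3
        intro w hw hwC
        rcases Finset.mem_insert.mp hwC with h | h
        · exact h
        · exact absurd h (h3 w hw)
    · left
      rw [← hmv]
      intro z hz
      rcases Finset.mem_insert.mp hz with h | h
      · rw [h]; exact Finset.mem_insert_self _ _
      · exact Finset.mem_insert_of_mem (Finset.mem_erase.mpr
          ⟨(Finset.mem_erase.mp h).1, ((hSmem ff).mp hffS).2.1 (Finset.mem_erase.mp h).2⟩)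
  -- θ collapse K → K' (rename v (k-1) to v 1)
  have hcol_θ : ∀ e ∈ (H (k-1)).edges,
      (∃ e' ∈ K'.edges, ∀ w ∈ e, (if w = v (k-1) then v 1 else w) ∈ e') ∨
      (∀ w ∈ e, ∀ w' ∈ e,
        (if w = v (k-1) then v 1 else w) = (if w' = v (k-1) then v 1 else w')) := by
    intro e he
    left
    obtain ⟨he0, hsub⟩ := (hHe (k-1) e).mp he
    rw [← hCK] at hsub
    by_cases hu' : v (k-1) ∈ e
    · have heS : e ∈ S := (hSmem e).mpr ⟨he0, hsub, hu'⟩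
      refine ⟨insert (v 1) (e.erase (v (k-1))),
        (hK'iff _).mpr ⟨(hG'edges _).mpr (Or.inr ⟨e, heS, rfl⟩), ?_⟩, ?_⟩
      · intro z hz
        rcases Finset.mem_insert.mp hz with h | h
        · rw [h]; exact Finset.mem_insert_self _ _
        · exact Finset.mem_insert_of_mem (Finset.mem_erase.mpr
            ⟨(Finset.mem_erase.mp h).1, hsub (Finset.mem_erase.mp h).2⟩)
      · intro w hw
        by_cases hwu : w = v (k-1)
        · rw [if_pos hwu]; exact Finset.mem_insert_self _ _
        · rw [if_neg hwu]
          exact Finset.mem_insert_of_mem (Finset.mem_erase.mpr ⟨hwu, hw⟩)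
    · have heS : e ∉ S := fun h => hu' ((hSmem e).mp h).2.2
      refine ⟨e, (hK'iff e).mpr ⟨(hG'edges e).mpr
        (Or.inl ⟨((hG0e e).mp he0).1, heS⟩), ?_⟩, ?_⟩
      · intro z hz
        exact Finset.mem_insert_of_mem (Finset.mem_erase.mpr
          ⟨fun h => hu' (by rw [← h]; exact hz), hsub hz⟩)
      · intro w hw
        rw [if_neg (fun h => hu' (by rw [← h]; exact hw))]
        exact hw
  -- θ' collapse K' → K (rename v 1 to v (k-1))
  have hcol_θ' : ∀ e ∈ K'.edges,
      (∃ e' ∈ (H (k-1)).edges, ∀ w ∈ e, (if w = v 1 then v (k-1) else w) ∈ e') ∨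
      (∀ w ∈ e, ∀ w' ∈ e,
        (if w = v 1 then v (k-1) else w) = (if w' = v 1 then v (k-1) else w')) := by
    intro ee hee
    left
    obtain ⟨heG', hsubC⟩ := (hK'iff ee).mp hee
    rcases (hG'edges ee).mp heG' with ⟨heG, heS⟩ | ⟨ff, hffS, hmv⟩
    · have hsubD : ∀ z ∈ ee, z ∈ D := by
        intro z hz
        rcases Finset.mem_insert.mp (hsubC hz) with h | h
        · exfalso
          rw [h] at hz
          by_cases h1 : ee = e1
          · subst h1
            have hv0C := hsubC (hve1 0 (by omega))
            rcases Finset.mem_insert.mp hv0C with h' | h'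
            · have := hvinj' 0 1 (by omega) h1kk h'
              omega
            · exact hvD 0 (by omega) h'
          · by_cases h2 : ee = e2
            · subst h2
              rcases hmem_e2 (v 1) hz with h' | ⟨j, hj1, hj2, hjv⟩
              · have := hvinj' 1 0 h1kk (by omega) h'
                omega
              · have := hvinj' j 1 hj2 h1kk hjv
                omega
            · have he0 : ee ∈ G0.edges := (hG0e ee).mpr ⟨heG, h1, h2⟩
              obtain ⟨m, hm, hsubm⟩ := hedgeloc ee he0
              have hm1' : m = 1 := by
                by_contra hm1'
                exact hdisj m 1 hm h1kk hm1' (v 1) (hsubm hz) hxH1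
              subst hm1'
              have hsub_x : ee ⊆ {v 1} := by
                intro z' hz'
                rcases Finset.mem_insert.mp (hsubC hz') with h' | h'
                · exact Finset.mem_singleton.mpr h'
                · exact absurd (hsubm hz')
                    (fun hh => hdisj 1 (k-1) h1kk hukk (by omega) z' hh (hDCK z' h'))
              have hle := Finset.card_le_card hsub_x
              rw [Finset.card_singleton] at hle
              have := hcard3 ee heG
              omega
        · exact h
      have h1 : ee ≠ e1 := by
        rintro rfl
        exact hvD 0 (by omega) (hsubD (v 0) (hve1 0 (by omega)))
      have h2 : ee ≠ e2 := by
        rintro rfl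
        exact hvD 0 (by omega) (hsubD (v 0) hv0e2)
      have he0 : ee ∈ G0.edges := (hG0e ee).mpr ⟨heG, h1, h2⟩
      refine ⟨ee, (hHe (k-1) ee).mpr ⟨he0, ?_⟩, ?_⟩
      · rw [← hCK]
        exact fun z hz => hDCK z (hsubD z hz)
      · intro w hw
        rw [if_neg (fun h => hxD (by rw [← h]; exact hsubD w hw))]
        exact hw
    · refine ⟨ff, (hHe (k-1) ff).mpr ⟨((hSmem ff).mp hffS).1, by
        rw [← hCK]; exact ((hSmem ff).mp hffS).2.1⟩, ?_⟩
      intro w hw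
      rw [← hmv] at hw
      rcases Finset.mem_insert.mp hw with h | h
      · rw [if_pos h]
        exact ((hSmem ff).mp hffS).2.2
      · have hwCK : w ∈ CK := ((hSmem ff).mp hffS).2.1 (Finset.mem_erase.mp h).2
        rw [if_neg (fun h' => hxCK (by rw [← h']; exact hwCK))]
        exact (Finset.mem_erase.mp h).2
  -- walks within the hanging component
  have hKW_exists : ∀ a ∈ CK, ∃ p, (H (k-1)).Walk (v (k-1)) a p := by
    intro a ha
    rw [hCK, hHv] at ha
    obtain ⟨_, p, hp⟩ := mem_component.mp ha
    refine ⟨p, ?_⟩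
    rw [hH (k-1)]
    exact comp_walk hG0good (mem_component.mpr ⟨huV, 0, Walk.nil _⟩) hp
  have hKuu : ∀ a ∈ CK, ∃ p, (H (k-1)).Walk a (v (k-1)) p := by
    intro a ha
    obtain ⟨p, hp⟩ := hKW_exists a ha
    exact ⟨p, hp.reverse⟩
  have hKab : ∀ a ∈ CK, ∀ b ∈ CK, ∃ p, (H (k-1)).Walk a b p := by
    intro a ha b hb
    obtain ⟨p, hp⟩ := hKuu a ha
    obtain ⟨q, hq⟩ := hKW_exists b hb
    exact ⟨p + q, hp.append hq⟩
  have hKsubG : ∀ e ∈ (H (k-1)).edges, e ∈ G.edges :=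
    fun e he => ((hKiff (k-1) hukk e).mp he).1
  have hK'subG' : ∀ e ∈ K'.edges, e ∈ G'.edges := fun e he => ((hK'iff e).mp he).1
  -- θ distance transfer
  have hθdist : ∀ a ∈ D, K'.dist a (v 1) = (H (k-1)).dist a (v (k-1)) := by
    intro a haD
    have haK : a ∈ CK := hDCK a haD
    have hau : a ≠ v (k-1) := haDu a haD
    have hax : a ≠ v 1 := fun h => hxCK (h ▸ haK)
    have hW1 : ∃ p, (H (k-1)).Walk a (v (k-1)) p := hKuu a haK
    have hW2 : ∃ p, K'.Walk a (v 1) p := by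
      obtain ⟨q, _, hq⟩ := collapse _ hcol_θ (walk_dist hW1)
      rw [if_neg hau, if_pos rfl] at hq
      exact ⟨q, hq⟩
    refine le_antisymm ?_ ?_
    · have := dist_collapse hcol_θ hW1
      rwa [if_neg hau, if_pos rfl] at this
    · have := dist_collapse hcol_θ' hW2
      rwa [if_neg hax, if_pos rfl] at this
  have hθdist2 : ∀ a ∈ D, ∀ b ∈ D, K'.dist a b = (H (k-1)).dist a b := by
    intro a haD b hbD
    have hau := haDu a haD; have hbu := haDu b hbD
    have hax : a ≠ v 1 := fun h => hxCK (h ▸ hDCK a haD)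
    have hbx : b ≠ v 1 := fun h => hxCK (h ▸ hDCK b hbD)
    have hW1 : ∃ p, (H (k-1)).Walk a b p := hKab a (hDCK a haD) b (hDCK b hbD)
    have hW2 : ∃ p, K'.Walk a b p := by
      obtain ⟨q, _, hq⟩ := collapse _ hcol_θ (walk_dist hW1)
      rw [if_neg hau, if_neg hbu] at hq
      exact ⟨q, hq⟩
    refine le_antisymm ?_ ?_
    · have := dist_collapse hcol_θ hW1
      rwa [if_neg hau, if_neg hbu] at this
    · have := dist_collapse hcol_θ' hW2
      rwa [if_neg hax, if_neg hbx] at this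
  -- F3 : distances inside the moved part are unchanged
  have F3 : ∀ a ∈ D, ∀ b ∈ D, G'.dist a b = G.dist a b := by
    intro a haD b hbD
    have h1 : G.dist a b = (H (k-1)).dist a b :=
      cut_dist_eq (hKiff (k-1) hukk) (hsep_G (k-1) hukk) (hDCK a haD) (hDCK b hbD)
    have h2 : G'.dist a b = K'.dist a b :=
      cut_dist_eq hK'iff hsep_G' (Finset.mem_insert_of_mem haD) (Finset.mem_insert_of_mem hbD)
    rw [h1, h2, hθdist2 a haD b hbD]
  -- F2 : distances from the moved part in G
  have F2G : ∀ a ∈ D, ∀ b, b ∈ G.verts → b ∉ D →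
      G.dist a b = (H (k-1)).dist a (v (k-1)) + G.dist (v (k-1)) b := by
    intro a haD b hbV hbD
    by_cases hbu : b = v (k-1)
    · have h1 : G.dist a (v (k-1)) = (H (k-1)).dist a (v (k-1)) :=
        cut_dist_eq (hKiff (k-1) hukk) (hsep_G (k-1) hukk) (hDCK a haD) huCK
      rw [hbu, h1, HGraph.dist_self]; omega
    · have hbCK : b ∉ CK := fun h => hbD (Finset.mem_erase.mpr ⟨hbu, h⟩)
      have hsplit := cut_dist_split (hKiff (k-1) hukk) (hsep_G (k-1) hukk) huCK
        hbCK (hDCK a haD) (hconn b hbV a (hDV a haD))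
      have hc1 : G.dist a b = G.dist b a := HGraph.dist_comm _ _ _
      have hc2 : G.dist b (v (k-1)) = G.dist (v (k-1)) b := HGraph.dist_comm _ _ _
      have hc3 : (H (k-1)).dist (v (k-1)) a = (H (k-1)).dist a (v (k-1)) := HGraph.dist_comm _ _ _
      omega
  -- F2' : distances from the moved part in G'
  have F2G' : ∀ a ∈ D, ∀ b, b ∈ G.verts → b ∉ D →
      G'.dist a b = (H (k-1)).dist a (v (k-1)) + G.dist (v 1) b := by
    intro a haD b hbV hbD
    by_cases hbx : b = v 1
    · have h1 : G'.dist a (v 1) = K'.dist a (v 1) :=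
        cut_dist_eq hK'iff hsep_G' (Finset.mem_insert_of_mem haD) (Finset.mem_insert_self _ _)
      rw [hbx, h1, hθdist a haD, HGraph.dist_self]; omega
    · have hbC' : b ∉ insert (v 1) D := by
        intro h
        rcases Finset.mem_insert.mp h with h' | h'
        · exact hbx h'
        · exact hbD h'
      have hW : ∃ p, G'.Walk b a p := by
        have h1 : ∃ p, G'.Walk b (v 1) p := by
          obtain ⟨q, _, hq⟩ := collapse _ hcol_ρ (walk_dist (hconn b hbV (v 1) hxV))
          rw [if_neg hbD, if_neg hxD] at hq
          exact ⟨q, hq⟩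
        have h2 : ∃ p, K'.Walk (v 1) a p := by
          obtain ⟨q, _, hq⟩ := collapse _ hcol_θ (walk_dist (hKW_exists a (hDCK a haD)))
          rw [if_pos rfl, if_neg (haDu a haD)] at hq
          exact ⟨q, hq⟩
        obtain ⟨p1, hw1⟩ := h1
        obtain ⟨p2, hw2⟩ := h2
        exact ⟨p1 + p2, hw1.append (walk_mono hK'subG' hw2)⟩
      have hsplit := cut_dist_split hK'iff hsep_G' (Finset.mem_insert_self _ _)
        hbC' (Finset.mem_insert_of_mem haD) hW
      have h3 : G'.dist b (v 1) = G.dist (v 1) b := by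
        rw [F1 b (v 1) hbV hxV hbD hxD]
        exact HGraph.dist_comm G b (v 1)
      have h4 : K'.dist (v 1) a = (H (k-1)).dist a (v (k-1)) := by
        rw [HGraph.dist_comm K' (v 1) a, hθdist a haD]
      have h5 : G'.dist a b = G'.dist b a := HGraph.dist_comm _ _ _
      omega
  -- distances from v 1 and v (k-1) to cycle vertices
  have hdu1 : ∀ i, i < 2*k-2 → i ≠ k-1 → G.dist (v (k-1)) (v i) = 1 := by
    intro i hi hik
    have hne' : v (k-1) ≠ v i := fun h => hik (hvinj' (k-1) i hukk hi h).symm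
    refine le_antisymm ?_ (dist_pos (hconn (v (k-1)) huV _ (hvert i hi)) hne')
    by_cases h : i < k
    · exact dist_le (Walk.cons (v i) e1 hm1 (hve1 (k-1) (by omega)) (hve1 i h) hne'
        (Walk.nil _))
    · exact dist_le (Walk.cons (v i) e2 hm2 (hve2 (k-1) le_rfl hukk)
        (hve2 i (by omega) hi) hne' (Walk.nil _))
  have hdx_near : ∀ i, i < k → i ≠ 1 → G.dist (v 1) (v i) = 1 := by
    intro i hi hi1
    have hne' : v 1 ≠ v i := fun h => hi1 (hvinj' 1 i h1kk (by omega) h).symm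
    exact le_antisymm
      (dist_le (Walk.cons (v i) e1 hm1 (hve1 1 (by omega)) (hve1 i hi) hne' (Walk.nil _)))
      (dist_pos (hconn (v 1) hxV _ (hvert i (by omega))) hne')
  have hdxu : G.dist (v 1) (v (k-1)) = 1 := hdx_near (k-1) (by omega) (by omega)
  have hdx_far : ∀ i, k ≤ i → i < 2*k-2 → G.dist (v 1) (v i) = 2 := by
    intro i h1 h2
    have hne1 : v 1 ≠ v i := fun h => by have := hvinj' 1 i h1kk h2 h; omega
    have hW := hconn (v 1) hxV (v i) (hvert i h2)
    have hle : G.dist (v 1) (v i) ≤ 2 := by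
      have hneu : v (k-1) ≠ v i := fun h => by have := hvinj' (k-1) i hukk h2 h; omega
      exact dist_le (Walk.cons (v (k-1)) e1 hm1 (hve1 1 (by omega)) (hve1 (k-1) (by omega))
        (fun h => hux h.symm) (Walk.cons (v i) e2 hm2 (hve2 (k-1) le_rfl hukk)
          (hve2 i (by omega) h2) hneu (Walk.nil _)))
    have hpos := dist_pos hW hne1
    rcases Nat.lt_or_ge (G.dist (v 1) (v i)) 2 with hlt | hge
    · exfalso
      have hd1 : G.dist (v 1) (v i) = 1 := by omega
      have hwk := walk_dist hW
      rw [hd1] at hwk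
      obtain ⟨e, he, hxe, hve, hne''⟩ := walk_one hwk
      by_cases he1' : e = e1
      · subst he1'
        obtain ⟨j, hj, hjv⟩ := hmem_e1 (v i) hve
        have := hvinj' j i (by omega) h2 hjv
        omega
      · by_cases he2' : e = e2
        · subst he2'
          rcases hmem_e2 (v 1) hxe with h' | ⟨j, hj1, hj2, hjv⟩
          · have := hvinj' 1 0 h1kk (by omega) h'
            omega
          · have := hvinj' j 1 hj2 h1kk hjv
            omega
        · have he0 : e ∈ G0.edges := (hG0e e).mpr ⟨he, he1', he2'⟩
          obtain ⟨m, hm, hsubm⟩ := hedgeloc e he0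
          have hm1' : m = 1 := by
            by_contra hm1'
            exact hdisj m 1 hm h1kk hm1' (v 1) (hsubm hxe) hxH1
          subst hm1'
          exact hdisj i 1 h2 h1kk (by omega) (v i) (hvH i h2) (hsubm hve)
    · omega
  -- distances into the components
  have hdub_all : ∀ i, i < 2*k-2 → i ≠ k-1 → ∀ b ∈ (H i).verts,
      G.dist (v (k-1)) b = 1 + (H i).dist (v i) b := by
    intro i hi hik b hb
    have huHi : v (k-1) ∉ (H i).verts :=
      fun h => hdisj (k-1) i hukk hi (fun h' => hik h'.symm) _ (hvH (k-1) hukk) h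
    have hsplit := cut_dist_split (hKiff i hi) (hsep_G i hi) (hvH i hi) huHi hb
      (hconn (v (k-1)) huV b (hHsubV i b hb))
    rw [hsplit, hdu1 i hi hik]
  have hdxb_mid : ∀ i, i < k-1 → i ≠ 1 → ∀ b ∈ (H i).verts,
      G.dist (v 1) b = 1 + (H i).dist (v i) b := by
    intro i hi hi1 b hb
    have hxHi : v 1 ∉ (H i).verts :=
      fun h => hdisj 1 i h1kk (by omega) (fun h' => hi1 h'.symm) _ hxH1 h
    have hsplit := cut_dist_split (hKiff i (by omega)) (hsep_G i (by omega))
      (hvH i (by omega)) hxHi hb (hconn (v 1) hxV b (hHsubV i b hb))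
    rw [hsplit, hdx_near i (by omega) hi1]
  have hdxb_far : ∀ i, k ≤ i → i < 2*k-2 → ∀ b ∈ (H i).verts,
      G.dist (v 1) b = 2 + (H i).dist (v i) b := by
    intro i hi1 hi2 b hb
    have hxHi : v 1 ∉ (H i).verts :=
      fun h => hdisj 1 i h1kk hi2 (by omega) _ hxH1 h
    have hsplit := cut_dist_split (hKiff i hi2) (hsep_G i hi2)
      (hvH i hi2) hxHi hb (hconn (v 1) hxV b (hHsubV i b hb))
    rw [hsplit, hdx_far i hi1 hi2]
  have hdxb_1 : ∀ b ∈ (H 1).verts, G.dist (v 1) b = (H 1).dist (v 1) b :=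
    fun b hb => cut_dist_eq (hKiff 1 h1kk) (hsep_G 1 h1kk) hxH1 hb
  -- the right-side components
  set R := (Finset.Ico k (2*k-2)).biUnion (fun i => (H i).verts) with hR
  have huH1 : v (k-1) ∉ (H 1).verts :=
    fun h => hdisj (k-1) 1 hukk h1kk (by omega) _ (hvH (k-1) hukk) h
  have huR : v (k-1) ∉ R := by
    intro h
    obtain ⟨j, hj, hbj⟩ := Finset.mem_biUnion.mp h
    have hj' := Finset.mem_Ico.mp hj
    exact hdisj (k-1) j hukk (by omega) (by omega) _ (hvH (k-1) hukk) hbj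
  -- pointwise comparison over non-moved vertices
  have PW : ∀ b ∈ G.verts \ D,
      G.dist (v 1) b + (if b ∈ (H 1).verts then 1 else 0)
      = G.dist (v (k-1)) b + ((if b ∈ R then 1 else 0) + (if b = v (k-1) then 1 else 0)) := by
    intro b hbW
    obtain ⟨hbV, hbD⟩ := Finset.mem_sdiff.mp hbW
    obtain ⟨i, hi, hbi⟩ := hcover b hbV
    by_cases hik : i = k-1
    · subst hik
      have hbu : b = v (k-1) := by
        by_contra hbu
        exact hbD (Finset.mem_erase.mpr ⟨hbu, hbi⟩)
      rw [hbu, hdxu, HGraph.dist_self, if_neg huH1, if_neg huR, if_pos rfl]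
    · have hbu : b ≠ v (k-1) :=
        fun h => hdisj i (k-1) hi hukk hik b hbi (h ▸ hvH (k-1) hukk)
      by_cases hi1 : i = 1
      · subst hi1
        have hbR : b ∉ R := by
          intro h
          obtain ⟨j, hj, hbj⟩ := Finset.mem_biUnion.mp h
          have hj' := Finset.mem_Ico.mp hj
          exact hdisj 1 j h1kk (by omega) (by omega) b hbi hbj
        rw [if_pos hbi, if_neg hbR, if_neg hbu, hdxb_1 b hbi,
          hdub_all 1 h1kk (by omega) b hbi]
        omega
      · by_cases hikk : k ≤ i
        · have hbR : b ∈ R := Finset.mem_biUnion.mpr ⟨i, Finset.mem_Ico.mpr ⟨hikk, hi⟩, hbi⟩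
          have hb1 : b ∉ (H 1).verts := fun h => hdisj i 1 hi h1kk (by omega) b hbi h
          rw [if_neg hb1, if_pos hbR, if_neg hbu, hdxb_far i hikk hi b hbi,
            hdub_all i hi hik b hbi]
          omega
        · have hb1 : b ∉ (H 1).verts := fun h => hdisj i 1 hi h1kk hi1 b hbi h
          have hbR : b ∉ R := by
            intro h
            obtain ⟨j, hj, hbj⟩ := Finset.mem_biUnion.mp h
            have hj' := Finset.mem_Ico.mp hj
            exact hdisj i j hi (by omega) (by omega) b hbi hbj
          rw [if_neg hb1, if_neg hbR, if_neg hbu, hdxb_mid i (by omega) hi1 b hbi,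
            hdub_all i hi hik b hbi]
  -- summing the pointwise identity
  have hH1W : (H 1).verts ⊆ G.verts \ D := by
    intro b hb
    exact Finset.mem_sdiff.mpr ⟨hHsubV 1 b hb,
      fun hD' => hdisj 1 (k-1) h1kk hukk (by omega) b hb (hDCK b hD')⟩
  have hRW : R ⊆ G.verts \ D := by
    intro b hb
    obtain ⟨j, hj, hbj⟩ := Finset.mem_biUnion.mp hb
    have hj' := Finset.mem_Ico.mp hj
    exact Finset.mem_sdiff.mpr ⟨hHsubV j b hbj,
      fun hD' => hdisj j (k-1) (by omega) hukk (by omega) b hbj (hDCK b hD')⟩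
  have huW : v (k-1) ∈ G.verts \ D := Finset.mem_sdiff.mpr ⟨huV, huD⟩
  have hsum1 : (∑ b ∈ G.verts \ D, if b ∈ (H 1).verts then (1:ℕ) else 0)
      = (H 1).verts.card := by
    rw [Finset.sum_ite_mem, Finset.inter_eq_right.mpr hH1W, Finset.sum_const,
      smul_eq_mul, mul_one]
  have hsum2 : (∑ b ∈ G.verts \ D, if b ∈ R then (1:ℕ) else 0)
      = ∑ i ∈ Finset.Ico k (2*k-2), (H i).verts.card := by
    rw [Finset.sum_ite_mem, Finset.inter_eq_right.mpr hRW, Finset.sum_const,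
      smul_eq_mul, mul_one, hR]
    exact Finset.card_biUnion (fun i hi j hj hij => Finset.disjoint_left.mpr
      (fun a hai haj => absurd (hdisj i j (by have := Finset.mem_Ico.mp hi; omega)
        (by have := Finset.mem_Ico.mp hj; omega) hij a hai haj) not_false))
  have hsum3 : (∑ b ∈ G.verts \ D, if b = v (k-1) then (1:ℕ) else 0) = 1 := by
    rw [Finset.sum_ite_eq' (G.verts \ D) (v (k-1)) (fun _ => (1:ℕ)), if_pos huW]
  have hSI : (∑ b ∈ G.verts \ D, G.dist (v 1) b) + (H 1).verts.card
      = ((∑ b ∈ G.verts \ D, G.dist (v (k-1)) b)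
        + ∑ i ∈ Finset.Ico k (2*k-2), (H i).verts.card) + 1 := by
    have h := Finset.sum_congr rfl PW
    rw [Finset.sum_add_distrib, Finset.sum_add_distrib, Finset.sum_add_distrib,
      hsum1, hsum2, hsum3] at h
    omega
  have hxge : (∑ b ∈ G.verts \ D, G.dist (v (k-1)) b) + 1
      ≤ ∑ b ∈ G.verts \ D, G.dist (v 1) b := by omega
  -- D is nonempty
  have hDsubV : D ⊆ G.verts := fun a ha => hDV a ha
  have hDne : 0 < D.card := by
    obtain ⟨f0, hf0⟩ := hedge
    obtain ⟨hf0G0, hf0CK⟩ := (hHe (k-1) f0).mp hf0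
    have hcard : f0.card = k := hunif f0 ((hG0e f0).mp hf0G0).1
    have hne' : (f0.erase (v (k-1))).Nonempty := by
      by_cases hm : v (k-1) ∈ f0
      · have := Finset.card_erase_of_mem hm
        exact Finset.card_pos.mp (by omega)
      · rw [Finset.erase_eq_of_notMem hm]
        exact Finset.card_pos.mp (by omega)
    obtain ⟨a, ha⟩ := hne'
    exact Finset.card_pos.mpr ⟨a, Finset.mem_erase.mpr
      ⟨(Finset.mem_erase.mp ha).1, hf0CK (Finset.mem_erase.mp ha).2⟩⟩
  -- block comparisons
  have hWW : (∑ a ∈ G.verts \ D, ∑ b ∈ G.verts \ D, G'.dist a b)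
      = ∑ a ∈ G.verts \ D, ∑ b ∈ G.verts \ D, G.dist a b :=
    Finset.sum_congr rfl (fun a ha => Finset.sum_congr rfl (fun b hb =>
      F1 a b (Finset.mem_sdiff.mp ha).1 (Finset.mem_sdiff.mp hb).1
        (Finset.mem_sdiff.mp ha).2 (Finset.mem_sdiff.mp hb).2))
  have hDD : (∑ a ∈ D, ∑ b ∈ D, G'.dist a b) = ∑ a ∈ D, ∑ b ∈ D, G.dist a b :=
    Finset.sum_congr rfl (fun a ha => Finset.sum_congr rfl (fun b hb => F3 a ha b hb))
  have hDWg : ∀ a ∈ D, (∑ b ∈ G.verts \ D, G.dist a b)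
      = (∑ _b ∈ G.verts \ D, (H (k-1)).dist a (v (k-1)))
        + ∑ b ∈ G.verts \ D, G.dist (v (k-1)) b := by
    intro a ha
    rw [← Finset.sum_add_distrib]
    exact Finset.sum_congr rfl (fun b hb =>
      F2G a ha b (Finset.mem_sdiff.mp hb).1 (Finset.mem_sdiff.mp hb).2)
  have hDWg' : ∀ a ∈ D, (∑ b ∈ G.verts \ D, G'.dist a b)
      = (∑ _b ∈ G.verts \ D, (H (k-1)).dist a (v (k-1)))
        + ∑ b ∈ G.verts \ D, G.dist (v 1) b := by
    intro a ha
    rw [← Finset.sum_add_distrib]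
    exact Finset.sum_congr rfl (fun b hb =>
      F2G' a ha b (Finset.mem_sdiff.mp hb).1 (Finset.mem_sdiff.mp hb).2)
  have hDWle : ∀ a ∈ D, (∑ b ∈ G.verts \ D, G.dist a b) + 1
      ≤ ∑ b ∈ G.verts \ D, G'.dist a b := by
    intro a ha
    rw [hDWg a ha, hDWg' a ha]
    omega
  have hDWsum : (∑ a ∈ D, ∑ b ∈ G.verts \ D, G.dist a b) + D.card
      ≤ ∑ a ∈ D, ∑ b ∈ G.verts \ D, G'.dist a b := by
    have h1 := Finset.sum_le_sum hDWle
    rw [Finset.sum_add_distrib, Finset.sum_const, smul_eq_mul, mul_one] at h1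
    exact h1
  have hswapG : (∑ a ∈ G.verts \ D, ∑ b ∈ D, G.dist a b)
      = ∑ a ∈ D, ∑ b ∈ G.verts \ D, G.dist a b := by
    rw [Finset.sum_comm]
    exact Finset.sum_congr rfl (fun a _ => Finset.sum_congr rfl
      (fun b _ => HGraph.dist_comm G b a))
  have hswapG' : (∑ a ∈ G.verts \ D, ∑ b ∈ D, G'.dist a b)
      = ∑ a ∈ D, ∑ b ∈ G.verts \ D, G'.dist a b := by
    rw [Finset.sum_comm]
    exact Finset.sum_congr rfl (fun a _ => Finset.sum_congr rfl
      (fun b _ => HGraph.dist_comm G' b a))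
  -- splitting the double sums
  have splitG : (∑ a ∈ G.verts, ∑ b ∈ G.verts, G.dist a b)
      = (((∑ a ∈ G.verts \ D, ∑ b ∈ G.verts \ D, G.dist a b)
        + ∑ a ∈ G.verts \ D, ∑ b ∈ D, G.dist a b)
        + ((∑ a ∈ D, ∑ b ∈ G.verts \ D, G.dist a b) + ∑ a ∈ D, ∑ b ∈ D, G.dist a b)) := by
    rw [← Finset.sum_sdiff hDsubV (f := fun a => ∑ b ∈ G.verts, G.dist a b)]
    congr 1
    · exact (Finset.sum_congr rfl (fun a _ => (Finset.sum_sdiff hDsubV).symm)).trans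
        Finset.sum_add_distrib
    · exact (Finset.sum_congr rfl (fun a _ => (Finset.sum_sdiff hDsubV).symm)).trans
        Finset.sum_add_distrib
  have splitG' : (∑ a ∈ G.verts, ∑ b ∈ G.verts, G'.dist a b)
      = (((∑ a ∈ G.verts \ D, ∑ b ∈ G.verts \ D, G'.dist a b)
        + ∑ a ∈ G.verts \ D, ∑ b ∈ D, G'.dist a b)
        + ((∑ a ∈ D, ∑ b ∈ G.verts \ D, G'.dist a b) + ∑ a ∈ D, ∑ b ∈ D, G'.dist a b)) := by
    rw [← Finset.sum_sdiff hDsubV (f := fun a => ∑ b ∈ G.verts, G'.dist a b)]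
    congr 1
    · exact (Finset.sum_congr rfl (fun a _ => (Finset.sum_sdiff hDsubV).symm)).trans
        Finset.sum_add_distrib
    · exact (Finset.sum_congr rfl (fun a _ => (Finset.sum_sdiff hDsubV).symm)).trans
        Finset.sum_add_distrib
  have key : (∑ a ∈ G.verts, ∑ b ∈ G.verts, G.dist a b) + 2
      ≤ ∑ a ∈ G.verts, ∑ b ∈ G.verts, G'.dist a b := by
    omega
  have ht1 : G.trans = (∑ a ∈ G.verts, ∑ b ∈ G.verts, G.dist a b) / 2 := rfl
  have ht2 : G'.trans = (∑ a ∈ G.verts, ∑ b ∈ G.verts, G'.dist a b) / 2 := rfl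
  rw [gt_iff_lt, ht1, ht2]
  omega
end

section
/- Let G be a connected k-uniform hypergraph with at least one edge and u ∈ V(G), and for integers p ≥ q ≥ 1 let G_u(p,q) be the hypergraph obtained from G by attaching pendant paths of lengths p and q at u. Then σ(G_u(p,q)) < σ(G_u(p+1, q−1)). -/
open Finset

/-- A (finite) hypergraph: a finite vertex set together with a finite family of edges,
each edge being a finite set of vertices. -/
structure FinHypergraph (α : Type) where
  verts : Finset α
  edges : Finset (Finset α)

namespace FinHypergraph

variable {α β : Type}

/-- Every edge is a subset of the vertex set. -/
def Good (G : FinHypergraph α) : Prop := ∀ e ∈ G.edges, e ⊆ G.verts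

/-- `k`-uniform: every edge has cardinality `k`. -/
def Uniform (G : FinHypergraph α) (k : ℕ) : Prop := ∀ e ∈ G.edges, e.card = k

/-- A walk of length `p` from `u` to `v`: an alternating sequence of vertices and edges,
with consecutive vertices distinct and both lying in the connecting edge. -/
inductive Walk (G : FinHypergraph α) : α → α → ℕ → Prop
  | nil (v : α) : Walk G v v 0
  | cons {u w : α} (v : α) {p : ℕ} (e : Finset α) (he : e ∈ G.edges)
      (hu : u ∈ e) (hv : v ∈ e) (hne : u ≠ v) (hw : Walk G v w p) :
      Walk G u w (p + 1)

def Connected (G : FinHypergraph α) : Prop :=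
  ∀ u ∈ G.verts, ∀ v ∈ G.verts, ∃ p, G.Walk u v p

/-- Distance: length of a shortest walk (equivalently, of a shortest path). -/
noncomputable def dist (G : FinHypergraph α) (u v : α) : ℕ := sInf {p | G.Walk u v p}

/-- `σ_G(u) = ∑_{v ∈ V(G)} d_G(u,v)`. -/
noncomputable def transFrom [DecidableEq α] (G : FinHypergraph α) (u : α) : ℕ :=
  ∑ v ∈ G.verts, G.dist u v

/-- The transmission `σ(G)`: the sum of distances over all unordered pairs of
distinct vertices (distances being symmetric, this is half the sum over ordered pairs). -/
noncomputable def trans [DecidableEq α] (G : FinHypergraph α) : ℕ :=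
  (∑ u ∈ G.verts, ∑ v ∈ G.verts, G.dist u v) / 2

/-- `σ_G(A,B) = ∑_{a ∈ A, b ∈ B} d_G(a,b)`. -/
noncomputable def transBetween [DecidableEq α] (G : FinHypergraph α) (A B : Finset α) : ℕ :=
  ∑ a ∈ A, ∑ b ∈ B, G.dist a b

/-- The diameter: the maximum distance between two vertices. -/
noncomputable def diam (G : FinHypergraph α) : ℕ :=
  G.verts.sup fun u => G.verts.sup fun v => G.dist u v

/-- The degree of a vertex: the number of edges containing it. -/
def degree [DecidableEq α] (G : FinHypergraph α) (v : α) : ℕ :=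
  (G.edges.filter fun e => v ∈ e).card

/-- A cycle of length `n+2` in `G`: vertices `v 0, …, v (n+1)` (all distinct) and
distinct edges `e 0, …, e (n+1)` of `G` with `v i, v (i+1) ∈ e i` (indices mod `n+2`). -/
structure Cycle (G : FinHypergraph α) where
  n : ℕ
  v : Fin (n + 2) → α
  e : Fin (n + 2) → Finset α
  he : ∀ i, e i ∈ G.edges
  einj : Function.Injective e
  vinj : Function.Injective v
  mem_fst : ∀ i, v i ∈ e i
  mem_snd : ∀ i, v (i + 1) ∈ e i

/-- The length of a cycle (its number of edges). -/
def Cycle.length {G : FinHypergraph α} (C : G.Cycle) : ℕ := C.n + 2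

/-- The set of edges of a cycle. -/
def Cycle.edgeFinset [DecidableEq α] {G : FinHypergraph α} (C : G.Cycle) : Finset (Finset α) :=
  Finset.univ.image C.e

/-- Unicyclic: connected with exactly one cycle (all cycles have the same edge set). -/
def Unicyclic [DecidableEq α] (G : FinHypergraph α) : Prop :=
  G.Connected ∧ Nonempty G.Cycle ∧ ∀ C C' : G.Cycle, C.edgeFinset = C'.edgeFinset

/-- Isomorphism of hypergraphs. -/
def Isomorphic [DecidableEq β] (G : FinHypergraph α) (H : FinHypergraph β) : Prop :=
  ∃ f : α → β, Set.BijOn f ↑G.verts ↑H.verts ∧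
    ∀ e : Finset α, e ⊆ G.verts → (e ∈ G.edges ↔ e.image f ∈ H.edges)

/-- Rename the vertices of a hypergraph along `f`. -/
def mapHG [DecidableEq β] (f : α → β) (G : FinHypergraph α) : FinHypergraph β :=
  ⟨G.verts.image f, G.edges.image (Finset.image f)⟩

def unionHG [DecidableEq α] (G H : FinHypergraph α) : FinHypergraph α :=
  ⟨G.verts ∪ H.verts, G.edges ∪ H.edges⟩

def unionMany [DecidableEq α] {n : ℕ} (Hs : Fin n → FinHypergraph α) : FinHypergraph α :=
  ⟨Finset.univ.biUnion fun i => (Hs i).verts, Finset.univ.biUnion fun i => (Hs i).edges⟩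

/-- Move the edge `e` from `u` to `x`: replace `e` by `(e \ {u}) ∪ {x}`. -/
def moveEdge [DecidableEq α] (G : FinHypergraph α) (e : Finset α) (u x : α) : FinHypergraph α :=
  ⟨G.verts, insert (insert x (e.erase u)) (G.edges.erase e)⟩

/-- Move each edge of `S` from `u` to `x`. -/
def moveEdges [DecidableEq α] (G : FinHypergraph α) (S : Finset (Finset α)) (u x : α) :
    FinHypergraph α :=
  ⟨G.verts, (G.edges \ S) ∪ S.image fun e => insert x (e.erase u)⟩

/-- Delete a set of edges (keeping all vertices). -/
def deleteEdges [DecidableEq α] (G : FinHypergraph α) (S : Finset (Finset α)) : FinHypergraph α :=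
  ⟨G.verts, G.edges \ S⟩

open Classical in
/-- The vertex set of the component of `G` containing `u`. -/
noncomputable def component (G : FinHypergraph α) (u : α) : Finset α :=
  G.verts.filter fun x => ∃ p, G.Walk u x p

/-- The component of `G` containing `u`, as a hypergraph. -/
noncomputable def componentHG [DecidableEq α] (G : FinHypergraph α) (u : α) : FinHypergraph α :=
  ⟨G.component u, G.edges.filter fun e => e ⊆ G.component u⟩

/-- The `k`-uniform loose cycle with `m` edges `e_0, …, e_{m-1}`,
consecutive edges sharing exactly one vertex. -/
def looseCycle (m k : ℕ) : FinHypergraph ℕ where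
  verts := Finset.range (m * (k - 1))
  edges := (Finset.range m).image fun i =>
    (Finset.range k).image fun j => (i * (k - 1) + j) % (m * (k - 1))

/-- `C^k_2(t,s)`: two `k`-edges sharing exactly the two vertices `0,1`, with a hyperstar of
`t` edges attached at `0` and a hyperstar of `s` edges attached at `1`. -/
def Ck2 (k t s : ℕ) : FinHypergraph ℕ where
  verts := Finset.range ((t + s + 2) * (k - 1))
  edges :=
    {Finset.range k, insert 0 (insert 1 (Finset.Ico k (2 * k - 2)))} ∪
    ((Finset.range t).image fun i =>
      insert 0 (Finset.Ico (2 * k - 2 + i * (k - 1)) (2 * k - 2 + (i + 1) * (k - 1)))) ∪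
    ((Finset.range s).image fun j =>
      insert 1 (Finset.Ico (2 * k - 2 + t * (k - 1) + j * (k - 1))
        (2 * k - 2 + t * (k - 1) + (j + 1) * (k - 1))))

/-- `C̃^k_2(p,q)`: the loose 2-cycle on the two `k`-edges `{0,…,k-1}` and
`{0,1} ∪ {k,…,2k-3}` (sharing exactly `0,1`), with a pendant path of length `p`
attached at the degree-one vertex `2` of the first edge and a pendant path of length `q`
attached at the degree-one vertex `k` of the second edge. -/
def Ctilde (k p q : ℕ) : FinHypergraph ℕ where
  verts := Finset.range ((p + q + 2) * (k - 1))
  edges :=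
    {Finset.range k, insert 0 (insert 1 (Finset.Ico k (2 * k - 2)))} ∪
    ((Finset.range p).image fun i =>
      insert (if i = 0 then 2 else 2 * k - 2 + i * (k - 1) - 1)
        (Finset.Ico (2 * k - 2 + i * (k - 1)) (2 * k - 2 + (i + 1) * (k - 1)))) ∪
    ((Finset.range q).image fun j =>
      insert (if j = 0 then k else 2 * k - 2 + p * (k - 1) + j * (k - 1) - 1)
        (Finset.Ico (2 * k - 2 + p * (k - 1) + j * (k - 1))
          (2 * k - 2 + p * (k - 1) + (j + 1) * (k - 1))))

/-- The triangle with one pendant edge, `C^2_3(1,0,0)`. -/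
def triPendant : FinHypergraph ℕ :=
  ⟨Finset.range 4, {{0, 1}, {1, 2}, {0, 2}, {0, 3}}⟩

/-- `G_{u,v}(p,q)`: attach a loose pendant path of `p` `k`-edges at `u` and a loose pendant
path of `q` `k`-edges at `v`, using fresh vertices (the `Sum.inr` side). -/
def attachTwoPathsAt [DecidableEq α] (k : ℕ) (G : FinHypergraph α) (u v : α) (p q : ℕ) :
    FinHypergraph (α ⊕ ℕ) where
  verts := G.verts.image Sum.inl ∪ (Finset.range ((p + q) * (k - 1))).image Sum.inr
  edges :=
    G.edges.image (Finset.image Sum.inl) ∪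
    ((Finset.range p).image fun i =>
      insert (if i = 0 then Sum.inl u else Sum.inr (i * (k - 1) - 1))
        ((Finset.Ico (i * (k - 1)) ((i + 1) * (k - 1))).image Sum.inr)) ∪
    ((Finset.range q).image fun j =>
      insert (if j = 0 then Sum.inl v else Sum.inr (p * (k - 1) + j * (k - 1) - 1))
        ((Finset.Ico (p * (k - 1) + j * (k - 1)) (p * (k - 1) + (j + 1) * (k - 1))).image
          Sum.inr))

/-- `G_u(p,q)`: attach two loose pendant paths, of lengths `p` and `q`, at `u`. -/
def attachTwoPaths [DecidableEq α] (k : ℕ) (G : FinHypergraph α) (u : α) (p q : ℕ) :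
    FinHypergraph (α ⊕ ℕ) :=
  attachTwoPathsAt k G u u p q

/-- `G_{e,s}(H_1,…,H_{k-1})`: given a pendant edge `e = {w 0, …, w (k-1)}` of `G` at
`w (k-1)`, identify the root `vr i` of `H i` with `w (k-1)` for (0-based) `i < s`, and with
`w i` for `i ≥ s`. -/
def Ges [DecidableEq α] (G : FinHypergraph α) (k : ℕ) (hk : 2 ≤ k) (w : Fin k → α)
    (H : Fin (k - 1) → FinHypergraph α) (vr : Fin (k - 1) → α) (s : ℕ) : FinHypergraph α :=
  unionHG G (unionMany fun i : Fin (k - 1) =>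
    mapHG (Function.update id (vr i)
      (if (i : ℕ) < s then w ⟨k - 1, by omega⟩ else w (Fin.castLE (Nat.sub_le k 1) i))) (H i))

variable {α : Type}

theorem walk_append {G : FinHypergraph α} {a b c : α} {s t : ℕ}
    (h1 : G.Walk a b s) (h2 : G.Walk b c t) : G.Walk a c (s + t) := by
  induction h1 with
  | nil v => simpa using h2
  | cons v e he hu hv hne hw ih =>
    have := Walk.cons v e he hu hv hne (ih h2)
    convert this using 1
    omega

theorem walk_reverse {G : FinHypergraph α} {a b : α} {s : ℕ}
    (h : G.Walk a b s) : G.Walk b a s := by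
  induction h with
  | cons v e he hu hv hne hw ih =>
    exact walk_append ih (Walk.cons _ e he hv hu (Ne.symm hne) (Walk.nil _))
  | nil v => exact Walk.nil v

theorem walk_single {G : FinHypergraph α} {a b : α} {e : Finset α} (he : e ∈ G.edges)
    (ha : a ∈ e) (hb : b ∈ e) (hne : a ≠ b) : G.Walk a b 1 :=
  Walk.cons b e he ha hb hne (Walk.nil b)

theorem dist_le' {G : FinHypergraph α} {a b : α} {s : ℕ} (h : G.Walk a b s) :
    G.dist a b ≤ s := Nat.sInf_le h

theorem dist_self' (G : FinHypergraph α) (a : α) : G.dist a a = 0 :=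
  Nat.le_zero.mp (dist_le' (Walk.nil a))

theorem walk_dist {G : FinHypergraph α} {a b : α} (h : ∃ s, G.Walk a b s) :
    G.Walk a b (G.dist a b) := Nat.sInf_mem h

/-- one-step triangle -/
theorem dist_le_step {G : FinHypergraph α} {a v b : α} {e : Finset α} (he : e ∈ G.edges)
    (ha : a ∈ e) (hv : v ∈ e) (h : ∃ s, G.Walk v b s) :
    G.dist a b ≤ G.dist v b + 1 := by
  rcases eq_or_ne a v with rfl | hne
  · exact le_trans (dist_le' (walk_dist h)) (by omega)
  · have w : G.Walk a b (1 + G.dist v b) :=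
      walk_append (walk_single he ha hv hne) (walk_dist h)
    exact le_trans (dist_le' w) (by omega)
section Dev
variable {α : Type} [DecidableEq α]

/-- block index of a path coordinate -/
def blkf (n p j : ℕ) : ℕ := if j < p*n then j/n else (j - p*n)/n
/-- side of a path coordinate -/
def sidf (n p j : ℕ) : ℕ := if j < p*n then 0 else 1

def DDf (n p : ℕ) (j j' : ℕ) : ℕ :=
  if sidf n p j = sidf n p j' ∧ blkf n p j = blkf n p j' ∧ j % n = j' % n then 0
  else if sidf n p j = sidf n p j' then
    (if blkf n p j = blkf n p j' then 1
     else if blkf n p j < blkf n p j' then blkf n p j' - blkf n p j + (if j % n = n-1 then 0 else 1)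
     else blkf n p j - blkf n p j' + (if j' % n = n-1 then 0 else 1))
  else (blkf n p j + 1) + (blkf n p j' + 1)

noncomputable def Df (G : FinHypergraph α) (u : α) (n p : ℕ) : α ⊕ ℕ → α ⊕ ℕ → ℕ
  | Sum.inl a, Sum.inl b => G.dist a b
  | Sum.inl a, Sum.inr j => G.dist a u + (blkf n p j + 1)
  | Sum.inr j, Sum.inl b => (blkf n p j + 1) + G.dist u b
  | Sum.inr j, Sum.inr j' => DDf n p j j'

theorem side_iff {n p j i r : ℕ} (hj : j = i*n + r) (hr : r < n) : j < p*n ↔ i < p := by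
  subst hj
  constructor
  · intro h
    by_contra hip
    have : p*n ≤ i*n := Nat.mul_le_mul_right n (by omega)
    omega
  · intro h
    have : (i+1)*n ≤ p*n := Nat.mul_le_mul_right n (by omega)
    have : i*n + n ≤ p*n := by rw [add_one_mul] at this; omega
    omega

theorem pos_eq {n j i r : ℕ} (hj : j = i*n + r) (hr : r < n) : j % n = r := by
  subst hj; rw [mul_comm, Nat.mul_add_mod, Nat.mod_eq_of_lt hr]

theorem blk_lt {n p j i r : ℕ} (hj : j = i*n + r) (hr : r < n) (hi : i < p) :
    blkf n p j = i := by
  have hs := (side_iff hj hr).mpr hi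
  have hd : j / n = i := by
    subst hj
    rw [add_comm, mul_comm, Nat.add_mul_div_left _ _ (show 0 < n by omega),
      Nat.div_eq_of_lt hr, zero_add]
  rw [blkf, if_pos hs, hd]

theorem blk_ge {n p j i r : ℕ} (hj : j = i*n + r) (hr : r < n) (hi : p ≤ i) :
    blkf n p j = i - p := by
  have hs : ¬ j < p*n := (side_iff hj hr).not.mpr (show ¬ i < p by omega)
  rw [blkf, if_neg hs]
  have h2 : j - p*n = (i-p)*n + r := by
    subst hj; rw [Nat.sub_mul]
    have : p*n ≤ i*n := Nat.mul_le_mul_right n hi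
    omega
  rw [h2, add_comm, mul_comm, Nat.add_mul_div_left _ _ (show 0 < n by omega),
    Nat.div_eq_of_lt hr, zero_add]

theorem sid_lt {n p j i r : ℕ} (hj : j = i*n + r) (hr : r < n) (hi : i < p) :
    sidf n p j = 0 := by rw [sidf, if_pos ((side_iff hj hr).mpr hi)]

theorem sid_ge {n p j i r : ℕ} (hj : j = i*n + r) (hr : r < n) (hi : p ≤ i) :
    sidf n p j = 1 := by rw [sidf, if_neg ((side_iff hj hr).not.mpr (show ¬ i < p by omega))]

/-- decomposition of an arbitrary coordinate -/
theorem coord_decomp {n : ℕ} (hn : 1 ≤ n) (j : ℕ) {M : ℕ} (hj : j < M * n) :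
    ∃ i r, j = i*n + r ∧ r < n ∧ i < M := by
  refine ⟨j / n, j % n, by rw [mul_comm]; exact (Nat.div_add_mod j n).symm,
    Nat.mod_lt _ (by omega), ?_⟩
  by_contra h
  have : M * n ≤ (j/n) * n := Nat.mul_le_mul_right n (by omega)
  have : j / n * n ≤ j := Nat.div_mul_le_self j n
  omega

end Dev
section Dev2
variable {α : Type} [DecidableEq α]

def pathEdge (u : α) (n o : ℕ) (i : ℕ) : Finset (α ⊕ ℕ) :=
  insert (if i = 0 then Sum.inl u else Sum.inr (o + i*n - 1))
    ((Finset.Ico (o + i*n) (o + (i+1)*n)).image Sum.inr)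

theorem attach_verts (G : FinHypergraph α) (u : α) (n p q : ℕ) :
    (attachTwoPaths (n+1) G u p q).verts
      = G.verts.image Sum.inl ∪ (Finset.range ((p+q)*n)).image Sum.inr := by
  simp [attachTwoPaths, attachTwoPathsAt]

theorem attach_edges (G : FinHypergraph α) (u : α) (n p q : ℕ) :
    (attachTwoPaths (n+1) G u p q).edges
      = G.edges.image (Finset.image Sum.inl)
        ∪ (Finset.range p).image (pathEdge u n 0)
        ∪ (Finset.range q).image (pathEdge u n (p*n)) := by
  simp only [attachTwoPaths, attachTwoPathsAt, Nat.add_sub_cancel, pathEdge]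
  congr 1
  congr 1
  apply Finset.image_congr
  intro i _
  simp [pathEdge]

theorem mem_pathEdge {u : α} {n o i : ℕ} {x : α ⊕ ℕ} :
    x ∈ pathEdge u n o i ↔
      (x = (if i = 0 then Sum.inl u else Sum.inr (o + i*n - 1))
        ∨ ∃ t, (o + i*n ≤ t ∧ t < o + i*n + n) ∧ x = Sum.inr t) := by
  simp only [pathEdge, Finset.mem_insert, Finset.mem_image, Finset.mem_Ico]
  constructor
  · rintro (h | ⟨t, ⟨h1, h2⟩, rfl⟩)
    · exact Or.inl h
    · exact Or.inr ⟨t, ⟨h1, by rw [add_one_mul] at h2; omega⟩, rfl⟩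
  · rintro (h | ⟨t, ⟨h1, h2⟩, rfl⟩)
    · exact Or.inl h
    · exact Or.inr ⟨t, ⟨h1, by rw [add_one_mul]; omega⟩, rfl⟩

end Dev2
section Dev3
variable {α : Type} [DecidableEq α] {W : FinHypergraph (α ⊕ ℕ)} {u : α} {n o m : ℕ}

theorem nle_mul {n i : ℕ} (h : 1 ≤ i) : n ≤ i*n := by
  have := Nat.mul_le_mul_right n h
  simpa using this

theorem anchor_mem {i : ℕ} (hi : i ≠ 0) :
    Sum.inr (o + i*n - 1) ∈ pathEdge u n o i := by
  rw [pathEdge, if_neg hi]; exact Finset.mem_insert_self _ _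

theorem anchor0_mem : Sum.inl u ∈ pathEdge u n o 0 := by
  rw [pathEdge, if_pos rfl]; exact Finset.mem_insert_self _ _

theorem block_mem {i t : ℕ} (h1 : o + i*n ≤ t) (h2 : t < o + i*n + n) :
    (Sum.inr t : α ⊕ ℕ) ∈ pathEdge u n o i :=
  mem_pathEdge.mpr (Or.inr ⟨t, ⟨h1, h2⟩, rfl⟩)

theorem walk_conn (hE : ∀ i < m, pathEdge u n o i ∈ W.edges) (hn : 1 ≤ n) :
    ∀ i, 1 ≤ i → i ≤ m → W.Walk (Sum.inl u) (Sum.inr (o + i*n - 1)) i := by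
  intro i
  induction i with
  | zero => omega
  | succ i ih =>
    intro _ h2
    rcases Nat.eq_zero_or_pos i with rfl | hi
    · exact walk_single (hE 0 (by omega)) anchor0_mem
        (block_mem (t := o + 1*n - 1) (by simp only [Nat.zero_mul, Nat.one_mul, Nat.add_zero]; omega)
          (by simp only [Nat.zero_mul, Nat.one_mul, Nat.add_zero]; omega)) (by simp)
    · have hw := ih hi (by omega)
      have hstep : W.Walk (Sum.inr (o + i*n - 1)) (Sum.inr (o + (i+1)*n - 1)) 1 := by
        refine walk_single (hE i (by omega)) (anchor_mem (by omega)) ?_ ?_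
        · exact block_mem (by rw [add_one_mul]; omega) (by rw [add_one_mul]; omega)
        · have hin := nle_mul (n := n) hi
          simp only [ne_eq, Sum.inr.injEq, add_one_mul]; omega
      exact walk_append hw hstep

theorem walk_to_block (hE : ∀ i < m, pathEdge u n o i ∈ W.edges) (hn : 1 ≤ n)
    {i t : ℕ} (hi : i < m) (h1 : o + i*n ≤ t) (h2 : t < o + i*n + n) :
    W.Walk (Sum.inl u) (Sum.inr t) (i+1) := by
  rcases Nat.eq_zero_or_pos i with rfl | hip
  · exact walk_single (hE 0 hi) anchor0_mem (block_mem h1 h2) (by simp)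
  · have hw := walk_conn hE hn i hip (by omega)
    have hstep : W.Walk (Sum.inr (o + i*n - 1)) (Sum.inr t) 1 := by
      refine walk_single (hE i hi) (anchor_mem (by omega)) (block_mem h1 h2) ?_
      have hin := nle_mul (n := n) hip
      simp only [ne_eq, Sum.inr.injEq]; omega
    exact walk_append hw hstep

theorem walk_conn_conn (hE : ∀ i < m, pathEdge u n o i ∈ W.edges) (hn : 1 ≤ n)
    {a : ℕ} (ha : 1 ≤ a) :
    ∀ b, a ≤ b → b ≤ m → W.Walk (Sum.inr (o + a*n - 1)) (Sum.inr (o + b*n - 1)) (b - a) := by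
  intro b
  induction b with
  | zero => omega
  | succ b ih =>
    intro h1 h2
    rcases Nat.eq_or_lt_of_le h1 with rfl | hab
    · simpa using Walk.nil _
    · have hw := ih (by omega) (by omega)
      have hstep : W.Walk (Sum.inr (o + b*n - 1)) (Sum.inr (o + (b+1)*n - 1)) 1 := by
        refine walk_single (hE b (by omega)) (anchor_mem (by omega)) ?_ ?_
        · exact block_mem (by rw [add_one_mul]; omega) (by rw [add_one_mul]; omega)
        · have hin := nle_mul (n := n) (show 1 ≤ b by omega)
          simp only [ne_eq, Sum.inr.injEq, add_one_mul]; omega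
      have := walk_append hw hstep
      convert this using 1
      omega

theorem walk_down (hE : ∀ i < m, pathEdge u n o i ∈ W.edges) (hn : 1 ≤ n)
    {a i t : ℕ} (ha : 1 ≤ a) (hai : a ≤ i) (hi : i < m)
    (h1 : o + i*n ≤ t) (h2 : t < o + i*n + n) :
    W.Walk (Sum.inr (o + a*n - 1)) (Sum.inr t) (i + 1 - a) := by
  have hw := walk_conn_conn hE hn ha i hai (by omega)
  have hstep : W.Walk (Sum.inr (o + i*n - 1)) (Sum.inr t) 1 := by
    refine walk_single (hE i hi) (anchor_mem (by omega)) (block_mem h1 h2) ?_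
    have hin := nle_mul (n := n) (show 1 ≤ i by omega)
    simp only [ne_eq, Sum.inr.injEq]; omega
  have := walk_append hw hstep
  convert this using 1
  omega

theorem walk_map {G : FinHypergraph α} (hGE : ∀ e ∈ G.edges, e.image Sum.inl ∈ W.edges)
    {a b : α} {s : ℕ} (h : G.Walk a b s) : W.Walk (Sum.inl a) (Sum.inl b) s := by
  induction h with
  | nil v => exact Walk.nil _
  | cons v e he hu hv hne hw ih =>
    exact Walk.cons (Sum.inl v) (e.image Sum.inl) (hGE e he)
      (Finset.mem_image_of_mem _ hu) (Finset.mem_image_of_mem _ hv) (by simp [hne]) ih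

end Dev3

section Dev4
variable {α : Type} [DecidableEq α] (G : FinHypergraph α) (u : α) (n p q : ℕ)

theorem hedgeG : ∀ e ∈ G.edges, e.image Sum.inl ∈ (attachTwoPaths (n+1) G u p q).edges := by
  intro e he
  rw [attach_edges]
  exact Finset.mem_union_left _ (Finset.mem_union_left _ (Finset.mem_image_of_mem _ he))

theorem hedgeA : ∀ i < p, pathEdge u n 0 i ∈ (attachTwoPaths (n+1) G u p q).edges := by
  intro i hi
  rw [attach_edges]
  exact Finset.mem_union_left _ (Finset.mem_union_right _
    (Finset.mem_image_of_mem _ (Finset.mem_range.mpr hi)))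

theorem hedgeB : ∀ i < q, pathEdge u n (p*n) i ∈ (attachTwoPaths (n+1) G u p q).edges := by
  intro i hi
  rw [attach_edges]
  exact Finset.mem_union_right _ (Finset.mem_image_of_mem _ (Finset.mem_range.mpr hi))

end Dev4
section Dev5
variable {α : Type} [DecidableEq α]

theorem dist_comm' {G : FinHypergraph α} {a b : α} (h : ∃ s, G.Walk a b s) :
    G.dist a b = G.dist b a := by
  obtain ⟨s, hs⟩ := h
  apply le_antisymm
  · exact le_trans (dist_le' (walk_reverse (walk_dist ⟨s, walk_reverse hs⟩))) le_rfl
  · exact dist_le' (walk_reverse (walk_dist ⟨s, hs⟩))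

theorem coord_unique {n i r i' r' : ℕ} (h : i*n+r = i'*n+r') (hr : r < n)
    (hr' : r' < n) : i = i' ∧ r = r' := by
  have h1 : (i*n+r) % n = r := pos_eq rfl hr
  have h2 : (i'*n+r') % n = r' := pos_eq rfl hr'
  rw [h] at h1
  have hrr : r = r' := by omega
  subst hrr
  have : i*n = i'*n := by omega
  exact ⟨Nat.eq_of_mul_eq_mul_right (by omega) this, rfl⟩

theorem DDf_comm {n p j j' : ℕ} : DDf n p j j' = DDf n p j' j := by
  simp only [DDf]
  split_ifs <;> omega

theorem DDf_evalAA {n p j j' i r i' r' : ℕ} (hj : j = i*n+r) (hr : r < n)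
    (hj' : j' = i'*n+r') (hr' : r' < n) (hi : i < p) (hi' : i' < p) :
    DDf n p j j' = if i = i' ∧ r = r' then 0 else if i = i' then 1
      else if i < i' then i'-i+(if r = n-1 then 0 else 1)
      else i-i'+(if r' = n-1 then 0 else 1) := by
  have e1 := blk_lt hj hr hi
  have e2 := blk_lt hj' hr' hi'
  have e3 := sid_lt (p := p) hj hr hi
  have e4 := sid_lt (p := p) hj' hr' hi'
  have e5 := pos_eq hj hr
  have e6 := pos_eq hj' hr'
  simp only [DDf, e1, e2, e3, e4, e5, e6]
  norm_num

theorem DDf_evalBB {n p j j' i r i' r' : ℕ} (hj : j = i*n+r) (hr : r < n)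
    (hj' : j' = i'*n+r') (hr' : r' < n) (hi : p ≤ i) (hi' : p ≤ i') :
    DDf n p j j' = if i = i' ∧ r = r' then 0 else if i = i' then 1
      else if i < i' then i'-i+(if r = n-1 then 0 else 1)
      else i-i'+(if r' = n-1 then 0 else 1) := by
  have e1 := blk_ge hj hr hi
  have e2 := blk_ge hj' hr' hi'
  have e3 := sid_ge (p := p) hj hr hi
  have e4 := sid_ge (p := p) hj' hr' hi'
  have e5 := pos_eq hj hr
  have e6 := pos_eq hj' hr'
  simp only [DDf, e1, e2, e3, e4, e5, e6]
  norm_num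
  split_ifs <;> omega

theorem DDf_evalAB {n p j j' i r i' r' : ℕ} (hj : j = i*n+r) (hr : r < n)
    (hj' : j' = i'*n+r') (hr' : r' < n) (hi : i < p) (hi' : p ≤ i') :
    DDf n p j j' = (i+1) + ((i'-p)+1) := by
  have e1 := blk_lt hj hr hi
  have e2 := blk_ge hj' hr' hi'
  have e3 := sid_lt (p := p) hj hr hi
  have e4 := sid_ge (p := p) hj' hr' hi'
  simp only [DDf, e1, e2, e3, e4]
  norm_num

theorem walk_real_same {W : FinHypergraph (α ⊕ ℕ)} {u : α} {n o m : ℕ}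
    (hE : ∀ i < m, pathEdge u n o i ∈ W.edges) (hn : 1 ≤ n)
    {b b' r r' : ℕ} (hbb : b ≤ b') (hb' : b' < m) (hr : r < n) (hr' : r' < n) :
    W.Walk (Sum.inr (o + b*n + r)) (Sum.inr (o + b'*n + r'))
      (if b = b' ∧ r = r' then 0 else if b = b' then 1
        else b' - b + (if r = n-1 then 0 else 1)) := by
  rcases Nat.eq_or_lt_of_le hbb with rfl | hlt
  · rcases eq_or_ne r r' with rfl | hne
    · simpa using Walk.nil _
    · rw [if_neg (by simp [hne]), if_pos rfl]
      exact walk_single (hE b hb') (block_mem (by omega) (by omega))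
        (block_mem (by omega) (by omega)) (by simp only [ne_eq, Sum.inr.injEq]; omega)
  · rcases eq_or_ne r (n-1) with rfl | hne
    · have hx : o + b*n + (n-1) = o + (b+1)*n - 1 := by rw [add_one_mul]; omega
      rw [hx, if_neg (by omega), if_neg (by omega), if_pos rfl]
      have := walk_down hE hn (a := b+1) (i := b') (t := o + b'*n + r')
        (by omega) (by omega) hb' (by omega) (by omega)
      convert this using 1
      omega
    · rw [if_neg (by omega), if_neg (by omega), if_neg hne]
      have hstep : W.Walk (Sum.inr (o + b*n + r)) (Sum.inr (o + (b+1)*n - 1)) 1 := by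
        refine walk_single (hE b (by omega)) (block_mem (by omega) (by omega))
          (block_mem (by rw [add_one_mul]; omega) (by rw [add_one_mul]; omega)) ?_
        simp only [ne_eq, Sum.inr.injEq, add_one_mul]; omega
      have hrest := walk_down hE hn (a := b+1) (i := b') (t := o + b'*n + r')
        (by omega) (by omega) hb' (by omega) (by omega)
      have := walk_append hstep hrest
      convert this using 1
      omega

end Dev5
section Dev6
variable {α : Type} [DecidableEq α]

theorem mem_attach_verts {G : FinHypergraph α} {u : α} {n p q : ℕ} {x : α ⊕ ℕ} :
    x ∈ (attachTwoPaths (n+1) G u p q).verts ↔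
      (∃ a ∈ G.verts, x = Sum.inl a) ∨ (∃ j, j < (p+q)*n ∧ x = Sum.inr j) := by
  rw [attach_verts, Finset.mem_union]
  constructor
  · rintro (h | h)
    · obtain ⟨a, ha, rfl⟩ := Finset.mem_image.mp h
      exact Or.inl ⟨a, ha, rfl⟩
    · obtain ⟨j, hj, rfl⟩ := Finset.mem_image.mp h
      exact Or.inr ⟨j, Finset.mem_range.mp hj, rfl⟩
  · rintro (⟨a, ha, rfl⟩ | ⟨j, hj, rfl⟩)
    · exact Or.inl (Finset.mem_image_of_mem _ ha)
    · exact Or.inr (Finset.mem_image_of_mem _ (Finset.mem_range.mpr hj))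

theorem walk_to_coord (G : FinHypergraph α) (u : α) (n p q : ℕ) (hn : 1 ≤ n) :
    ∀ j < (p+q)*n, (attachTwoPaths (n+1) G u p q).Walk (Sum.inl u) (Sum.inr j)
      (blkf n p j + 1) := by
  intro j hj
  obtain ⟨i, r, hjir, hr, hipq⟩ := coord_decomp hn j hj
  rcases lt_or_ge i p with hip | hip
  · rw [blk_lt hjir hr hip]
    exact walk_to_block (hedgeA G u n p q) hn hip (by omega) (by omega)
  · rw [blk_ge hjir hr hip]
    have hsub : p*n + (i-p)*n = i*n := by
      rw [Nat.sub_mul]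
      have := Nat.mul_le_mul_right n hip
      omega
    exact walk_to_block (hedgeB G u n p q) hn (show i - p < q by omega)
      (by omega) (by omega)

theorem walk_real (G : FinHypergraph α) (u : α) (n p q : ℕ) (hn : 1 ≤ n)
    (hconn : G.Connected) (hu : u ∈ G.verts) :
    ∀ x ∈ (attachTwoPaths (n+1) G u p q).verts, ∀ y ∈ (attachTwoPaths (n+1) G u p q).verts,
      (attachTwoPaths (n+1) G u p q).Walk x y (Df G u n p x y) := by
  intro x hx y hy
  rw [mem_attach_verts] at hx hy
  have hto := walk_to_coord G u n p q hn
  rcases hx with ⟨a, ha, rfl⟩ | ⟨j, hj, rfl⟩ <;> rcases hy with ⟨b, hb, rfl⟩ | ⟨j', hj', rfl⟩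
  · exact walk_map (hedgeG G u n p q) (walk_dist (hconn a ha b hb))
  · exact walk_append (walk_map (hedgeG G u n p q) (walk_dist (hconn a ha u hu))) (hto j' hj')
  · exact walk_append (walk_reverse (hto j hj))
      (walk_map (hedgeG G u n p q) (walk_dist (hconn u hu b hb)))
  · show (attachTwoPaths (n+1) G u p q).Walk _ _ (DDf n p j j')
    obtain ⟨i, r, hjir, hr, hipq⟩ := coord_decomp hn j hj
    obtain ⟨i', r', hjir', hr', hipq'⟩ := coord_decomp hn j' hj'
    rcases lt_or_ge i p with hip | hip <;> rcases lt_or_ge i' p with hip' | hip'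
    · -- both on path A
      rw [DDf_evalAA hjir hr hjir' hr' hip hip']
      rcases le_or_gt i i' with hii | hii
      · have hw := walk_real_same (hedgeA G u n p q) hn hii hip' hr hr'
        rw [show (0 : ℕ) + i*n + r = j by omega, show (0 : ℕ) + i'*n + r' = j' by omega] at hw
        convert hw using 1
        split_ifs <;> omega
      · have hw := walk_real_same (hedgeA G u n p q) hn (le_of_lt hii) hip hr' hr
        rw [show (0 : ℕ) + i'*n + r' = j' by omega, show (0 : ℕ) + i*n + r = j by omega] at hw
        have hw2 := walk_reverse hw
        convert hw2 using 1
        split_ifs <;> omega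
    · -- A and B
      rw [DDf_evalAB hjir hr hjir' hr' hip hip']
      have hw := walk_append (walk_reverse (hto j hj)) (hto j' hj')
      rw [blk_lt hjir hr hip, blk_ge hjir' hr' hip'] at hw
      exact hw
    · -- B and A
      rw [DDf_comm, DDf_evalAB hjir' hr' hjir hr hip' hip]
      have hw := walk_append (walk_reverse (hto j hj)) (hto j' hj')
      rw [blk_lt hjir' hr' hip', blk_ge hjir hr hip] at hw
      convert hw using 1
      omega
    · -- both on path B
      rw [DDf_evalBB hjir hr hjir' hr' hip hip']
      have hsub : p*n + (i-p)*n = i*n := by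
        rw [Nat.sub_mul]; have := Nat.mul_le_mul_right n hip; omega
      have hsub' : p*n + (i'-p)*n = i'*n := by
        rw [Nat.sub_mul]; have := Nat.mul_le_mul_right n hip'; omega
      rcases le_or_gt i i' with hii | hii
      · have hw := walk_real_same (hedgeB G u n p q) hn
          (show i - p ≤ i' - p by omega) (show i' - p < q by omega) hr hr'
        rw [show p*n + (i-p)*n + r = j by omega, show p*n + (i'-p)*n + r' = j' by omega] at hw
        convert hw using 1
        split_ifs <;> omega
      · have hw := walk_real_same (hedgeB G u n p q) hn
          (show i' - p ≤ i - p by omega) (show i - p < q by omega) hr' hr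
        rw [show p*n + (i'-p)*n + r' = j' by omega, show p*n + (i-p)*n + r = j by omega] at hw
        have hw2 := walk_reverse hw
        convert hw2 using 1
        split_ifs <;> omega

end Dev6
section Dev7
set_option maxHeartbeats 1000000
variable {α : Type} [DecidableEq α]

theorem anchor_coord {n i : ℕ} (hn : 1 ≤ n) (hi : 1 ≤ i) :
    i*n - 1 = (i-1)*n + (n-1) := by
  obtain ⟨i₀, rfl⟩ : ∃ i₀, i = i₀ + 1 := ⟨i-1, by omega⟩
  simp only [add_one_mul, Nat.add_sub_cancel]
  omega

theorem D_step_core1 (G : FinHypergraph α) (u : α) (n p q : ℕ) (hn : 1 ≤ n)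
    {jx jv mx rx mv rv : ℕ}
    (hjx : jx = mx*n + rx) (hrx : rx < n) (hjv : jv = mv*n + rv) (hrv : rv < n)
    (hadj : mx = mv ∨ (mx + 1 = mv ∧ rx = n-1) ∨ (mv + 1 = mx ∧ rv = n-1))
    (hside : (mx < p ∧ mv < p) ∨ (p ≤ mx ∧ p ≤ mv))
    {y : α ⊕ ℕ} (hy : y ∈ (attachTwoPaths (n+1) G u p q).verts) :
    Df G u n p (Sum.inr jx) y ≤ Df G u n p (Sum.inr jv) y + 1 := by
  rw [mem_attach_verts] at hy
  rcases hy with ⟨b, hb, rfl⟩ | ⟨j, hj, rfl⟩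
  · simp only [Df]
    rcases hside with ⟨h1, h2⟩ | ⟨h1, h2⟩
    · rw [blk_lt hjx hrx h1, blk_lt hjv hrv h2]; omega
    · rw [blk_ge hjx hrx h1, blk_ge hjv hrv h2]; omega
  · obtain ⟨m, r, hjmr, hr, hmpq⟩ := coord_decomp hn j hj
    simp only [Df]
    rcases hside with ⟨h1, h2⟩ | ⟨h1, h2⟩ <;> rcases lt_or_ge m p with hm | hm
    · rw [DDf_evalAA hjx hrx hjmr hr h1 hm, DDf_evalAA hjv hrv hjmr hr h2 hm]
      first
      | (split_ifs <;> omega)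
      | omega
    · rw [DDf_evalAB hjx hrx hjmr hr h1 hm, DDf_evalAB hjv hrv hjmr hr h2 hm]
      first
      | (split_ifs <;> omega)
      | omega
    · rw [DDf_comm (j := jx), DDf_evalAB hjmr hr hjx hrx hm h1,
        DDf_comm (j := jv), DDf_evalAB hjmr hr hjv hrv hm h2]
      first
      | (split_ifs <;> omega)
      | omega
    · rw [DDf_evalBB hjx hrx hjmr hr h1 hm, DDf_evalBB hjv hrv hjmr hr h2 hm]
      first
      | (split_ifs <;> omega)
      | omega

theorem D_step_core2 (G : FinHypergraph α) (u : α) (n p q : ℕ) (hn : 1 ≤ n)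
    {jv mv rv : ℕ} (hjv : jv = mv*n + rv) (hrv : rv < n) (hmv : mv = 0 ∨ mv = p)
    {y : α ⊕ ℕ} (hy : y ∈ (attachTwoPaths (n+1) G u p q).verts) :
    Df G u n p (Sum.inl u) y ≤ Df G u n p (Sum.inr jv) y + 1 ∧
      Df G u n p (Sum.inr jv) y ≤ Df G u n p (Sum.inl u) y + 1 := by
  have hduu : G.dist u u = 0 := dist_self' G u
  rw [mem_attach_verts] at hy
  rcases hy with ⟨b, hb, rfl⟩ | ⟨j, hj, rfl⟩
  · simp only [Df]
    rcases lt_or_ge mv p with h | h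
    · have hb1 : blkf n p jv = 0 := by rw [blk_lt hjv hrv h]; omega
      rw [hb1]; omega
    · have hb1 : blkf n p jv = 0 := by rw [blk_ge hjv hrv h]; omega
      rw [hb1]; omega
  · obtain ⟨m, r, hjmr, hr, hmpq⟩ := coord_decomp hn j hj
    simp only [Df, hduu]
    rcases lt_or_ge mv p with h | h <;> rcases lt_or_ge m p with hm | hm
    · have hmv0 : mv = 0 := by omega
      rw [DDf_evalAA hjv hrv hjmr hr h hm, blk_lt hjmr hr hm]
      first
      | (split_ifs <;> omega)
      | omega
    · have hmv0 : mv = 0 := by omega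
      rw [DDf_evalAB hjv hrv hjmr hr h hm, blk_ge hjmr hr hm]
      first
      | (split_ifs <;> omega)
      | omega
    · rw [DDf_comm (j := jv), DDf_evalAB hjmr hr hjv hrv hm h, blk_lt hjmr hr hm]
      first
      | (split_ifs <;> omega)
      | omega
    · rw [DDf_evalBB hjv hrv hjmr hr h hm, blk_ge hjmr hr hm]
      first
      | (split_ifs <;> omega)
      | omega

end Dev7
section Dev8
variable {α : Type} [DecidableEq α]

theorem memberA {u : α} {n i : ℕ} {z : α ⊕ ℕ} (hn : 1 ≤ n) (hz : z ∈ pathEdge u n 0 i) :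
    (i = 0 ∧ z = Sum.inl u) ∨
      ∃ m r, r < n ∧ z = Sum.inr (m*n+r) ∧ (m = i ∨ (1 ≤ i ∧ m = i-1 ∧ r = n-1)) := by
  rcases mem_pathEdge.mp hz with h | ⟨t, ⟨h1, h2⟩, rfl⟩
  · rcases Nat.eq_zero_or_pos i with rfl | hi
    · rw [if_pos rfl] at h
      exact Or.inl ⟨rfl, h⟩
    · rw [if_neg (by omega)] at h
      refine Or.inr ⟨i-1, n-1, by omega, ?_, Or.inr ⟨hi, rfl, rfl⟩⟩
      rw [h, Nat.zero_add, anchor_coord hn hi]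
  · refine Or.inr ⟨i, t - i*n, by omega, ?_, Or.inl rfl⟩
    congr 1
    omega

theorem memberB {u : α} {n p i : ℕ} {z : α ⊕ ℕ} (hn : 1 ≤ n)
    (hz : z ∈ pathEdge u n (p*n) i) :
    (i = 0 ∧ z = Sum.inl u) ∨
      ∃ m r, r < n ∧ z = Sum.inr (m*n+r) ∧ (m = p+i ∨ (1 ≤ i ∧ m = p+i-1 ∧ r = n-1)) := by
  have hadd : p*n + i*n = (p+i)*n := (add_mul p i n).symm
  rcases mem_pathEdge.mp hz with h | ⟨t, ⟨h1, h2⟩, rfl⟩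
  · rcases Nat.eq_zero_or_pos i with rfl | hi
    · rw [if_pos rfl] at h
      exact Or.inl ⟨rfl, h⟩
    · rw [if_neg (by omega)] at h
      refine Or.inr ⟨p+i-1, n-1, by omega, ?_, Or.inr ⟨hi, rfl, rfl⟩⟩
      rw [h, ← anchor_coord hn (show 1 ≤ p+i by omega)]
      congr 1
      omega
  · refine Or.inr ⟨p+i, t - (p+i)*n, by omega, ?_, Or.inl rfl⟩
    congr 1
    omega

theorem D_step (G : FinHypergraph α) (u : α) (n p q : ℕ) (hn : 1 ≤ n)
    (hgood : G.Good) (hconn : G.Connected) (hu : u ∈ G.verts) :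
    ∀ e ∈ (attachTwoPaths (n+1) G u p q).edges, ∀ x ∈ e, ∀ v ∈ e,
      ∀ y ∈ (attachTwoPaths (n+1) G u p q).verts,
        Df G u n p x y ≤ Df G u n p v y + 1 := by
  intro e he x hxe v hve y hy
  rw [attach_edges, Finset.mem_union, Finset.mem_union] at he
  rcases he with (he | he) | he
  · obtain ⟨e₀, he₀, rfl⟩ := Finset.mem_image.mp he
    obtain ⟨a, ha, rfl⟩ := Finset.mem_image.mp hxe
    obtain ⟨c, hc, rfl⟩ := Finset.mem_image.mp hve
    have hcv : c ∈ G.verts := hgood e₀ he₀ hc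
    rw [mem_attach_verts] at hy
    rcases hy with ⟨b, hb, rfl⟩ | ⟨j, hj, rfl⟩
    · simpa only [Df] using dist_le_step he₀ ha hc (hconn c hcv b hb)
    · have := dist_le_step he₀ ha hc (hconn c hcv u hu)
      simp only [Df]
      omega
  · obtain ⟨i, hi, rfl⟩ := Finset.mem_image.mp he
    replace hi := Finset.mem_range.mp hi
    rcases memberA hn hxe with ⟨hi0, rfl⟩ | ⟨mx, rx, hrx, rfl, hkx⟩ <;>
      rcases memberA hn hve with ⟨hi0', rfl⟩ | ⟨mv, rv, hrv, rfl, hkv⟩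
    · exact Nat.le_succ _
    · exact (D_step_core2 G u n p q hn rfl hrv (Or.inl (by omega)) hy).1
    · exact (D_step_core2 G u n p q hn rfl hrx (Or.inl (by omega)) hy).2
    · exact D_step_core1 G u n p q hn rfl hrx rfl hrv (by omega)
        (Or.inl ⟨by omega, by omega⟩) hy
  · obtain ⟨i, hi, rfl⟩ := Finset.mem_image.mp he
    replace hi := Finset.mem_range.mp hi
    rcases memberB hn hxe with ⟨hi0, rfl⟩ | ⟨mx, rx, hrx, rfl, hkx⟩ <;>
      rcases memberB hn hve with ⟨hi0', rfl⟩ | ⟨mv, rv, hrv, rfl, hkv⟩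
    · exact Nat.le_succ _
    · exact (D_step_core2 G u n p q hn rfl hrv (Or.inr (by omega)) hy).1
    · exact (D_step_core2 G u n p q hn rfl hrx (Or.inr (by omega)) hy).2
    · exact D_step_core1 G u n p q hn rfl hrx rfl hrv (by omega)
        (Or.inr ⟨by omega, by omega⟩) hy

theorem DDf_self {n p j : ℕ} : DDf n p j j = 0 := by
  simp [DDf]

theorem D_le_walk (G : FinHypergraph α) (u : α) (n p q : ℕ) (hn : 1 ≤ n)
    (hgood : G.Good) (hconn : G.Connected) (hu : u ∈ G.verts) :
    ∀ {x y : α ⊕ ℕ} {ℓ : ℕ}, (attachTwoPaths (n+1) G u p q).Walk x y ℓ →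
      y ∈ (attachTwoPaths (n+1) G u p q).verts → Df G u n p x y ≤ ℓ := by
  intro x y ℓ hw
  induction hw with
  | nil v =>
    intro _
    rcases v with a | j <;> simp [Df, dist_self', DDf_self]
  | cons v e he hxe hve hne hw ih =>
    intro hy
    have h1 := D_step G u n p q hn hgood hconn hu e he _ hxe _ hve _ hy
    have h2 := ih hy
    omega

theorem dist_eq_D (G : FinHypergraph α) (u : α) (n p q : ℕ) (hn : 1 ≤ n)
    (hgood : G.Good) (hconn : G.Connected) (hu : u ∈ G.verts)
    {x y : α ⊕ ℕ} (hx : x ∈ (attachTwoPaths (n+1) G u p q).verts)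
    (hy : y ∈ (attachTwoPaths (n+1) G u p q).verts) :
    (attachTwoPaths (n+1) G u p q).dist x y = Df G u n p x y := by
  have hw := walk_real G u n p q hn hconn hu x hx y hy
  exact le_antisymm (dist_le' hw)
    (D_le_walk G u n p q hn hgood hconn hu (walk_dist ⟨_, hw⟩) hy)

end Dev8
section Dev9
variable {α : Type} [DecidableEq α]

def A1 (m : ℕ) : ℕ := ∑ i ∈ Finset.range m, (i+1)

def DDg (n i r i' r' : ℕ) : ℕ :=
  if i = i' ∧ r = r' then 0 else if i = i' then 1
  else if i < i' then i'-i+(if r = n-1 then 0 else 1)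
  else i-i'+(if r' = n-1 then 0 else 1)

def PP (n m : ℕ) : ℕ :=
  ∑ i ∈ Finset.range m, ∑ r ∈ Finset.range n, ∑ i' ∈ Finset.range m,
    ∑ r' ∈ Finset.range n, DDg n i r i' r'

theorem sum_range_add' (f : ℕ → ℕ) (a b : ℕ) :
    ∑ j ∈ Finset.range (a+b), f j
      = ∑ j ∈ Finset.range a, f j + ∑ j ∈ Finset.range b, f (a+j) := by
  induction b with
  | zero => simp
  | succ b ih =>
    rw [show a + (b+1) = (a+b)+1 by omega, Finset.sum_range_succ, ih,
      Finset.sum_range_succ]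
    omega

theorem sum_blocks (f : ℕ → ℕ) (m n : ℕ) :
    ∑ j ∈ Finset.range (m*n), f j
      = ∑ i ∈ Finset.range m, ∑ r ∈ Finset.range n, f (i*n+r) := by
  induction m with
  | zero => simp
  | succ m ih =>
    rw [show (m+1)*n = m*n+n by ring, sum_range_add', ih, Finset.sum_range_succ]

theorem sum_if_ne {n r : ℕ} (hr : r < n) :
    ∑ r' ∈ Finset.range n, (if r = r' then 0 else 1) = n - 1 := by
  rw [← Finset.add_sum_erase _ _ (Finset.mem_range.mpr hr), if_pos rfl]
  rw [Finset.sum_congr rfl (fun x hx => if_neg (fun h => ?_)), Finset.sum_const,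
    Finset.card_erase_of_mem (Finset.mem_range.mpr hr), Finset.card_range, smul_eq_mul,
    mul_one, zero_add]
  exact (Finset.ne_of_mem_erase hx) h.symm

theorem sum_if_last {n : ℕ} (hn : 1 ≤ n) :
    ∑ r' ∈ Finset.range n, (if r' = n-1 then 0 else 1) = n - 1 := by
  obtain ⟨n', rfl⟩ : ∃ n', n = n'+1 := ⟨n-1, by omega⟩
  rw [Finset.sum_range_succ, Nat.add_sub_cancel, if_pos rfl, add_zero]
  rw [Finset.sum_congr rfl (fun x hx => if_neg (by
    have := Finset.mem_range.mp hx; omega)), Finset.sum_const, Finset.card_range,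
    smul_eq_mul, mul_one]

theorem A1_succ (m : ℕ) : A1 (m+1) = A1 m + (m+1) := Finset.sum_range_succ _ _

theorem sum_sub_range (m : ℕ) : ∑ i ∈ Finset.range m, (m - i) = A1 m := by
  rw [← Finset.sum_range_reflect]
  exact Finset.sum_congr rfl fun x hx => by
    have := Finset.mem_range.mp hx; omega

end Dev9
section Dev10

theorem PP_succ (n m : ℕ) (hn : 1 ≤ n) :
    PP n (m+1) = PP n m + 2*(n*n*A1 m + m*(n*(n-1))) + n*(n-1) := by
  have hF : ∀ M, PP n M = ∑ i ∈ Finset.range M, ∑ i' ∈ Finset.range M,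
      ∑ r ∈ Finset.range n, ∑ r' ∈ Finset.range n, DDg n i r i' r' := by
    intro M
    unfold PP
    exact Finset.sum_congr rfl fun i _ => Finset.sum_comm
  have e1 : ∀ i ∈ Finset.range m,
      (∑ r ∈ Finset.range n, ∑ r' ∈ Finset.range n, DDg n i r m r')
        = n*n*(m-i) + n*(n-1) := by
    intro i hi
    have hD : ∀ r r', DDg n i r m r' = (m-i) + (if r = n-1 then 0 else 1) := by
      intro r r'
      have := Finset.mem_range.mp hi
      simp only [DDg]
      split_ifs <;> omega
    simp only [hD, Finset.sum_add_distrib, Finset.sum_const, Finset.card_range,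
      smul_eq_mul, ← Finset.mul_sum, sum_if_last hn]
    ring
  have e2 : ∀ i' ∈ Finset.range m,
      (∑ r ∈ Finset.range n, ∑ r' ∈ Finset.range n, DDg n m r i' r')
        = n*n*(m-i') + n*(n-1) := by
    intro i' hi
    have hD : ∀ r r', DDg n m r i' r' = (m-i') + (if r' = n-1 then 0 else 1) := by
      intro r r'
      have := Finset.mem_range.mp hi
      simp only [DDg]
      split_ifs <;> omega
    simp only [hD, Finset.sum_add_distrib, Finset.sum_const, Finset.card_range,
      smul_eq_mul, ← Finset.mul_sum, sum_if_last hn]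
    ring
  have e3 : (∑ r ∈ Finset.range n, ∑ r' ∈ Finset.range n, DDg n m r m r')
      = n*(n-1) := by
    have hD : ∀ r r', DDg n m r m r' = (if r = r' then 0 else 1) := by
      intro r r'
      simp [DDg]
    simp only [hD]
    rw [Finset.sum_congr rfl (fun r hr => sum_if_ne (Finset.mem_range.mp hr)),
      Finset.sum_const, Finset.card_range, smul_eq_mul]
  have hsum1 : (∑ i ∈ Finset.range m, (n*n*(m-i) + n*(n-1)))
      = n*n*A1 m + m*(n*(n-1)) := by
    rw [Finset.sum_add_distrib, Finset.sum_const, Finset.card_range, smul_eq_mul,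
      ← Finset.mul_sum, sum_sub_range]
  rw [hF, hF, Finset.sum_range_succ,
    Finset.sum_congr rfl (fun i (_ : i ∈ Finset.range m) => Finset.sum_range_succ
      (fun i' => ∑ r ∈ Finset.range n, ∑ r' ∈ Finset.range n, DDg n i r i' r') m),
    Finset.sum_add_distrib, Finset.sum_range_succ, Finset.sum_congr rfl e1,
    Finset.sum_congr rfl e2, hsum1, e3]
  omega

end Dev10
section Dev11
variable {α : Type} [DecidableEq α]

theorem lam_sum (n p q : ℕ) (hn : 1 ≤ n) :
    ∑ j ∈ Finset.range ((p+q)*n), (blkf n p j + 1) = n*A1 p + n*A1 q := by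
  rw [add_mul, sum_range_add', sum_blocks, sum_blocks]
  have h1 : ∀ i ∈ Finset.range p, (∑ r ∈ Finset.range n, (blkf n p (i*n+r) + 1))
      = n*(i+1) := by
    intro i hi
    rw [Finset.sum_congr rfl (fun r hr => by
      rw [blk_lt rfl (Finset.mem_range.mp hr) (Finset.mem_range.mp hi)]),
      Finset.sum_const, Finset.card_range, smul_eq_mul]
  have h2 : ∀ i ∈ Finset.range q, (∑ r ∈ Finset.range n, (blkf n p (p*n+(i*n+r)) + 1))
      = n*(i+1) := by
    intro i hi
    rw [Finset.sum_congr rfl (fun r hr => by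
      have he : p*n+(i*n+r) = (p+i)*n + r := by ring
      rw [he, blk_ge rfl (Finset.mem_range.mp hr) (by omega), Nat.add_sub_cancel_left]),
      Finset.sum_const, Finset.card_range, smul_eq_mul]
  rw [Finset.sum_congr rfl h1, Finset.sum_congr rfl h2, ← Finset.mul_sum, ← Finset.mul_sum]
  rfl

theorem piece2 (G : FinHypergraph α) (u : α) (n p q : ℕ) (hn : 1 ≤ n) :
    ∑ a ∈ G.verts, ∑ j ∈ Finset.range ((p+q)*n), (G.dist a u + (blkf n p j + 1))
      = ((p+q)*n) * (∑ a ∈ G.verts, G.dist a u)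
        + G.verts.card * (n*A1 p + n*A1 q) := by
  rw [Finset.sum_congr rfl (fun a _ => by
    rw [Finset.sum_add_distrib, Finset.sum_const, Finset.card_range, smul_eq_mul,
      lam_sum n p q hn])]
  rw [Finset.sum_add_distrib, Finset.sum_const, smul_eq_mul, ← Finset.mul_sum]

theorem piece3 (G : FinHypergraph α) (u : α) (n p q : ℕ) (hn : 1 ≤ n) :
    ∑ j ∈ Finset.range ((p+q)*n), ∑ b ∈ G.verts, ((blkf n p j + 1) + G.dist u b)
      = ((p+q)*n) * (∑ b ∈ G.verts, G.dist u b)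
        + G.verts.card * (n*A1 p + n*A1 q) := by
  rw [Finset.sum_congr rfl (fun j _ => by
    rw [Finset.sum_add_distrib, Finset.sum_const, smul_eq_mul])]
  rw [Finset.sum_add_distrib, Finset.sum_const, Finset.card_range, smul_eq_mul]
  rw [Finset.sum_congr rfl (fun j (_ : j ∈ Finset.range ((p+q)*n)) =>
    mul_comm G.verts.card (blkf n p j + 1)), ← Finset.sum_mul, lam_sum n p q hn]
  ring
end Dev11
section Dev12

theorem pieceAA (n p q : ℕ) (hn : 1 ≤ n) :
    ∑ j ∈ Finset.range (p*n), ∑ j' ∈ Finset.range (p*n), DDf n p j j' = PP n p := by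
  rw [sum_blocks, Finset.sum_congr rfl (fun i _ => Finset.sum_congr rfl
    (fun r _ => sum_blocks _ p n))]
  refine Finset.sum_congr rfl fun i hi => Finset.sum_congr rfl fun r hr =>
    Finset.sum_congr rfl fun i' hi' => Finset.sum_congr rfl fun r' hr' => ?_
  rw [DDf_evalAA rfl (Finset.mem_range.mp hr) rfl (Finset.mem_range.mp hr')
    (Finset.mem_range.mp hi) (Finset.mem_range.mp hi')]
  rfl

theorem pieceBB (n p q : ℕ) (hn : 1 ≤ n) :
    ∑ j ∈ Finset.range (q*n), ∑ j' ∈ Finset.range (q*n), DDf n p (p*n+j) (p*n+j')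
      = PP n q := by
  rw [sum_blocks, Finset.sum_congr rfl (fun i _ => Finset.sum_congr rfl
    (fun r _ => sum_blocks _ q n))]
  refine Finset.sum_congr rfl fun i hi => Finset.sum_congr rfl fun r hr =>
    Finset.sum_congr rfl fun i' hi' => Finset.sum_congr rfl fun r' hr' => ?_
  have he : p*n+(i*n+r) = (p+i)*n + r := by ring
  have he' : p*n+(i'*n+r') = (p+i')*n + r' := by ring
  rw [he, he', DDf_evalBB rfl (Finset.mem_range.mp hr) rfl (Finset.mem_range.mp hr')
    (by omega) (by omega)]
  simp only [DDg]
  split_ifs <;> omega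

theorem pieceAB (n p q : ℕ) (hn : 1 ≤ n) :
    ∑ j ∈ Finset.range (p*n), ∑ j' ∈ Finset.range (q*n), DDf n p j (p*n+j')
      = n*n*(q*A1 p) + n*n*(p*A1 q) := by
  rw [sum_blocks, Finset.sum_congr rfl (fun i _ => Finset.sum_congr rfl
    (fun r _ => sum_blocks _ q n))]
  have key : ∀ i ∈ Finset.range p, ∀ r ∈ Finset.range n, ∀ i' ∈ Finset.range q,
      ∀ r' ∈ Finset.range n, DDf n p (i*n+r) (p*n+(i'*n+r')) = (i+1) + (i'+1) := by
    intro i hi r hr i' hi' r' hr'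
    have he' : p*n+(i'*n+r') = (p+i')*n + r' := by ring
    rw [he', DDf_evalAB rfl (Finset.mem_range.mp hr) rfl (Finset.mem_range.mp hr')
      (Finset.mem_range.mp hi) (by omega), Nat.add_sub_cancel_left]
  rw [Finset.sum_congr rfl (fun i hi => Finset.sum_congr rfl (fun r hr =>
    Finset.sum_congr rfl (fun i' hi' => Finset.sum_congr rfl (fun r' hr' =>
      key i hi r hr i' hi' r' hr'))))]
  simp only [A1, Finset.sum_add_distrib, Finset.sum_const, Finset.card_range,
    smul_eq_mul]
  have h1 : ∀ (m a : ℕ), (∑ x ∈ Finset.range m, a * x) = a * ∑ x ∈ Finset.range m, x :=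
    fun m a => (Finset.mul_sum _ _ _).symm
  simp only [← mul_assoc]
  simp only [h1]
  ring

theorem pieceBA (n p q : ℕ) (hn : 1 ≤ n) :
    ∑ j ∈ Finset.range (q*n), ∑ j' ∈ Finset.range (p*n), DDf n p (p*n+j) j'
      = n*n*(q*A1 p) + n*n*(p*A1 q) := by
  rw [sum_blocks, Finset.sum_congr rfl (fun i _ => Finset.sum_congr rfl
    (fun r _ => sum_blocks _ p n))]
  have key : ∀ i ∈ Finset.range q, ∀ r ∈ Finset.range n, ∀ i' ∈ Finset.range p,
      ∀ r' ∈ Finset.range n, DDf n p (p*n+(i*n+r)) (i'*n+r') = (i'+1) + (i+1) := by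
    intro i hi r hr i' hi' r' hr'
    have he : p*n+(i*n+r) = (p+i)*n + r := by ring
    rw [he, DDf_comm, DDf_evalAB rfl (Finset.mem_range.mp hr') rfl (Finset.mem_range.mp hr)
      (Finset.mem_range.mp hi') (by omega), Nat.add_sub_cancel_left]
  rw [Finset.sum_congr rfl (fun i hi => Finset.sum_congr rfl (fun r hr =>
    Finset.sum_congr rfl (fun i' hi' => Finset.sum_congr rfl (fun r' hr' =>
      key i hi r hr i' hi' r' hr'))))]
  simp only [A1, Finset.sum_add_distrib, Finset.sum_const, Finset.card_range,
    smul_eq_mul]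
  have h1 : ∀ (m a : ℕ), (∑ x ∈ Finset.range m, a * x) = a * ∑ x ∈ Finset.range m, x :=
    fun m a => (Finset.mul_sum _ _ _).symm
  simp only [← mul_assoc]
  simp only [h1]
  ring

theorem piece4 (n p q : ℕ) (hn : 1 ≤ n) :
    ∑ j ∈ Finset.range ((p+q)*n), ∑ j' ∈ Finset.range ((p+q)*n), DDf n p j j'
      = PP n p + PP n q + 2*(n*n*(q*A1 p) + n*n*(p*A1 q)) := by
  rw [add_mul, sum_range_add']
  rw [Finset.sum_congr rfl (fun j (_ : j ∈ Finset.range (p*n)) =>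
    sum_range_add' (fun j' => DDf n p j j') (p*n) (q*n))]
  rw [Finset.sum_congr rfl (fun j (_ : j ∈ Finset.range (q*n)) =>
    sum_range_add' (fun j' => DDf n p (p*n+j) j') (p*n) (q*n))]
  rw [Finset.sum_add_distrib, Finset.sum_add_distrib]
  rw [pieceAA n p q hn, pieceBB n p q hn, pieceAB n p q hn, pieceBA n p q hn]
  ring

end Dev12
section Dev13
variable {α : Type} [DecidableEq α]

theorem sum2_eq (G : FinHypergraph α) (u : α) (n p q : ℕ) (hn : 1 ≤ n)
    (hgood : G.Good) (hconn : G.Connected) (hu : u ∈ G.verts) :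
    (∑ x ∈ (attachTwoPaths (n+1) G u p q).verts,
      ∑ y ∈ (attachTwoPaths (n+1) G u p q).verts, (attachTwoPaths (n+1) G u p q).dist x y)
      = (∑ a ∈ G.verts, ∑ b ∈ G.verts, G.dist a b)
        + ((p+q)*n) * (∑ a ∈ G.verts, G.dist a u)
        + ((p+q)*n) * (∑ b ∈ G.verts, G.dist u b)
        + 2*(G.verts.card * (n*A1 p + n*A1 q))
        + (PP n p + PP n q + 2*(n*n*(q*A1 p) + n*n*(p*A1 q))) := by
  rw [Finset.sum_congr rfl (fun x hx => Finset.sum_congr rfl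
    (fun y hy => dist_eq_D G u n p q hn hgood hconn hu hx hy))]
  rw [attach_verts]
  have hdisj : Disjoint (G.verts.image Sum.inl)
      ((Finset.range ((p+q)*n)).image Sum.inr) := by
    rw [Finset.disjoint_left]
    rintro x hx hx'
    obtain ⟨a, _, rfl⟩ := Finset.mem_image.mp hx
    obtain ⟨j, _, hj⟩ := Finset.mem_image.mp hx'
    exact Sum.inl_ne_inr hj.symm
  rw [Finset.sum_congr rfl (fun x _ => Finset.sum_union hdisj), Finset.sum_union hdisj,
    Finset.sum_add_distrib, Finset.sum_add_distrib]
  have hinjl : ∀ x ∈ G.verts, ∀ y ∈ G.verts,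
      (Sum.inl x : α ⊕ ℕ) = Sum.inl y → x = y := fun _ _ _ _ h => Sum.inl.inj h
  have hinjr : ∀ x ∈ Finset.range ((p+q)*n), ∀ y ∈ Finset.range ((p+q)*n),
      (Sum.inr x : α ⊕ ℕ) = Sum.inr y → x = y := fun _ _ _ _ h => Sum.inr.inj h
  simp only [Finset.sum_image hinjl, Finset.sum_image hinjr, Df]
  rw [piece2 G u n p q hn, piece3 G u n p q hn, piece4 n p q hn]
  ring

end Dev13
set_option maxHeartbeats 2000000 in
theorem stmt12' {α : Type} [DecidableEq α] (k : ℕ) (hk : 2 ≤ k) (G : FinHypergraph α)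
    (hgood : G.Good) (hconn : G.Connected) (hunif : G.Uniform k)
    (hsize : 1 ≤ G.edges.card) (u : α) (hu : u ∈ G.verts)
    (p q : ℕ) (hq : 1 ≤ q) (hpq : q ≤ p) :
    (attachTwoPaths k G u p q).trans < (attachTwoPaths k G u (p + 1) (q - 1)).trans := by
  obtain ⟨n, hn1, rfl⟩ : ∃ n, 1 ≤ n ∧ k = n+1 := ⟨k-1, by omega, by omega⟩
  obtain ⟨q', rfl⟩ : ∃ q', q = q'+1 := ⟨q-1, by omega⟩
  obtain ⟨d, hd1, rfl⟩ : ∃ d, 1 ≤ d ∧ p = q'+d := ⟨p-q', by omega, by omega⟩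
  rw [show q'+1-1 = q' by omega]
  obtain ⟨e, he⟩ := Finset.card_pos.mp (by omega : 0 < G.edges.card)
  have hVe : (n+1) ≤ G.verts.card := by
    have h1 := hunif e he
    have h2 := Finset.card_le_card (hgood e he)
    omega
  obtain ⟨n₀, rfl⟩ : ∃ n₀, n = n₀+1 := ⟨n-1, by omega⟩
  obtain ⟨V₀, hV⟩ : ∃ V₀, G.verts.card = V₀+2 := ⟨G.verts.card-2, by omega⟩
  have hs1 := sum2_eq G u (n₀+1) (q'+d) (q'+1) hn1 hgood hconn hu
  have hs2 := sum2_eq G u (n₀+1) (q'+d+1) q' hn1 hgood hconn hu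
  rw [hV] at hs1 hs2
  have hc : 1 ≤ (n₀+1)*((V₀+1)*d) :=
    Nat.one_le_iff_ne_zero.mpr (Nat.pos_iff_ne_zero.mp
      (Nat.mul_pos (by omega) (Nat.mul_pos (by omega) (by omega))))
  have key : (∑ x ∈ (attachTwoPaths (n₀+1+1) G u (q'+d) (q'+1)).verts,
      ∑ y ∈ (attachTwoPaths (n₀+1+1) G u (q'+d) (q'+1)).verts,
        (attachTwoPaths (n₀+1+1) G u (q'+d) (q'+1)).dist x y)
      + 2*((n₀+1)*((V₀+1)*d))
      = ∑ x ∈ (attachTwoPaths (n₀+1+1) G u (q'+d+1) q').verts,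
          ∑ y ∈ (attachTwoPaths (n₀+1+1) G u (q'+d+1) q').verts,
            (attachTwoPaths (n₀+1+1) G u (q'+d+1) q').dist x y := by
    rw [hs1, hs2, A1_succ (q'+d), A1_succ q', PP_succ (n₀+1) (q'+d) hn1,
      PP_succ (n₀+1) q' hn1]
    simp only [Nat.add_sub_cancel]
    ring
  unfold FinHypergraph.trans
  omega


end FinHypergraph

open FinHypergraph

/-- Lemma `max-moving1`: For a connected `k`-uniform hypergraph `G` with at
least one edge, `u ∈ V(G)`, and integers `p ≥ q ≥ 1`,
`σ(G_u(p,q)) < σ(G_u(p+1,q-1))`. -/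
theorem stmt12 {α : Type} [DecidableEq α] (k : ℕ) (hk : 2 ≤ k) (G : FinHypergraph α)
    (hgood : G.Good) (hconn : G.Connected) (hunif : G.Uniform k)
    (hsize : 1 ≤ G.edges.card) (u : α) (hu : u ∈ G.verts)
    (p q : ℕ) (hq : 1 ≤ q) (hpq : q ≤ p) :
    (attachTwoPaths k G u p q).trans < (attachTwoPaths k G u (p + 1) (q - 1)).trans := by
  exact FinHypergraph.stmt12' k hk G hgood hconn hunif hsize u hu p q hq hpq
end

section
/- In the k-uniform hypergraph C̃^k_2(p,q) with q ≥ 1, let f_q be the last edge of the pendant path of length q attached at w'_1, with v_{q−1} the vertex of f_q closest to the cycle, and let U = V(G)∖(f_q∖{v_{q−1}}). Then σ_G(f_q∖{v_{q−1}}, U) = (k−1)[ q(q+1)/2 + p(p+2q+5)/2 + (k−2)(p²+q²+2pq+5p+q−2)/2 + (2k−3)(q+1) + k−2 ]. -/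
open Finset

open FinHypergraph

namespace Stmt14Aux
open FinHypergraph Finset

/-- Lower-bound principle: a 1-Lipschitz potential bounds walk lengths. -/
lemma walk_le {α : Type} (G : FinHypergraph α) (Φ : α → ℕ)
    (hΦ : ∀ e ∈ G.edges, ∀ x ∈ e, ∀ y ∈ e, Φ x ≤ Φ y + 1) :
    ∀ {u v : α} {n : ℕ}, G.Walk u v n → Φ v ≤ Φ u + n := by
  intro u v n h
  induction h with
  | nil v => simp
  | cons v e he hu hv hne hw ih =>
    have := hΦ e he _ hv _ hu
    omega

/-- Append a step at the end of a walk. -/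
lemma walk_snoc {α : Type} {G : FinHypergraph α} :
    ∀ {u v : α} {n : ℕ}, G.Walk u v n → ∀ {w : α} {e : Finset α},
      e ∈ G.edges → v ∈ e → w ∈ e → v ≠ w → G.Walk u w (n + 1) := by
  intro u v n h
  induction h with
  | nil x =>
    intro w e he h1 h2 h3
    exact Walk.cons w e he h1 h2 h3 (Walk.nil w)
  | cons v e he hu hv hne hw ih =>
    intro w f hf h1 h2 h3
    exact Walk.cons v e he hu hv hne (ih hf h1 h2 h3)

lemma not_dvd_of_between {m a t : ℕ} (h1 : a * m < t) (h2 : t < (a + 1) * m) : ¬ m ∣ t := by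
  rintro ⟨s, rfl⟩
  have e1 : (a + 1) * m = a * m + m := by ring
  have e2 : m * s = s * m := by ring
  have h3 : a < s := by
    rcases Nat.lt_or_ge a s with h | h
    · exact h
    · have := Nat.mul_le_mul_right m h
      omega
  have h4 := Nat.mul_le_mul_right m (show a + 1 ≤ s by omega)
  omega

lemma exists_block {m t u : ℕ} (hm : 0 < m) (hu : u < t * m) :
    ∃ i, i < t ∧ i * m ≤ u ∧ u < (i + 1) * m := by
  refine ⟨u / m, (Nat.div_lt_iff_lt_mul hm).2 hu, Nat.div_mul_le_self u m, ?_⟩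
  have h1 := Nat.div_add_mod u m
  have h2 := Nat.mod_lt u hm
  have e1 : (u / m + 1) * m = m * (u / m) + m := by ring
  omega

/-- The BFS labelling from the far endpoint of the `q`-path in `C̃ᵏ₂(p,q)`. -/
def phi (k p q x : ℕ) : ℕ :=
  if x < 2 then q
  else if x < k then q + 1
  else if x = k then q - 1
  else if x < 2 * k - 2 then q
  else if x < 2 * k - 2 + p * (k - 1) then q + 2 + (x - (2 * k - 2)) / (k - 1)
  else q - 1 - (x - (2 * k - 2 + p * (k - 1))) / (k - 1)
    - (if (k - 1) ∣ (x - (2 * k - 2 + p * (k - 1)) + 1) then 1 else 0)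

section phival
variable {k p q x : ℕ}

lemma phi_lt2 (hx : x < 2) : phi k p q x = q := by
  unfold phi; rw [if_pos hx]

lemma phi_e (h1 : 2 ≤ x) (h2 : x < k) : phi k p q x = q + 1 := by
  unfold phi; rw [if_neg (by omega), if_pos h2]

lemma phi_k (hk : 3 ≤ k) : phi k p q k = q - 1 := by
  unfold phi
  rw [if_neg (by omega), if_neg (by omega), if_pos rfl]

lemma phi_f (hk : 3 ≤ k) (h1 : k < x) (h2 : x < 2 * k - 2) : phi k p q x = q := by
  unfold phi
  rw [if_neg (by omega), if_neg (by omega), if_neg (by omega), if_pos h2]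

lemma phi_p (hk : 3 ≤ k) {i : ℕ} (hi : i < p)
    (h1 : 2 * k - 2 + i * (k - 1) ≤ x) (h2 : x < 2 * k - 2 + (i + 1) * (k - 1)) :
    phi k p q x = q + 2 + i := by
  have e1 : (i + 1) * (k - 1) = i * (k - 1) + (k - 1) := by ring
  have e2 : (i + 1) * (k - 1) ≤ p * (k - 1) := Nat.mul_le_mul_right _ (by omega)
  have hd : (x - (2 * k - 2)) / (k - 1) = i :=
    Nat.div_eq_of_lt_le (by omega) (by omega)
  unfold phi
  rw [if_neg (by omega), if_neg (by omega), if_neg (by omega), if_neg (by omega),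
    if_pos (by omega), hd]

lemma phi_q_nontop (hk : 3 ≤ k) {j : ℕ} (hj : j < q)
    (h1 : 2 * k - 2 + p * (k - 1) + j * (k - 1) ≤ x)
    (h2 : x + 1 < 2 * k - 2 + p * (k - 1) + (j + 1) * (k - 1)) :
    phi k p q x = q - 1 - j := by
  have e1 : (j + 1) * (k - 1) = j * (k - 1) + (k - 1) := by ring
  have hd : (x - (2 * k - 2 + p * (k - 1))) / (k - 1) = j :=
    Nat.div_eq_of_lt_le (by omega) (by omega)
  have hnd : ¬ (k - 1) ∣ (x - (2 * k - 2 + p * (k - 1)) + 1) :=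
    not_dvd_of_between (a := j) (by omega) (by omega)
  unfold phi
  rw [if_neg (by omega), if_neg (by omega), if_neg (by omega), if_neg (by omega),
    if_neg (by omega), hd, if_neg hnd]
  omega

lemma phi_q_top (hk : 3 ≤ k) {j : ℕ} (hj : j < q) :
    phi k p q (2 * k - 2 + p * (k - 1) + (j + 1) * (k - 1) - 1) = q - 2 - j := by
  have e1 : (j + 1) * (k - 1) = j * (k - 1) + (k - 1) := by ring
  set x := 2 * k - 2 + p * (k - 1) + (j + 1) * (k - 1) - 1 with hx
  have hd : (x - (2 * k - 2 + p * (k - 1))) / (k - 1) = j :=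
    Nat.div_eq_of_lt_le (by omega) (by omega)
  have e2 : (k - 1) * (j + 1) = j * (k - 1) + (k - 1) := by ring
  have hdv : (k - 1) ∣ (x - (2 * k - 2 + p * (k - 1)) + 1) :=
    ⟨j + 1, by omega⟩
  unfold phi
  rw [if_neg (by omega), if_neg (by omega), if_neg (by omega), if_neg (by omega),
    if_neg (by omega), hd, if_pos hdv]
  omega

end phival

def eE (k : ℕ) : Finset ℕ := Finset.range k
def eF (k : ℕ) : Finset ℕ := insert 0 (insert 1 (Finset.Ico k (2 * k - 2)))
def eP (k i : ℕ) : Finset ℕ :=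
  insert (if i = 0 then 2 else 2 * k - 2 + i * (k - 1) - 1)
    (Finset.Ico (2 * k - 2 + i * (k - 1)) (2 * k - 2 + (i + 1) * (k - 1)))
def eQ (k p j : ℕ) : Finset ℕ :=
  insert (if j = 0 then k else 2 * k - 2 + p * (k - 1) + j * (k - 1) - 1)
    (Finset.Ico (2 * k - 2 + p * (k - 1) + j * (k - 1))
      (2 * k - 2 + p * (k - 1) + (j + 1) * (k - 1)))

lemma mem_edges_iff {k p q : ℕ} {e : Finset ℕ} :
    e ∈ (Ctilde k p q).edges ↔
      e = eE k ∨ e = eF k ∨ (∃ i < p, e = eP k i) ∨ (∃ j < q, e = eQ k p j) := by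
  simp only [Ctilde, eE, eF, eP, eQ, Finset.mem_union, Finset.mem_image,
    Finset.mem_insert, Finset.mem_singleton, Finset.mem_range]
  constructor
  · rintro (((h | h) | ⟨i, hi, he⟩) | ⟨j, hj, he⟩)
    · exact Or.inl h
    · exact Or.inr (Or.inl h)
    · exact Or.inr (Or.inr (Or.inl ⟨i, hi, he.symm⟩))
    · exact Or.inr (Or.inr (Or.inr ⟨j, hj, he.symm⟩))
  · rintro (h | h | ⟨i, hi, he⟩ | ⟨j, hj, he⟩)
    · exact Or.inl (Or.inl (Or.inl h))
    · exact Or.inl (Or.inl (Or.inr h))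
    · exact Or.inl (Or.inr ⟨i, hi, he.symm⟩)
    · exact Or.inr ⟨j, hj, he.symm⟩

lemma region_cases {k p q u : ℕ} (hk : 3 ≤ k)
    (hu : u < 2 * k - 2 + p * (k - 1) + (q - 1) * (k - 1)) :
    u < 2 ∨ (2 ≤ u ∧ u < k) ∨ u = k ∨ (k < u ∧ u < 2 * k - 2) ∨
    (∃ i, i < p ∧ 2 * k - 2 + i * (k - 1) ≤ u ∧ u < 2 * k - 2 + (i + 1) * (k - 1)) ∨
    (∃ j, j < q - 1 ∧ 2 * k - 2 + p * (k - 1) + j * (k - 1) ≤ u ∧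
      u < 2 * k - 2 + p * (k - 1) + (j + 1) * (k - 1)) := by
  rcases Nat.lt_or_ge u (2 * k - 2) with h | h
  · omega
  rcases Nat.lt_or_ge u (2 * k - 2 + p * (k - 1)) with h2 | h2
  · obtain ⟨i, hi1, hi2, hi3⟩ := exists_block (m := k - 1) (t := p) (by omega)
      (show u - (2 * k - 2) < p * (k - 1) by omega)
    have e1 : (i + 1) * (k - 1) = i * (k - 1) + (k - 1) := by ring
    exact Or.inr (Or.inr (Or.inr (Or.inr (Or.inl ⟨i, hi1, by omega, by omega⟩))))
  · obtain ⟨j, hj1, hj2, hj3⟩ := exists_block (m := k - 1) (t := q - 1) (by omega)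
      (show u - (2 * k - 2 + p * (k - 1)) < (q - 1) * (k - 1) by omega)
    have e1 : (j + 1) * (k - 1) = j * (k - 1) + (k - 1) := by ring
    exact Or.inr (Or.inr (Or.inr (Or.inr (Or.inr ⟨j, hj1, by omega, by omega⟩))))


/-- Distance labelling from a vertex `a` of the last pendant edge. -/
def Psi (k p q a x : ℕ) : ℕ :=
  if x = a then 0
  else if 2 * k - 2 + p * (k - 1) + (q - 1) * (k - 1) ≤ x then 1
  else 1 + phi k p q x

section psi
variable {k p q a z : ℕ}

lemma psi_self : Psi k p q a a = 0 := by
  unfold Psi; rw [if_pos rfl]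

lemma psi_lt (ha : 2 * k - 2 + p * (k - 1) + (q - 1) * (k - 1) ≤ a)
    (hz : z < 2 * k - 2 + p * (k - 1) + (q - 1) * (k - 1)) :
    Psi k p q a z = 1 + phi k p q z := by
  unfold Psi; rw [if_neg (by omega), if_neg (by omega)]

lemma psi_ge (hz : 2 * k - 2 + p * (k - 1) + (q - 1) * (k - 1) ≤ z) :
    Psi k p q a z ≤ 1 := by
  unfold Psi
  rcases eq_or_ne z a with rfl | h
  · rw [if_pos rfl]; omega
  · rw [if_neg h, if_pos hz]

lemma psi_lip (hk : 3 ≤ k) (hq : 1 ≤ q)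
    (ha : 2 * k - 2 + p * (k - 1) + (q - 1) * (k - 1) ≤ a) :
    ∀ e ∈ (Ctilde k p q).edges, ∀ x ∈ e, ∀ y ∈ e,
      Psi k p q a x ≤ Psi k p q a y + 1 := by
  intro e he
  suffices h : ∃ L, ∀ z ∈ e, L ≤ Psi k p q a z ∧ Psi k p q a z ≤ L + 1 by
    obtain ⟨L, hL⟩ := h
    intro x hx y hy
    have h1 := hL x hx
    have h2 := hL y hy
    omega
  rw [mem_edges_iff] at he
  rcases he with rfl | rfl | ⟨i, hi, rfl⟩ | ⟨j, hj, rfl⟩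
  · -- edge eE
    refine ⟨q + 1, fun z hz => ?_⟩
    rw [eE, Finset.mem_range] at hz
    rw [psi_lt ha (by omega)]
    rcases Nat.lt_or_ge z 2 with h | h
    · rw [phi_lt2 h]; omega
    · rw [phi_e h hz]; omega
  · -- edge eF
    refine ⟨q, fun z hz => ?_⟩
    rw [eF, Finset.mem_insert, Finset.mem_insert, Finset.mem_Ico] at hz
    rw [psi_lt ha (by omega)]
    rcases hz with rfl | rfl | ⟨h1, h2⟩
    · rw [phi_lt2 (by omega)]; omega
    · rw [phi_lt2 (by omega)]; omega
    · rcases Nat.eq_or_lt_of_le h1 with h3 | h3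
      · rw [← h3, phi_k hk]; omega
      · rw [phi_f hk h3 h2]; omega
  · -- edge eP i
    have e1 : (i + 1) * (k - 1) = i * (k - 1) + (k - 1) := by ring
    have e2 : (i + 1) * (k - 1) ≤ p * (k - 1) := Nat.mul_le_mul_right _ (by omega)
    refine ⟨q + 2 + i, fun z hz => ?_⟩
    rw [eP, Finset.mem_insert, Finset.mem_Ico] at hz
    rcases hz with rfl | ⟨h1, h2⟩
    · rcases Nat.eq_zero_or_pos i with rfl | hipos
      · simp only [reduceIte]
        rw [psi_lt ha (by omega), phi_e (by omega) (by omega)]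
        omega
      · obtain ⟨i', rfl⟩ : ∃ i', i = i' + 1 := ⟨i - 1, by omega⟩
        have e3 : (i' + 1) * (k - 1) = i' * (k - 1) + (k - 1) := by ring
        have e4 : (i' + 1) * (k - 1) ≤ p * (k - 1) := Nat.mul_le_mul_right _ (by omega)
        rw [if_neg (by omega)]
        rw [psi_lt ha (by omega), phi_p hk (show i' < p by omega) (by omega) (by omega)]
        omega
    · rw [psi_lt ha (by omega), phi_p hk hi h1 h2]
      omega
  · -- edge eQ j
    have e1 : (j + 1) * (k - 1) = j * (k - 1) + (k - 1) := by ring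
    rcases Nat.lt_or_ge j (q - 1) with hjq | hjq
    · -- j < q - 1 : edge entirely below the last block
      have e2 : (j + 1) * (k - 1) ≤ (q - 1) * (k - 1) := Nat.mul_le_mul_right _ (by omega)
      refine ⟨q - 1 - j, fun z hz => ?_⟩
      rw [eQ, Finset.mem_insert, Finset.mem_Ico] at hz
      rcases hz with rfl | ⟨h1, h2⟩
      · rcases Nat.eq_zero_or_pos j with rfl | hjpos
        · simp only [reduceIte]
          rw [psi_lt ha (by omega), phi_k hk]
          omega
        · obtain ⟨j', rfl⟩ : ∃ j', j = j' + 1 := ⟨j - 1, by omega⟩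
          have e3 : (j' + 1) * (k - 1) = j' * (k - 1) + (k - 1) := by ring
          have e4 : (j' + 1) * (k - 1) ≤ (q - 1) * (k - 1) :=
            Nat.mul_le_mul_right _ (by omega)
          rw [if_neg (by omega)]
          rw [psi_lt ha (by omega), phi_q_top hk (show j' < q by omega)]
          omega
      · rcases Nat.lt_or_ge (z + 1) (2 * k - 2 + p * (k - 1) + (j + 1) * (k - 1)) with h3 | h3
        · rw [psi_lt ha (by omega), phi_q_nontop hk (by omega) h1 h3]
          omega
        · have hz' : z = 2 * k - 2 + p * (k - 1) + (j + 1) * (k - 1) - 1 := by omega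
          rw [psi_lt ha (by omega), hz', phi_q_top hk (by omega)]
          omega
    · -- j = q - 1 : the last edge
      have hjq' : j = q - 1 := by omega
      subst hjq'
      refine ⟨0, fun z hz => ?_⟩
      rw [eQ, Finset.mem_insert, Finset.mem_Ico] at hz
      refine ⟨Nat.zero_le _, ?_⟩
      rcases hz with rfl | ⟨h1, h2⟩
      · rcases Nat.lt_or_ge q 2 with hq2 | hq2
        · rw [if_pos (show q - 1 = 0 by omega)]
          rw [psi_lt ha (by omega), phi_k hk]
          omega
        · rw [if_neg (by omega)]
          have e5 : 1 * 1 ≤ (q - 1) * (k - 1) := Nat.mul_le_mul (by omega) (by omega)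
          have e6 : q - 1 = (q - 2) + 1 := by omega
          rw [psi_lt ha (by omega)]
          rw [show 2 * k - 2 + p * (k - 1) + (q - 1) * (k - 1) - 1
              = 2 * k - 2 + p * (k - 1) + ((q - 2) + 1) * (k - 1) - 1 by rw [← e6]]
          rw [phi_q_top hk (show q - 2 < q by omega)]
          omega
      · exact psi_ge h1

end psi


lemma descent {k p q u : ℕ} (hk : 3 ≤ k) (hq : 1 ≤ q)
    (hu : u < 2 * k - 2 + p * (k - 1) + (q - 1) * (k - 1))
    (h0 : phi k p q u ≠ 0) :
    ∃ e ∈ (Ctilde k p q).edges, u ∈ e ∧ ∃ y ∈ e, y ≠ u ∧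
      y < 2 * k - 2 + p * (k - 1) + (q - 1) * (k - 1) ∧
      phi k p q y + 1 = phi k p q u := by
  have hkk : 1 ≤ k - 1 := by omega
  have hvk : phi k p q k = q - 1 := phi_k hk
  rcases region_cases hk hu with h | ⟨h1, h2⟩ | huk | ⟨h1, h2⟩ | ⟨i, hi, h1, h2⟩ |
    ⟨j, hj, h1, h2⟩
  · -- u ∈ {0, 1} : step to k via edge eF
    have hmu : u ∈ eF k := by
      rw [eF]
      rcases show u = 0 ∨ u = 1 from by omega with rfl | rfl
      · exact Finset.mem_insert_self _ _
      · exact Finset.mem_insert_of_mem (Finset.mem_insert_self _ _)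
    have hv : phi k p q u = q := phi_lt2 h
    refine ⟨eF k, mem_edges_iff.2 (Or.inr (Or.inl rfl)), hmu, k,
      Finset.mem_insert_of_mem (Finset.mem_insert_of_mem
        (Finset.mem_Ico.2 ⟨le_refl k, by omega⟩)), by omega, by omega, by omega⟩
  · -- 2 ≤ u < k : step to 0 via edge eE
    have hv : phi k p q u = q + 1 := phi_e h1 h2
    have hv0 : phi k p q 0 = q := phi_lt2 (by omega)
    exact ⟨eE k, mem_edges_iff.2 (Or.inl rfl), Finset.mem_range.2 h2, 0,
      Finset.mem_range.2 (by omega), by omega, by omega, by omega⟩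
  · -- u = k : step down the q-path via edge eQ 0
    rw [huk] at hu h0 ⊢
    have hq2 : 2 ≤ q := by omega
    have e1 : (0 + 1) * (k - 1) = 0 * (k - 1) + (k - 1) := by ring
    have e2 : (0 + 1) * (k - 1) ≤ (q - 1) * (k - 1) := Nat.mul_le_mul_right _ (by omega)
    obtain ⟨y, hy1⟩ : ∃ y, y + 1 = 2 * k - 2 + p * (k - 1) + (0 + 1) * (k - 1) :=
      ⟨2 * k - 2 + p * (k - 1) + (k - 1) - 1, by omega⟩
    have hvy : phi k p q y = q - 2 - 0 := by
      have h := phi_q_top (p := p) (j := 0) hk (show 0 < q by omega)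
      rwa [show 2 * k - 2 + p * (k - 1) + (0 + 1) * (k - 1) - 1 = y by omega] at h
    refine ⟨eQ k p 0, mem_edges_iff.2 (Or.inr (Or.inr (Or.inr ⟨0, by omega, rfl⟩))), ?_,
      y, ?_, by omega, by omega, by omega⟩
    · rw [eQ, if_pos rfl]; exact Finset.mem_insert_self _ _
    · exact Finset.mem_insert_of_mem (Finset.mem_Ico.2 ⟨by omega, by omega⟩)
  · -- k < u < 2k-2 : step to k via edge eF
    have hv : phi k p q u = q := phi_f hk h1 h2
    exact ⟨eF k, mem_edges_iff.2 (Or.inr (Or.inl rfl)),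
      Finset.mem_insert_of_mem (Finset.mem_insert_of_mem (Finset.mem_Ico.2 ⟨by omega, h2⟩)),
      k, Finset.mem_insert_of_mem (Finset.mem_insert_of_mem
        (Finset.mem_Ico.2 ⟨le_refl k, by omega⟩)), by omega, by omega, by omega⟩
  · -- u in p-block i : step to the connector of edge eP i
    have e1 : (i + 1) * (k - 1) = i * (k - 1) + (k - 1) := by ring
    have e2 : (i + 1) * (k - 1) ≤ p * (k - 1) := Nat.mul_le_mul_right _ (by omega)
    have hv : phi k p q u = q + 2 + i := phi_p hk hi h1 h2
    have hmu : u ∈ eP k i := Finset.mem_insert_of_mem (Finset.mem_Ico.2 ⟨h1, h2⟩)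
    have hme : eP k i ∈ (Ctilde k p q).edges :=
      mem_edges_iff.2 (Or.inr (Or.inr (Or.inl ⟨i, hi, rfl⟩)))
    rcases Nat.eq_zero_or_pos i with rfl | hipos
    · have hv2 : phi k p q 2 = q + 1 := phi_e (by omega) (by omega)
      refine ⟨eP k 0, hme, hmu, 2, ?_, by omega, by omega, by omega⟩
      rw [eP, if_pos rfl]; exact Finset.mem_insert_self _ _
    · obtain ⟨i', rfl⟩ : ∃ i', i = i' + 1 := ⟨i - 1, by omega⟩
      have e3 : (i' + 1) * (k - 1) = i' * (k - 1) + (k - 1) := by ring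
      obtain ⟨y, hy1⟩ : ∃ y, y + 1 = 2 * k - 2 + (i' + 1) * (k - 1) :=
        ⟨2 * k - 2 + i' * (k - 1) + (k - 1) - 1, by omega⟩
      have hvy : phi k p q y = q + 2 + i' :=
        phi_p hk (show i' < p by omega) (by omega) (by omega)
      refine ⟨eP k (i' + 1), hme, hmu, y, ?_, by omega, by omega, by omega⟩
      rw [eP, if_neg (by omega), show 2 * k - 2 + (i' + 1) * (k - 1) - 1 = y by omega]
      exact Finset.mem_insert_self _ _
  · -- u in q-block j, j < q - 1
    have e1 : (j + 1) * (k - 1) = j * (k - 1) + (k - 1) := by ring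
    have e2 : (j + 1) * (k - 1) ≤ (q - 1) * (k - 1) := Nat.mul_le_mul_right _ (by omega)
    have hme : eQ k p j ∈ (Ctilde k p q).edges :=
      mem_edges_iff.2 (Or.inr (Or.inr (Or.inr ⟨j, by omega, rfl⟩)))
    have hmu : u ∈ eQ k p j := Finset.mem_insert_of_mem (Finset.mem_Ico.2 ⟨h1, h2⟩)
    obtain ⟨t, ht1⟩ : ∃ t, t + 1 = 2 * k - 2 + p * (k - 1) + (j + 1) * (k - 1) :=
      ⟨2 * k - 2 + p * (k - 1) + j * (k - 1) + (k - 1) - 1, by omega⟩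
    have hvt : phi k p q t = q - 2 - j := by
      have h := phi_q_top (p := p) (j := j) hk (show j < q by omega)
      rwa [show 2 * k - 2 + p * (k - 1) + (j + 1) * (k - 1) - 1 = t by omega] at h
    rcases Nat.lt_or_ge (u + 1) (2 * k - 2 + p * (k - 1) + (j + 1) * (k - 1)) with h3 | h3
    · -- u not the top of its block : step to the top t of block j
      have hv : phi k p q u = q - 1 - j := phi_q_nontop hk (by omega) h1 h3
      exact ⟨eQ k p j, hme, hmu, t,
        Finset.mem_insert_of_mem (Finset.mem_Ico.2 ⟨by omega, by omega⟩),
        by omega, by omega, by omega⟩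
    · -- u is the top t of block j, i.e. the connector of edge eQ (j+1)
      have hut : u = t := by omega
      subst hut
      have hjq : j + 1 < q - 1 := by omega
      have e3 : (j + 1 + 1) * (k - 1) = (j + 1) * (k - 1) + (k - 1) := by ring
      have e4 : (j + 1 + 1) * (k - 1) ≤ (q - 1) * (k - 1) := Nat.mul_le_mul_right _ (by omega)
      obtain ⟨y, hy1⟩ : ∃ y, y + 1 = 2 * k - 2 + p * (k - 1) + (j + 1 + 1) * (k - 1) :=
        ⟨u + (k - 1), by omega⟩
      have hvy : phi k p q y = q - 2 - (j + 1) := by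
        have h := phi_q_top (p := p) (j := j + 1) hk (show j + 1 < q by omega)
        rwa [show 2 * k - 2 + p * (k - 1) + (j + 1 + 1) * (k - 1) - 1 = y by omega] at h
      refine ⟨eQ k p (j + 1),
        mem_edges_iff.2 (Or.inr (Or.inr (Or.inr ⟨j + 1, by omega, rfl⟩))), ?_, y,
        Finset.mem_insert_of_mem (Finset.mem_Ico.2 ⟨by omega, by omega⟩),
        by omega, by omega, by omega⟩
      rw [eQ, if_neg (by omega),
        show 2 * k - 2 + p * (k - 1) + (j + 1) * (k - 1) - 1 = u by omega]
      exact Finset.mem_insert_self _ _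

lemma walk_to {k p q a : ℕ} (hk : 3 ≤ k) (hq : 1 ≤ q)
    (ha1 : 2 * k - 2 + p * (k - 1) + (q - 1) * (k - 1) ≤ a)
    (ha2 : a < 2 * k - 2 + p * (k - 1) + q * (k - 1)) :
    ∀ n u, u < 2 * k - 2 + p * (k - 1) + (q - 1) * (k - 1) → phi k p q u = n →
      (Ctilde k p q).Walk a u (n + 1) := by
  have hkk : 1 ≤ k - 1 := by omega
  have eqM : (q - 1 + 1) * (k - 1) = (q - 1) * (k - 1) + (k - 1) := by ring
  have eq1 : q * (k - 1) = (q - 1) * (k - 1) + (k - 1) := by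
    rw [← eqM]
    congr 1
    omega
  intro n
  induction n with
  | zero =>
    intro u hu h0
    have he : eQ k p (q - 1) ∈ (Ctilde k p q).edges :=
      mem_edges_iff.2 (Or.inr (Or.inr (Or.inr ⟨q - 1, by omega, rfl⟩)))
    have hcon : u = (if q - 1 = 0 then k
        else 2 * k - 2 + p * (k - 1) + (q - 1) * (k - 1) - 1) := by
      rcases region_cases hk hu with h | ⟨h1, h2⟩ | huk | ⟨h1, h2⟩ | ⟨i, hi, h1, h2⟩ |
        ⟨j, hj, h1, h2⟩
      · rw [phi_lt2 h] at h0; omega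
      · rw [phi_e h1 h2] at h0; omega
      · rw [huk] at h0 ⊢
        rw [phi_k hk] at h0
        rw [if_pos (show q - 1 = 0 by omega)]
      · rw [phi_f hk h1 h2] at h0; omega
      · rw [phi_p hk hi h1 h2] at h0; omega
      · have e1 : (j + 1) * (k - 1) = j * (k - 1) + (k - 1) := by ring
        have e2 : (j + 1) * (k - 1) ≤ (q - 1) * (k - 1) := Nat.mul_le_mul_right _ (by omega)
        rcases Nat.lt_or_ge (u + 1) (2 * k - 2 + p * (k - 1) + (j + 1) * (k - 1)) with h3 | h3
        · rw [phi_q_nontop hk (by omega) h1 h3] at h0; omega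
        · have hu1 : u + 1 = 2 * k - 2 + p * (k - 1) + (j + 1) * (k - 1) := by omega
          have hvu : phi k p q u = q - 2 - j := by
            have h := phi_q_top (p := p) (j := j) hk (show j < q by omega)
            rwa [show 2 * k - 2 + p * (k - 1) + (j + 1) * (k - 1) - 1 = u by omega] at h
          rw [hvu] at h0
          have hj2 : q - 1 = j + 1 := by omega
          rw [if_neg (by omega), hj2, ← hu1]
          omega
    have hau : u ∈ eQ k p (q - 1) := by
      rw [eQ, hcon]; exact Finset.mem_insert_self _ _
    have haa : a ∈ eQ k p (q - 1) :=
      Finset.mem_insert_of_mem (Finset.mem_Ico.2 ⟨ha1, by omega⟩)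
    have hne : a ≠ u := by
      rcases Nat.lt_or_ge u (2 * k - 2 + p * (k - 1) + (q - 1) * (k - 1)) with h | h
      · omega
      · omega
    exact Walk.cons u (eQ k p (q - 1)) he haa hau hne (Walk.nil u)
  | succ n ih =>
    intro u hu hn
    obtain ⟨e, he, hue, y, hy, hyu, hyM, hval⟩ := descent hk hq hu (by omega)
    exact walk_snoc (ih y hyM (by omega)) he hy hue hyu

lemma dist_eq {k p q a u : ℕ} (hk : 3 ≤ k) (hq : 1 ≤ q)
    (ha1 : 2 * k - 2 + p * (k - 1) + (q - 1) * (k - 1) ≤ a)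
    (ha2 : a < 2 * k - 2 + p * (k - 1) + q * (k - 1))
    (hu : u < 2 * k - 2 + p * (k - 1) + (q - 1) * (k - 1)) :
    (Ctilde k p q).dist a u = 1 + phi k p q u := by
  have hw : (Ctilde k p q).Walk a u (phi k p q u + 1) :=
    walk_to hk hq ha1 ha2 _ u hu rfl
  have hne : {n | (Ctilde k p q).Walk a u n}.Nonempty := ⟨_, hw⟩
  have hub : (Ctilde k p q).dist a u ≤ phi k p q u + 1 := Nat.sInf_le hw
  have hlb : 1 + phi k p q u ≤ (Ctilde k p q).dist a u := by
    have hmem := Nat.sInf_mem hne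
    have hw2 := walk_le _ (Psi k p q a) (psi_lip hk hq ha1) hmem
    rw [psi_self, psi_lt ha1 hu] at hw2
    unfold FinHypergraph.dist
    omega
  omega



lemma sum_const_on {s : Finset ℕ} {f : ℕ → ℕ} {c : ℕ} (h : ∀ x ∈ s, f x = c) :
    ∑ x ∈ s, f x = s.card * c := by
  rw [Finset.sum_congr rfl h, Finset.sum_const, smul_eq_mul]

lemma sum_cycle {k p q : ℕ} (hk : 3 ≤ k) (hq : 1 ≤ q) :
    ∑ x ∈ Finset.range (2 * k - 2), (1 + phi k p q x)
      = 2 * (q + 1) + (k - 2) * (q + 2) + q + (k - 3) * (q + 1) := by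
  rw [Finset.range_eq_Ico]
  rw [← Finset.sum_Ico_consecutive _ (show (0:ℕ) ≤ 2 by omega) (show 2 ≤ 2*k-2 by omega)]
  rw [← Finset.sum_Ico_consecutive _ (show (2:ℕ) ≤ k by omega) (show k ≤ 2*k-2 by omega)]
  rw [← Finset.sum_Ico_consecutive _ (show k ≤ k+1 by omega)
    (show k+1 ≤ 2*k-2 by omega)]
  have c1 := sum_const_on (s := Finset.Ico 0 2) (f := fun x => 1 + phi k p q x)
    (c := q + 1) (fun x hx => by
      show 1 + phi k p q x = q + 1
      rw [phi_lt2 (Finset.mem_Ico.1 hx).2]; omega)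
  have c2 := sum_const_on (s := Finset.Ico 2 k) (f := fun x => 1 + phi k p q x)
    (c := q + 2) (fun x hx => by
      show 1 + phi k p q x = q + 2
      rw [phi_e (Finset.mem_Ico.1 hx).1 (Finset.mem_Ico.1 hx).2]; omega)
  have c3 := sum_const_on (s := Finset.Ico k (k+1)) (f := fun x => 1 + phi k p q x)
    (c := q) (fun x hx => by
      have hx' := Finset.mem_Ico.1 hx
      have hxk : x = k := by omega
      show 1 + phi k p q x = q
      rw [hxk, phi_k hk]; omega)
  have c4 := sum_const_on (s := Finset.Ico (k+1) (2*k-2)) (f := fun x => 1 + phi k p q x)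
    (c := q + 1) (fun x hx => by
      have hx' := Finset.mem_Ico.1 hx
      show 1 + phi k p q x = q + 1
      rw [phi_f hk (by omega) hx'.2]; omega)
  rw [Nat.card_Ico] at c1 c2 c3 c4
  rw [c1, c2, c3, c4, show (2:ℕ) - 0 = 2 by omega, show k + 1 - k = 1 by omega,
    show 2*k-2-(k+1) = k - 3 by omega]
  omega

lemma sum_p {k p q : ℕ} (hk : 3 ≤ k) :
    ∀ n, n ≤ p → 2 * ∑ x ∈ Finset.Ico (2*k-2) (2*k-2+n*(k-1)), (1 + phi k p q x)
      = (k-1) * (n * (2*q + 5 + n)) := by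
  intro n
  induction n with
  | zero => intro _; simp
  | succ n ih =>
    intro hn
    have e1 : (n+1)*(k-1) = n*(k-1)+(k-1) := by ring
    have e2 : (n+1)*(k-1) ≤ p*(k-1) := Nat.mul_le_mul_right _ hn
    rw [← Finset.sum_Ico_consecutive _ (show 2*k-2 ≤ 2*k-2+n*(k-1) by omega)
      (show 2*k-2+n*(k-1) ≤ 2*k-2+(n+1)*(k-1) by omega)]
    have hb := sum_const_on (s := Finset.Ico (2*k-2+n*(k-1)) (2*k-2+(n+1)*(k-1)))
      (f := fun x => 1 + phi k p q x) (c := q + 3 + n) (fun x hx => by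
        have hx' := Finset.mem_Ico.1 hx
        show 1 + phi k p q x = q + 3 + n
        rw [phi_p hk (show n < p by omega) hx'.1 hx'.2]; omega)
    rw [Nat.card_Ico, show 2*k-2+(n+1)*(k-1) - (2*k-2+n*(k-1)) = k - 1 by omega] at hb
    rw [mul_add, hb, ih (by omega)]
    ring

lemma sum_q {k p q : ℕ} (hk : 3 ≤ k) (hq : 1 ≤ q) :
    ∀ m, m ≤ q - 1 →
      2 * ∑ x ∈ Finset.Ico (2*k-2+p*(k-1)) (2*k-2+p*(k-1)+m*(k-1)), (1 + phi k p q x)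
        + 2*m + (k-1)*(m*m) = (k-1)*(m*(2*q+1)) := by
  intro m
  induction m with
  | zero => intro _; simp
  | succ m ih =>
    intro hm
    have e1 : (m+1)*(k-1) = m*(k-1)+(k-1) := by ring
    have e2 : (m+1)*(k-1) ≤ (q-1)*(k-1) := Nat.mul_le_mul_right _ hm
    obtain ⟨t, ht⟩ : ∃ t, t + 1 = 2*k-2+p*(k-1)+(m+1)*(k-1) :=
      ⟨2*k-2+p*(k-1)+m*(k-1)+(k-1)-1, by omega⟩
    have hvt : phi k p q t = q - 2 - m := by
      have h := phi_q_top (p := p) (j := m) hk (show m < q by omega)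
      rwa [show 2*k-2+p*(k-1)+(m+1)*(k-1)-1 = t by omega] at h
    rw [show 2*k-2+p*(k-1)+(m+1)*(k-1) = t + 1 from ht.symm]
    rw [← Finset.sum_Ico_consecutive _
      (show 2*k-2+p*(k-1) ≤ 2*k-2+p*(k-1)+m*(k-1) by omega)
      (show 2*k-2+p*(k-1)+m*(k-1) ≤ t + 1 by omega)]
    rw [Finset.sum_Ico_succ_top (show 2*k-2+p*(k-1)+m*(k-1) ≤ t by omega)]
    have hnt := sum_const_on (s := Finset.Ico (2*k-2+p*(k-1)+m*(k-1)) t)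
      (f := fun x => 1 + phi k p q x) (c := q - m) (fun x hx => by
        have hx' := Finset.mem_Ico.1 hx
        show 1 + phi k p q x = q - m
        rw [phi_q_nontop hk (show m < q by omega) hx'.1 (by omega)]; omega)
    rw [Nat.card_Ico, show t - (2*k-2+p*(k-1)+m*(k-1)) = k - 2 by omega] at hnt
    rw [hnt, hvt]
    have IH := ih (by omega)
    obtain ⟨w, rfl⟩ : ∃ w, k = w + 3 := ⟨k - 3, by omega⟩
    obtain ⟨d, rfl⟩ : ∃ d, q = m + 2 + d := ⟨q - m - 2, by omega⟩
    simp only [show w+3-1 = w+2 by omega, show w+3-2 = w+1 by omega,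
      show m+2+d-2-m = d by omega, show m+2+d-m = d+2 by omega] at IH ⊢
    zify at IH ⊢
    linear_combination IH

lemma sum_T {k p q : ℕ} (hk : 3 ≤ k) (hq : 1 ≤ q) :
    2 * ∑ x ∈ Finset.range (2*k-2+p*(k-1)+(q-1)*(k-1)), (1 + phi k p q x)
      + 2*(q-1) + (k-1)*((q-1)*(q-1))
      = 2 * (2*(q+1) + (k-2)*(q+2) + q + (k-3)*(q+1))
        + (k-1)*(p*(2*q+5+p)) + (k-1)*((q-1)*(2*q+1)) := by
  rw [Finset.range_eq_Ico]
  rw [← Finset.sum_Ico_consecutive _ (show (0:ℕ) ≤ 2*k-2 by omega)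
    (show 2*k-2 ≤ 2*k-2+p*(k-1)+(q-1)*(k-1) by omega)]
  rw [← Finset.sum_Ico_consecutive _ (show 2*k-2 ≤ 2*k-2+p*(k-1) by omega)
    (show 2*k-2+p*(k-1) ≤ 2*k-2+p*(k-1)+(q-1)*(k-1) by omega)]
  rw [← Finset.range_eq_Ico]
  have hc := sum_cycle (p := p) hk hq
  have hp := sum_p (q := q) hk p le_rfl
  have hqq := sum_q (p := p) hk hq (q - 1) le_rfl
  omega

lemma sigma_eq {k p q : ℕ} (hk : 3 ≤ k) (hq : 1 ≤ q) :
    2 * (Ctilde k p q).transBetween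
        (Finset.Ico (2*k-2+p*(k-1)+(q-1)*(k-1)) (2*k-2+p*(k-1)+q*(k-1)))
        ((Ctilde k p q).verts \
          Finset.Ico (2*k-2+p*(k-1)+(q-1)*(k-1)) (2*k-2+p*(k-1)+q*(k-1)))
      + (k-1)*(2*(q-1)) + (k-1)*((k-1)*((q-1)*(q-1)))
      = (k-1)*(2 * (2*(q+1) + (k-2)*(q+2) + q + (k-3)*(q+1))
          + (k-1)*(p*(2*q+5+p)) + (k-1)*((q-1)*(2*q+1))) := by
  have hkk : 1 ≤ k - 1 := by omega
  have eqM : (q-1+1)*(k-1) = (q-1)*(k-1)+(k-1) := by ring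
  have eq1 : q*(k-1) = (q-1)*(k-1)+(k-1) := by
    rw [← eqM]; congr 1; omega
  have eqN : (p+q+2)*(k-1) = p*(k-1) + q*(k-1) + 2*(k-1) := by ring
  have hU : (Ctilde k p q).verts \
        Finset.Ico (2*k-2+p*(k-1)+(q-1)*(k-1)) (2*k-2+p*(k-1)+q*(k-1))
      = Finset.range (2*k-2+p*(k-1)+(q-1)*(k-1)) := by
    ext x
    simp only [Ctilde, Finset.mem_sdiff, Finset.mem_range, Finset.mem_Ico, not_and, not_lt]
    omega
  unfold FinHypergraph.transBetween
  rw [hU]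
  have hinner : ∀ a ∈ Finset.Ico (2*k-2+p*(k-1)+(q-1)*(k-1)) (2*k-2+p*(k-1)+q*(k-1)),
      (∑ u ∈ Finset.range (2*k-2+p*(k-1)+(q-1)*(k-1)), (Ctilde k p q).dist a u)
        = ∑ u ∈ Finset.range (2*k-2+p*(k-1)+(q-1)*(k-1)), (1 + phi k p q u) := by
    intro a ha
    obtain ⟨ha1, ha2⟩ := Finset.mem_Ico.1 ha
    exact Finset.sum_congr rfl (fun u hu => dist_eq hk hq ha1 ha2 (Finset.mem_range.1 hu))
  rw [Finset.sum_congr rfl hinner, Finset.sum_const, smul_eq_mul, Nat.card_Ico]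
  rw [show 2*k-2+p*(k-1)+q*(k-1) - (2*k-2+p*(k-1)+(q-1)*(k-1)) = k-1 by omega]
  have hT := sum_T (p := p) hk hq
  rw [← hT]
  ring

end Stmt14Aux
/-- In `G = C̃^k_2(p,q)` with `q ≥ 1`, let `f_q` be the last edge of the
pendant path of length `q` and `v_{q-1}` its vertex closest to the cycle; with
`A = f_q \ {v_{q-1}}` and `U = V(G) \ A`,
`σ_G(A, U) = (k-1)[q(q+1)/2 + p(p+2q+5)/2 + (k-2)(p²+q²+2pq+5p+q-2)/2 + (2k-3)(q+1) + k-2]`. -/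
theorem stmt14 (k p q : ℕ) (hk : 3 ≤ k) (hq : 1 ≤ q) :
    let G := Ctilde k p q
    let A := Finset.Ico (2 * k - 2 + p * (k - 1) + (q - 1) * (k - 1))
      (2 * k - 2 + p * (k - 1) + q * (k - 1))
    let P : ℝ := p
    let Q : ℝ := q
    let K : ℝ := k
    (G.transBetween A (G.verts \ A) : ℝ) =
      (K - 1) * (Q * (Q + 1) / 2 + P * (P + 2 * Q + 5) / 2 +
        (K - 2) * (P ^ 2 + Q ^ 2 + 2 * P * Q + 5 * P + Q - 2) / 2 +
        (2 * K - 3) * (Q + 1) + (K - 2)) := by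
  intro G A P Q K
  have hσ := Stmt14Aux.sigma_eq (p := p) hk hq
  have c1 : ((k - 1 : ℕ) : ℝ) = (k : ℝ) - 1 := by
    have : (1:ℕ) ≤ k := by omega
    push_cast [this]; ring
  have c2 : ((k - 2 : ℕ) : ℝ) = (k : ℝ) - 2 := by
    have : (2:ℕ) ≤ k := by omega
    push_cast [this]; ring
  have c3 : ((k - 3 : ℕ) : ℝ) = (k : ℝ) - 3 := by
    push_cast [hk]; ring
  have c4 : ((q - 1 : ℕ) : ℝ) = (q : ℝ) - 1 := by
    push_cast [hq]; ring
  have hσℝ := congrArg (fun t : ℕ => (t : ℝ)) hσ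
  push_cast [c1, c2, c3, c4] at hσℝ
  show ((Ctilde k p q).transBetween
      (Finset.Ico (2 * k - 2 + p * (k - 1) + (q - 1) * (k - 1))
        (2 * k - 2 + p * (k - 1) + q * (k - 1)))
      ((Ctilde k p q).verts \
        Finset.Ico (2 * k - 2 + p * (k - 1) + (q - 1) * (k - 1))
          (2 * k - 2 + p * (k - 1) + q * (k - 1))) : ℝ) =
    ((k : ℝ) - 1) * ((q : ℝ) * ((q : ℝ) + 1) / 2 + (p : ℝ) * ((p : ℝ) + 2 * (q : ℝ) + 5) / 2 +
      ((k : ℝ) - 2) * ((p : ℝ) ^ 2 + (q : ℝ) ^ 2 + 2 * (p : ℝ) * (q : ℝ) + 5 * (p : ℝ) + (q : ℝ) - 2) / 2 +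
      (2 * (k : ℝ) - 3) * ((q : ℝ) + 1) + ((k : ℝ) - 2))
  linear_combination hσℝ / 2
end
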